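/- arXiv:2207.05250 — 6 statements merged into one kernel-verified Lean document; each statement's English description precedes it below -/
import Mathlib

section
/- Let (X, 𝒜, μ) and (M, ℬ, ν) be σ-finite measure spaces and let p : X × M → [0, ∞) be measurable with ∫∫ p d(μ ⊗ ν) = 1. Define the marginals p_X(x) = ∫ p(x, m) dν(m) and p_M(m) = ∫ p(x, m) dμ(x). Let L ≥ 1 be an integer and U : X × M → ℝ be measurable, and define the weight g_U(x, m₀, …, m_L) = exp(U(x, m₀)) / ((1/(L+1)) ∑_{ℓ=0}^{L} exp(U(x, m_ℓ))). Then the function p₂(x, m₀, …, m_L) = p_X(x) · (∏_{ℓ=0}^{L} p_M(m_ℓ)) · g_U(x, m₀, …, m_L) is a probability density with respect to μ ⊗ ν^{⊗(L+1)}, i.e. ∫_{X × M^{L+1}} p₂ d(μ ⊗ ν^{⊗(L+1)}) = 1. -/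
open MeasureTheory

/-- The reweighted product of marginals `p₂ = p_X(x) · (∏ ℓ, p_M(m ℓ)) · g_U(x, m)` is a
probability density with respect to `μ ⊗ ν^{⊗(L+1)}`. -/
theorem stmt1 {X M : Type*} [MeasurableSpace X] [MeasurableSpace M]
    (μ : Measure X) (ν : Measure M) [SigmaFinite μ] [SigmaFinite ν]
    (p : X × M → ℝ) (hp : Measurable p) (hp0 : ∀ z, 0 ≤ p z)
    (hp1 : ∫ z, p z ∂(μ.prod ν) = 1)
    (pX : X → ℝ) (hpX : ∀ x, pX x = ∫ a, p (x, a) ∂ν)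
    (pM : M → ℝ) (hpM : ∀ a, pM a = ∫ x, p (x, a) ∂μ)
    (L : ℕ) (hL : 1 ≤ L)
    (U : X × M → ℝ) (hU : Measurable U)
    (g : X → (Fin (L + 1) → M) → ℝ)
    (hg : ∀ x ms, g x ms =
      Real.exp (U (x, ms 0)) / ((1 / ((L : ℝ) + 1)) * ∑ ℓ, Real.exp (U (x, ms ℓ))))
    (p₂ : X × (Fin (L + 1) → M) → ℝ)
    (hp₂ : ∀ z, p₂ z = pX z.1 * (∏ ℓ, pM (z.2 ℓ)) * g z.1 z.2) :
    ∫ z : X × (Fin (L + 1) → M), p₂ z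
        ∂(μ.prod (Measure.pi fun _ : Fin (L + 1) => ν)) = 1 := by
  classical
  set ν' : Measure (Fin (L + 1) → M) := Measure.pi fun _ : Fin (L + 1) => ν with hν'
  -- p is integrable
  have hpInt : Integrable p (μ.prod ν) := by
    by_contra h
    rw [integral_undef h] at hp1
    exact one_ne_zero hp1.symm
  -- measurability of marginals
  have hpXm : Measurable pX := by
    have h := hp.stronglyMeasurable.integral_prod_right' (ν := ν)
    have : pX = fun x => ∫ y, p (x, y) ∂ν := funext hpX
    rw [this]; exact h.measurable
  have hpMm : Measurable pM := by
    have h := hp.stronglyMeasurable.integral_prod_left' (μ := μ)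
    have : pM = fun y => ∫ x, p (x, y) ∂μ := funext hpM
    rw [this]; exact h.measurable
  -- integrability of marginals
  have hpXInt : Integrable pX μ := by
    have h := hpInt.integral_prod_left
    have : pX = fun x => ∫ y, p (x, y) ∂ν := funext hpX
    rw [this]; exact h
  have hpMInt : Integrable pM ν := by
    have h := hpInt.integral_prod_right
    have : pM = fun y => ∫ x, p (x, y) ∂μ := funext hpM
    rw [this]; exact h
  -- integrals of marginals
  have hpX1 : ∫ x, pX x ∂μ = 1 := by
    simp_rw [hpX]; rw [← integral_prod p hpInt]; exact hp1
  have hpM1 : ∫ y, pM y ∂ν = 1 := by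
    simp_rw [hpM]; rw [← integral_prod_symm p hpInt]; exact hp1
  -- nonnegativity of marginals
  have hpX0 : ∀ x, 0 ≤ pX x := fun x => by
    rw [hpX]; exact integral_nonneg fun a => hp0 _
  have hpM0 : ∀ a, 0 ≤ pM a := fun a => by
    rw [hpM]; exact integral_nonneg fun x => hp0 _
  -- the base density Q and its integral
  set Q : X × (Fin (L + 1) → M) → ℝ := fun z => pX z.1 * ∏ ℓ, pM (z.2 ℓ) with hQ
  -- integrability of the product of marginals on the pi space
  letI : MeasureSpace M := ⟨ν⟩
  haveI : SigmaFinite (volume : Measure M) := ‹SigmaFinite ν›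
  have hν'vol : ν' = (volume : Measure (Fin (L + 1) → M)) := rfl
  have hprodInt : Integrable (fun ms : Fin (L + 1) → M => ∏ ℓ, pM (ms ℓ)) ν' := by
    rw [hν'vol]
    exact Integrable.fintype_prod (f := fun _ : Fin (L + 1) => pM) fun _ => hpMInt
  have hprod1 : ∫ ms : Fin (L + 1) → M, (∏ ℓ, pM (ms ℓ)) ∂ν' = 1 := by
    rw [hν'vol]
    rw [show (∫ ms : Fin (L + 1) → M, ∏ ℓ, pM (ms ℓ)) =
        (∫ y, pM y) ^ Fintype.card (Fin (L + 1)) from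
      integral_fintype_prod_eq_pow (ι := Fin (L + 1)) pM]
    have : (∫ y, pM y) = 1 := hpM1
    rw [this, one_pow]
  have hQInt : Integrable Q (μ.prod ν') := hpXInt.mul_prod hprodInt
  have hQ1 : ∫ z, Q z ∂(μ.prod ν') = 1 := by
    rw [hQ]
    rw [integral_prod_mul (f := pX) (g := fun ms : Fin (L + 1) → M => ∏ ℓ, pM (ms ℓ))]
    rw [hpX1, hprod1, one_mul]
  have hQ0 : ∀ z, 0 ≤ Q z :=
    fun z => mul_nonneg (hpX0 _) (Finset.prod_nonneg fun ℓ _ => hpM0 _)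
  -- the family of weighted functions
  set S : X → (Fin (L + 1) → M) → ℝ := fun x ms => ∑ ℓ, Real.exp (U (x, ms ℓ)) with hS
  have hSpos : ∀ x ms, 0 < S x ms := fun x ms =>
    Finset.sum_pos (fun ℓ _ => Real.exp_pos _) ⟨0, Finset.mem_univ _⟩
  set c : ℝ := 1 / ((L : ℝ) + 1) with hc
  have hcpos : 0 < c := by positivity
  set F : Fin (L + 1) → X × (Fin (L + 1) → M) → ℝ := fun j z =>
    Q z * (Real.exp (U (z.1, z.2 j)) / (c * S z.1 z.2)) with hF
  -- measurability of F j
  have hSm : Measurable fun z : X × (Fin (L + 1) → M) => S z.1 z.2 := by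
    apply Finset.measurable_sum
    intro ℓ _
    exact (Real.measurable_exp.comp (hU.comp
      (measurable_fst.prodMk ((measurable_pi_apply ℓ).comp measurable_snd))))
  have hQm : Measurable Q := by
    apply Measurable.mul
    · exact hpXm.comp measurable_fst
    · exact Finset.measurable_prod _ fun ℓ _ =>
        hpMm.comp ((measurable_pi_apply ℓ).comp measurable_snd)
  have hFm : ∀ j, Measurable (F j) := by
    intro j
    apply hQm.mul
    apply Measurable.div
    · exact Real.measurable_exp.comp (hU.comp
        (measurable_fst.prodMk ((measurable_pi_apply j).comp measurable_snd)))
    · exact (measurable_const.mul hSm)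
  -- pointwise bound : 0 ≤ F j z ≤ (L+1) * Q z
  have hFle : ∀ j z, F j z ≤ ((L : ℝ) + 1) * Q z := by
    intro j z
    have hnum : Real.exp (U (z.1, z.2 j)) ≤ S z.1 z.2 :=
      Finset.single_le_sum (f := fun ℓ => Real.exp (U (z.1, z.2 ℓ)))
        (fun ℓ _ => (Real.exp_pos _).le) (Finset.mem_univ j)
    have hden : 0 < c * S z.1 z.2 := mul_pos hcpos (hSpos _ _)
    have hratio : Real.exp (U (z.1, z.2 j)) / (c * S z.1 z.2) ≤ (L : ℝ) + 1 := by
      rw [div_le_iff₀ hden]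
      calc Real.exp (U (z.1, z.2 j)) ≤ S z.1 z.2 := hnum
        _ = ((L : ℝ) + 1) * (c * S z.1 z.2) := by
            rw [hc]; field_simp
    calc F j z = Q z * (Real.exp (U (z.1, z.2 j)) / (c * S z.1 z.2)) := rfl
      _ ≤ Q z * ((L : ℝ) + 1) := by
          apply mul_le_mul_of_nonneg_left hratio (hQ0 z)
      _ = ((L : ℝ) + 1) * Q z := mul_comm _ _
  have hF0 : ∀ j z, 0 ≤ F j z := fun j z =>
    mul_nonneg (hQ0 z) (div_nonneg (Real.exp_pos _).le
      (mul_nonneg hcpos.le (hSpos _ _).le))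
  -- integrability of F j
  have hFInt : ∀ j, Integrable (F j) (μ.prod ν') := by
    intro j
    refine Integrable.mono (hQInt.const_mul ((L : ℝ) + 1)) (hFm j).aestronglyMeasurable ?_
    filter_upwards with z
    rw [Real.norm_of_nonneg (hF0 j z), Real.norm_of_nonneg
      (mul_nonneg (by positivity) (hQ0 z))]
    exact hFle j z
  -- all F j have the same integral, by exchangeability
  have hFeq : ∀ j, ∫ z, F j z ∂(μ.prod ν') = ∫ z, F 0 z ∂(μ.prod ν') := by
    intro j
    set e : Fin (L + 1) ≃ Fin (L + 1) := Equiv.swap 0 j with he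
    set φ : (Fin (L + 1) → M) ≃ᵐ (Fin (L + 1) → M) :=
      MeasurableEquiv.piCongrLeft (fun _ => M) e with hφ
    have hφpres : MeasurePreserving φ ν' ν' :=
      measurePreserving_piCongrLeft (fun _ : Fin (L + 1) => ν) e
    have hψpres : MeasurePreserving (Prod.map (id : X → X) φ) (μ.prod ν') (μ.prod ν') :=
      (MeasurePreserving.id μ).prod hφpres
    set ψ : (X × (Fin (L + 1) → M)) ≃ᵐ (X × (Fin (L + 1) → M)) :=
      (MeasurableEquiv.refl X).prodCongr φ with hψ
    have hψpres' : MeasurePreserving ψ (μ.prod ν') (μ.prod ν') :=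
      ⟨ψ.measurable, hψpres.map_eq⟩
    have key : ∀ z : X × (Fin (L + 1) → M), F j (ψ z) = F 0 z := by
      rintro ⟨x, ms⟩
      have hφapp : ∀ i, φ ms i = ms (e i) := by
        intro i
        show (Equiv.piCongrLeft (fun _ => M) e) ms i = ms (e i)
        conv_lhs => rw [show i = e (e.symm i) from (e.apply_symm_apply i).symm]
        rw [Equiv.piCongrLeft_apply_apply]
        rw [he, Equiv.symm_swap]
      have h1 : pX (ψ (x, ms)).1 = pX x := rfl
      have h2 : (∏ ℓ, pM ((ψ (x, ms)).2 ℓ)) = ∏ ℓ, pM (ms ℓ) := by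
        show (∏ ℓ, pM (φ ms ℓ)) = ∏ ℓ, pM (ms ℓ)
        simp_rw [hφapp]
        exact Equiv.prod_comp e fun ℓ => pM (ms ℓ)
      have h3 : S (ψ (x, ms)).1 (ψ (x, ms)).2 = S x ms := by
        show S x (φ ms) = S x ms
        rw [hS]
        simp only
        simp_rw [hφapp]
        exact Equiv.sum_comp e fun ℓ => Real.exp (U (x, ms ℓ))
      have h4 : (ψ (x, ms)).2 j = ms 0 := by
        show φ ms j = ms 0
        rw [hφapp j, he, Equiv.swap_apply_right]
      show Q (ψ (x, ms)) * (Real.exp (U ((ψ (x, ms)).1, (ψ (x, ms)).2 j))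
          / (c * S (ψ (x, ms)).1 (ψ (x, ms)).2))
        = Q (x, ms) * (Real.exp (U ((x, ms).1, (x, ms).2 0)) / (c * S x ms))
      rw [h3, h4]
      congr 1
      show pX (ψ (x, ms)).1 * (∏ ℓ, pM ((ψ (x, ms)).2 ℓ)) = pX x * ∏ ℓ, pM (ms ℓ)
      rw [h1, h2]
    calc ∫ z, F j z ∂(μ.prod ν') = ∫ z, F j (ψ z) ∂(μ.prod ν') :=
          (hψpres'.integral_comp' (F j)).symm
      _ = ∫ z, F 0 z ∂(μ.prod ν') := by simp_rw [key]
  -- pointwise sum identity : ∑ j, F j z = (L+1) * Q z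
  have hsum : ∀ z, (∑ j, F j z) = ((L : ℝ) + 1) * Q z := by
    intro z
    have hSne : S z.1 z.2 ≠ 0 := (hSpos _ _).ne'
    have hcne : c ≠ 0 := hcpos.ne'
    calc (∑ j, F j z) = Q z * ∑ j, Real.exp (U (z.1, z.2 j)) / (c * S z.1 z.2) := by
          rw [Finset.mul_sum]
      _ = Q z * (S z.1 z.2 / (c * S z.1 z.2)) := by
          rw [← Finset.sum_div]
      _ = Q z * (1 / c) := by
          rw [div_mul_eq_div_div_swap, div_self hSne]
      _ = ((L : ℝ) + 1) * Q z := by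
          rw [hc]; rw [one_div_one_div]; ring
  -- conclude
  have hsum_int : ∫ z, (∑ j, F j z) ∂(μ.prod ν') = ((L : ℝ) + 1) := by
    calc ∫ z, (∑ j, F j z) ∂(μ.prod ν') = ∫ z, ((L : ℝ) + 1) * Q z ∂(μ.prod ν') := by
          simp_rw [hsum]
      _ = ((L : ℝ) + 1) * ∫ z, Q z ∂(μ.prod ν') := integral_const_mul _ _
      _ = ((L : ℝ) + 1) := by rw [hQ1, mul_one]
  have hsum_int' : ∫ z, (∑ j, F j z) ∂(μ.prod ν') = ∑ j, ∫ z, F j z ∂(μ.prod ν') :=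
    integral_finset_sum _ fun j _ => hFInt j
  have hall : (∑ j : Fin (L + 1), ∫ z, F j z ∂(μ.prod ν'))
      = ((L : ℝ) + 1) * ∫ z, F 0 z ∂(μ.prod ν') := by
    rw [Finset.sum_congr rfl fun j _ => hFeq j, Finset.sum_const, Finset.card_univ,
      Fintype.card_fin, nsmul_eq_mul]
    push_cast
    ring
  have hF0int : ∫ z, F 0 z ∂(μ.prod ν') = 1 := by
    have hLpos : (0 : ℝ) < (L : ℝ) + 1 := by positivity
    have := hsum_int.symm.trans hsum_int'
    rw [hall] at this
    -- this : (L+1) = (L+1) * ∫ F 0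
    exact mul_left_cancel₀ hLpos.ne'
      (this.symm.trans (mul_one ((L : ℝ) + 1)).symm)
  -- identify p₂ with F 0
  have hp₂F : ∀ z, p₂ z = F 0 z := by
    intro z
    rw [hp₂ z, hg z.1 z.2]
  calc ∫ z, p₂ z ∂(μ.prod ν') = ∫ z, F 0 z ∂(μ.prod ν') := by simp_rw [hp₂F]
    _ = 1 := hF0int
end

section
/- Let (X, 𝒜, μ) and (M, ℬ, ν) be σ-finite measure spaces and let p : X × M → [0, ∞) be measurable with ∫∫ p d(μ ⊗ ν) = 1. Define the marginals p_X(x) = ∫ p(x, m) dν(m) and p_M(m) = ∫ p(x, m) dμ(x), and the mutual information I(p) = ∫∫ p(x, m) log( p(x, m) / (p_X(x) p_M(m)) ) d(μ ⊗ ν), with the convention 0·log 0 = 0. Assume p(x, m) > 0 for (μ ⊗ ν)-a.e. (x, m), that p_X and p_M are finite a.e., and that the integrand of I(p) is integrable. Let L ≥ 1 be an integer and U : X × M → ℝ measurable, define g_U(x, m₀, …, m_L) = exp(U(x, m₀)) / ((1/(L+1)) ∑_{ℓ=0}^{L} exp(U(x, m_ℓ))) and ℒ(U, L) = ∫_{X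 × M^{L+1}} p(x, m₀) (∏_{ℓ=1}^{L} p_M(m_ℓ)) log g_U d(μ ⊗ ν^{⊗(L+1)}), and assume the integrand of ℒ(U, L) is integrable. Define p₁(x, m₀, …, m_L) = p(x, m₀) ∏_{ℓ=1}^{L} p_M(m_ℓ) and p₂(x, m₀, …, m_L) = p_X(x) (∏_{ℓ=0}^{L} p_M(m_ℓ)) g_U(x, m₀, …, m_L). Then I(p) − ℒ(U, L) = ∫_{X × M^{L+1}} p₁ · log(p₁ / p₂) d(μ ⊗ ν^{⊗(L+1)}). -/
open MeasureTheory

private lemma prod_erase_zero_eq {n : ℕ} (f : Fin (n + 1) → ℝ) :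
    ∏ ℓ ∈ Finset.univ.erase (0 : Fin (n + 1)), f ℓ = ∏ j : Fin n, f j.succ := by
  have h : Finset.univ.erase (0 : Fin (n + 1)) = Finset.univ.image Fin.succ := by
    ext ℓ; simp [Fin.exists_succ_eq, eq_comm]
  rw [h, Finset.prod_image]
  exact fun a _ b _ hab => Fin.succ_injective _ hab

private lemma ae_pi_eval {M : Type*} [MeasurableSpace M] (ν : Measure M) [SigmaFinite ν]
    {n : ℕ} (i : Fin (n + 1)) {q : M → Prop} (h0 : ∀ᵐ a ∂ν, q a) :
    ∀ᵐ ms ∂(Measure.pi fun _ : Fin (n + 1) => ν), q (ms i) := by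
  have hmp := measurePreserving_piFinSuccAbove (fun _ : Fin (n + 1) => ν) i
  rw [ae_iff]
  have hset : {ms : Fin (n + 1) → M | ¬ q (ms i)} =
      (MeasurableEquiv.piFinSuccAbove (fun _ => M) i) ⁻¹' {w | ¬ q w.1} := by
    ext ms; exact Iff.rfl
  have huniv : {w : M × (Fin n → M) | ¬ q w.1} = {a | ¬ q a} ×ˢ Set.univ := by
    ext w; simp
  rw [hset, hmp.measure_preimage_equiv, huniv, Measure.prod_prod, ae_iff.mp h0, zero_mul]

private lemma pos_integral {α : Type*} [MeasurableSpace α] {μ : Measure α} (hμ : μ ≠ 0)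
    {f : α → ℝ} (h0 : ∀ x, 0 ≤ f x) (hpos : ∀ᵐ x ∂μ, 0 < f x) (hint : Integrable f μ) :
    0 < ∫ x, f x ∂μ := by
  rw [integral_pos_iff_support_of_nonneg_ae (.of_forall h0) hint]
  by_contra hle
  have h0' : μ (Function.support f) = 0 := by simpa [not_lt, le_zero_iff] using hle
  have hc : μ (Function.support f)ᶜ = 0 := by
    refine measure_mono_null ?_ (ae_iff.mp hpos)
    intro a ha
    simp only [Set.mem_compl_iff, Function.mem_support, not_not] at ha
    simp [ha]
  have huniv : μ Set.univ = 0 := by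
    have := measure_union_le (μ := μ) (Function.support f) (Function.support f)ᶜ
    rw [Set.union_compl_self, h0', hc] at this
    simpa using this
  exact hμ (Measure.measure_univ_eq_zero.mp huniv)

/-- The gap between the mutual information `I(p)` and the InfoNCE objective `ℒ(U, L)`
equals the KL divergence between `p₁` (joint of the positive pair with `L` contrastive
samples from the marginal) and the reweighted product of marginals `p₂`. -/
theorem stmt3 {X M : Type*} [MeasurableSpace X] [MeasurableSpace M]
    (μ : Measure X) (ν : Measure M) [SigmaFinite μ] [SigmaFinite ν]
    (p : X × M → ℝ) (hp : Measurable p) (hp0 : ∀ z, 0 ≤ p z)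
    (hp1 : ∫ z, p z ∂(μ.prod ν) = 1)
    (pX : X → ℝ) (hpX : ∀ x, pX x = ∫ a, p (x, a) ∂ν)
    (pM : M → ℝ) (hpM : ∀ a, pM a = ∫ x, p (x, a) ∂μ)
    (hppos : ∀ᵐ z ∂(μ.prod ν), 0 < p z)
    (hpXfin : ∀ᵐ x ∂μ, Integrable (fun a => p (x, a)) ν)
    (hpMfin : ∀ᵐ a ∂ν, Integrable (fun x => p (x, a)) μ)
    (hIint : Integrable (fun z : X × M => p z * Real.log (p z / (pX z.1 * pM z.2))) (μ.prod ν))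
    (L : ℕ) (hL : 1 ≤ L)
    (U : X × M → ℝ) (hU : Measurable U)
    (g : X → (Fin (L + 1) → M) → ℝ)
    (hg : ∀ x ms, g x ms =
      Real.exp (U (x, ms 0)) / ((1 / ((L : ℝ) + 1)) * ∑ ℓ, Real.exp (U (x, ms ℓ))))
    (p₁ p₂ : X × (Fin (L + 1) → M) → ℝ)
    (hp₁ : ∀ z, p₁ z = p (z.1, z.2 0) * ∏ ℓ ∈ Finset.univ.erase (0 : Fin (L + 1)), pM (z.2 ℓ))
    (hp₂ : ∀ z, p₂ z = pX z.1 * (∏ ℓ, pM (z.2 ℓ)) * g z.1 z.2)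
    (hℒint : Integrable (fun z : X × (Fin (L + 1) → M) => p₁ z * Real.log (g z.1 z.2))
      (μ.prod (Measure.pi fun _ : Fin (L + 1) => ν))) :
    (∫ z, p z * Real.log (p z / (pX z.1 * pM z.2)) ∂(μ.prod ν)) -
        (∫ z : X × (Fin (L + 1) → M), p₁ z * Real.log (g z.1 z.2)
          ∂(μ.prod (Measure.pi fun _ : Fin (L + 1) => ν))) =
      ∫ z : X × (Fin (L + 1) → M), p₁ z * Real.log (p₁ z / p₂ z)
          ∂(μ.prod (Measure.pi fun _ : Fin (L + 1) => ν)) := by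
  set κ : Measure (Fin (L + 1) → M) := Measure.pi fun _ => ν with hκdef
  set π' : Measure (Fin L → M) := Measure.pi fun _ => ν with hπdef
  set ρ : Measure ((X × M) × (Fin L → M)) := (μ.prod ν).prod π' with hρdef
  -- basic nondegeneracy
  have hμ0 : μ ≠ 0 := by
    rintro rfl
    rw [Measure.zero_prod] at hp1
    simp at hp1
  have hν0 : ν ≠ 0 := by
    rintro rfl
    rw [Measure.prod_zero] at hp1
    simp at hp1
  have hpInt : Integrable p (μ.prod ν) := by
    by_contra hcon
    rw [integral_undef hcon] at hp1
    norm_num at hp1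
  have hpXe : pX = fun x => ∫ a, p (x, a) ∂ν := funext hpX
  have hpMe : pM = fun a => ∫ x, p (x, a) ∂μ := funext hpM
  have hpMint : Integrable pM ν := by
    rw [hpMe]; exact hpInt.integral_prod_right
  have hpM1 : ∫ a, pM a ∂ν = 1 := by
    rw [hpMe, ← integral_prod_symm p hpInt]; exact hp1
  -- positivity of marginals
  have hpX_pos : ∀ᵐ x ∂μ, 0 < pX x := by
    filter_upwards [Measure.ae_ae_of_ae_prod hppos, hpXfin] with x hx hint
    rw [hpX]
    exact pos_integral hν0 (fun a => hp0 (x, a)) hx hint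
  have hswap' : ∀ᵐ w ∂(ν.prod μ), 0 < p (w.2, w.1) := by
    rw [ae_iff]
    have hset : {w : M × X | ¬ 0 < p (w.2, w.1)} = Prod.swap ⁻¹' {z : X × M | ¬ 0 < p z} := rfl
    have hms : MeasurableSet {z : X × M | ¬ 0 < p z} :=
      (measurableSet_lt measurable_const hp).compl
    rw [hset, (Measure.measurePreserving_swap (μ := ν) (ν := μ)).measure_preimage
      hms.nullMeasurableSet]
    exact ae_iff.mp hppos
  have hpM_pos : ∀ᵐ a ∂ν, 0 < pM a := by
    filter_upwards [Measure.ae_ae_of_ae_prod hswap', hpMfin] with a ha hint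
    rw [hpM]
    exact pos_integral hμ0 (fun x => hp0 (x, a)) ha hint
  -- the measurable equivalence rearranging the coordinates
  let e : (Fin (L + 1) → M) ≃ᵐ M × (Fin L → M) :=
    MeasurableEquiv.piFinSuccAbove (fun _ => M) 0
  let Φ : X × (Fin (L + 1) → M) ≃ᵐ (X × M) × (Fin L → M) :=
    ((MeasurableEquiv.refl X).prodCongr e).trans (MeasurableEquiv.prodAssoc).symm
  have he : MeasurePreserving e κ (ν.prod π') :=
    measurePreserving_piFinSuccAbove (fun _ : Fin (L + 1) => ν) 0
  have h1 : MeasurePreserving (Prod.map (id : X → X) e) (μ.prod κ) (μ.prod (ν.prod π')) :=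
    (MeasurePreserving.id μ).prod he
  have h2 : MeasurePreserving (MeasurableEquiv.prodAssoc.symm :
      X × M × (Fin L → M) ≃ᵐ (X × M) × (Fin L → M)) (μ.prod (ν.prod π')) ρ :=
    MeasurePreserving.symm _ (measurePreserving_prodAssoc μ ν π')
  have hΦ : MeasurePreserving Φ (μ.prod κ) ρ := by
    have : ⇑Φ = (⇑(MeasurableEquiv.prodAssoc.symm :
        X × M × (Fin L → M) ≃ᵐ (X × M) × (Fin L → M))) ∘ (Prod.map (id : X → X) e) := rfl
    exact this ▸ h2.comp h1
  have hΦapp : ∀ z : X × (Fin (L + 1) → M), Φ z = ((z.1, z.2 0), fun j => z.2 j.succ) := by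
    intro z
    refine Prod.ext rfl ?_
    funext j
    show z.2 (Fin.succAbove 0 j) = z.2 j.succ
    rw [Fin.zero_succAbove]
  -- a.e. positivity on the big product space
  have hBpos : ∀ᵐ z ∂(μ.prod κ), 0 < pX z.1 := by
    rw [ae_iff]
    have hset : {z : X × (Fin (L + 1) → M) | ¬ 0 < pX z.1}
        = {x | ¬ 0 < pX x} ×ˢ Set.univ := by ext z; simp
    rw [hset, Measure.prod_prod, ae_iff.mp hpX_pos, zero_mul]
  have hCpos : ∀ᵐ z ∂(μ.prod κ), ∀ ℓ, 0 < pM (z.2 ℓ) := by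
    rw [ae_all_iff]
    intro ℓ
    have hκa : ∀ᵐ ms ∂κ, 0 < pM (ms ℓ) := ae_pi_eval ν ℓ hpM_pos
    rw [ae_iff]
    have hset : {z : X × (Fin (L + 1) → M) | ¬ 0 < pM (z.2 ℓ)}
        = Set.univ ×ˢ {ms | ¬ 0 < pM (ms ℓ)} := by ext z; simp
    rw [hset, Measure.prod_prod, ae_iff.mp hκa, mul_zero]
  have hApos : ∀ᵐ z ∂(μ.prod κ), 0 < p (z.1, z.2 0) := by
    rw [ae_iff]
    have hset : {z : X × (Fin (L + 1) → M) | ¬ 0 < p (z.1, z.2 0)}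
        = ⇑Φ ⁻¹' ({z : X × M | ¬ 0 < p z} ×ˢ Set.univ) := by
      ext z
      simp [hΦapp z]
    rw [hset, hΦ.measure_preimage_equiv, Measure.prod_prod, ae_iff.mp hppos, zero_mul]
  -- positivity of g
  have hgpos : ∀ (x : X) (ms : Fin (L + 1) → M), 0 < g x ms := by
    intro x ms
    rw [hg]
    refine div_pos (Real.exp_pos _) (mul_pos (by positivity) ?_)
    exact Finset.sum_pos (fun ℓ _ => Real.exp_pos _) Finset.univ_nonempty
  -- the tensorized integrand
  set G' : ((X × M) × (Fin L → M)) → ℝ :=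
    fun w => (p w.1 * Real.log (p w.1 / (pX w.1.1 * pM w.1.2))) * ∏ j, pM (w.2 j) with hG'def
  -- pointwise a.e. identity
  have hae : ∀ᵐ z ∂(μ.prod κ), p₁ z * Real.log (p₁ z / p₂ z)
      = G' (Φ z) - p₁ z * Real.log (g z.1 z.2) := by
    filter_upwards [hApos, hBpos, hCpos] with z hA hB hC
    have hPr : 0 < ∏ ℓ ∈ Finset.univ.erase (0 : Fin (L + 1)), pM (z.2 ℓ) :=
      Finset.prod_pos fun ℓ _ => hC ℓ
    have hprodall : (∏ ℓ, pM (z.2 ℓ))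
        = pM (z.2 0) * ∏ ℓ ∈ Finset.univ.erase (0 : Fin (L + 1)), pM (z.2 ℓ) :=
      (Finset.mul_prod_erase Finset.univ _ (Finset.mem_univ 0)).symm
    have hG := hgpos z.1 z.2
    have hratio : p₁ z / p₂ z = (p (z.1, z.2 0) / (pX z.1 * pM (z.2 0))) / g z.1 z.2 := by
      rw [hp₁, hp₂, hprodall]
      field_simp [hB.ne', (hC 0).ne', hPr.ne', hG.ne']
      try ring
    have hG'val : G' (Φ z) = (p (z.1, z.2 0) * Real.log (p (z.1, z.2 0) /
        (pX z.1 * pM (z.2 0)))) * ∏ ℓ ∈ Finset.univ.erase (0 : Fin (L + 1)), pM (z.2 ℓ) := by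
      rw [hG'def, hΦapp z, prod_erase_zero_eq fun ℓ => pM (z.2 ℓ)]
    rw [hratio, Real.log_div (ne_of_gt (div_pos hA (mul_pos hB (hC 0)))) (ne_of_gt hG),
      hG'val, hp₁]
    ring
  -- integrability and value of the tensorized integrand
  have hPi_int : Integrable (fun ms : Fin L → M => ∏ j, pM (ms j)) π' := by
    letI : MeasureSpace M := ⟨ν⟩
    exact Integrable.fintype_prod (f := fun _ : Fin L => pM) (fun _ => hpMint)
  have hPi_val : ∫ ms : Fin L → M, ∏ j, pM (ms j) ∂π' = 1 := by
    letI : MeasureSpace M := ⟨ν⟩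
    rw [show π' = Measure.pi (fun _ => (volume : Measure M)) from rfl,
      integral_fintype_prod_eq_pow (ι := Fin L) pM, show (∫ x, pM x) = 1 from hpM1, one_pow]
  have hG_int : Integrable G' ρ := by
    rw [hG'def]
    exact hIint.mul_prod hPi_int
  have hcomp_int : Integrable (fun z => G' (Φ z)) (μ.prod κ) :=
    (hΦ.integrable_comp_emb Φ.measurableEmbedding).mpr hG_int
  have hcomp_val : ∫ z, G' (Φ z) ∂(μ.prod κ)
      = ∫ z, p z * Real.log (p z / (pX z.1 * pM z.2)) ∂(μ.prod ν) := by
    rw [hΦ.integral_comp Φ.measurableEmbedding, hρdef, hG'def]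
    exact (integral_prod_mul (fun w : X × M => p w * Real.log (p w / (pX w.1 * pM w.2)))
      (fun ms : Fin L → M => ∏ j, pM (ms j))).trans (by rw [hPi_val, mul_one])
  rw [show (∫ z : X × (Fin (L + 1) → M), p₁ z * Real.log (p₁ z / p₂ z) ∂(μ.prod κ))
      = ∫ z, (G' (Φ z) - p₁ z * Real.log (g z.1 z.2)) ∂(μ.prod κ) from integral_congr_ae hae,
    integral_sub hcomp_int hℒint, hcomp_val]
end

section
/- Let (X, 𝒜, μ) and (M, ℬ, ν) be σ-finite measure spaces and let p : X × M → [0, ∞) be measurable with ∫∫ p d(μ ⊗ ν) = 1. Define the marginals p_X(x) = ∫ p(x, m) dν(m) and p_M(m) = ∫ p(x, m) dμ(x), and the mutual information I(p) = ∫∫ p(x, m) log( p(x, m) / (p_X(x) p_M(m)) ) d(μ ⊗ ν), with the convention 0·log 0 = 0. Assume p(x, m) > 0 for (μ ⊗ ν)-a.e. (x, m), that p_X and p_M are finite a.e., and that the integrand of I(p) is integrable. Let L ≥ 1 be an integer and U : X × M → ℝ measurable, define g_U(x, m₀, …, m_L) = exp(U(x, m₀)) / ((1/(L+1)) ∑_{ℓ=0}^{L}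 exp(U(x, m_ℓ))) and the InfoNCE objective ℒ(U, L) = ∫_{X × M^{L+1}} p(x, m₀) (∏_{ℓ=1}^{L} p_M(m_ℓ)) log g_U d(μ ⊗ ν^{⊗(L+1)}), and assume the integrand of ℒ(U, L) is integrable. Then ℒ(U, L) ≤ I(p). -/
open MeasureTheory Filter ENNReal

set_option maxHeartbeats 2000000 in
/-- Proposition 1 (InfoNCE lower bound), density form: for any critic `U` and any
number `L ≥ 1` of contrastive samples, the InfoNCE objective `ℒ(U, L)` is a lower
bound on the mutual information `I(p)`. -/
theorem stmt4 {X M : Type*} [MeasurableSpace X] [MeasurableSpace M]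
    (μ : Measure X) (ν : Measure M) [SigmaFinite μ] [SigmaFinite ν]
    (p : X × M → ℝ) (hp : Measurable p) (hp0 : ∀ z, 0 ≤ p z)
    (hp1 : ∫ z, p z ∂(μ.prod ν) = 1)
    (pX : X → ℝ) (hpX : ∀ x, pX x = ∫ a, p (x, a) ∂ν)
    (pM : M → ℝ) (hpM : ∀ a, pM a = ∫ x, p (x, a) ∂μ)
    (hppos : ∀ᵐ z ∂(μ.prod ν), 0 < p z)
    (hpXfin : ∀ᵐ x ∂μ, Integrable (fun a => p (x, a)) ν)
    (hpMfin : ∀ᵐ a ∂ν, Integrable (fun x => p (x, a)) μ)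
    (hIint : Integrable (fun z : X × M => p z * Real.log (p z / (pX z.1 * pM z.2))) (μ.prod ν))
    (L : ℕ) (hL : 1 ≤ L)
    (U : X × M → ℝ) (hU : Measurable U)
    (g : X → (Fin (L + 1) → M) → ℝ)
    (hg : ∀ x ms, g x ms =
      Real.exp (U (x, ms 0)) / ((1 / ((L : ℝ) + 1)) * ∑ ℓ, Real.exp (U (x, ms ℓ))))
    (hℒint : Integrable (fun z : X × (Fin (L + 1) → M) =>
        p (z.1, z.2 0) * (∏ ℓ ∈ Finset.univ.erase (0 : Fin (L + 1)), pM (z.2 ℓ)) *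
          Real.log (g z.1 z.2))
      (μ.prod (Measure.pi fun _ : Fin (L + 1) => ν))) :
    (∫ z : X × (Fin (L + 1) → M),
        p (z.1, z.2 0) * (∏ ℓ ∈ Finset.univ.erase (0 : Fin (L + 1)), pM (z.2 ℓ)) *
          Real.log (g z.1 z.2)
        ∂(μ.prod (Measure.pi fun _ : Fin (L + 1) => ν))) ≤
      ∫ z, p z * Real.log (p z / (pX z.1 * pM z.2)) ∂(μ.prod ν) := by
  classical
  letI : MeasureSpace M := { volume := ν }
  haveI : SigmaFinite (volume : Measure M) := ‹SigmaFinite ν›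
  simp only [hg] at hℒint ⊢
  set π : Measure (Fin (L + 1) → M) := Measure.pi fun _ : Fin (L + 1) => ν with hπdef
  have hKpos : (0:ℝ) < (L : ℝ) + 1 := by positivity
  -- nonnegativity of the marginals
  have hpMnn : ∀ a, 0 ≤ pM a := by
    intro a; rw [hpM]; exact integral_nonneg fun x => hp0 _
  have hpXnn : ∀ x, 0 ≤ pX x := by
    intro x; rw [hpX]; exact integral_nonneg fun a => hp0 _
  -- measurability of the marginals
  have hpXeq : pX = fun x => ∫ a, p (x, a) ∂ν := funext hpX
  have hpMeq : pM = fun a => ∫ x, p (x, a) ∂μ := funext hpM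
  have mpX : Measurable pX := by
    rw [hpXeq]; exact hp.stronglyMeasurable.integral_prod_right'.measurable
  have mpM : Measurable pM := by
    rw [hpMeq]; exact hp.stronglyMeasurable.integral_prod_left'.measurable
  -- integrability of p and of its marginals
  have hpInt : Integrable p (μ.prod ν) := by
    by_contra h
    rw [integral_undef h] at hp1
    exact one_ne_zero hp1.symm
  have hpXint : Integrable pX μ := by rw [hpXeq]; exact hpInt.integral_prod_left
  have hpMint : Integrable pM ν := by rw [hpMeq]; exact hpInt.integral_prod_right
  have hIpX : ∫ x, pX x ∂μ = 1 := by
    rw [hpXeq, ← integral_prod _ hpInt]; exact hp1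
  have hIpM : ∫ a, pM a ∂ν = 1 := by
    rw [hpMeq, ← integral_prod_symm _ hpInt]; exact hp1
  -- the measures are nonzero
  have hν0 : ν ≠ 0 := by
    rintro rfl
    rw [Measure.prod_zero, integral_zero_measure] at hp1
    exact one_ne_zero hp1.symm
  have hμ0 : μ ≠ 0 := by
    rintro rfl
    rw [Measure.zero_prod, integral_zero_measure] at hp1
    exact one_ne_zero hp1.symm
  -- a.e. positivity of the marginals
  have hppos' : ∀ᵐ x ∂μ, ∀ᵐ a ∂ν, 0 < p (x, a) := Measure.ae_ae_of_ae_prod hppos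
  have hXpos : ∀ᵐ x ∂μ, 0 < pX x := by
    filter_upwards [hppos', hpXfin] with x hx hxi
    rw [hpX]
    rw [integral_pos_iff_support_of_nonneg_ae (Eventually.of_forall fun a => hp0 (x, a)) hxi]
    have hc : ν ((Function.support fun a => p (x, a))ᶜ) = 0 := by
      refine measure_mono_null ?_ (ae_iff.1 hx)
      intro a ha
      simp only [Set.mem_compl_iff, Function.mem_support, not_not] at ha
      simp [ha]
    calc (0:ℝ≥0∞) < ν Set.univ := Measure.measure_univ_pos.mpr hν0
    _ ≤ ν (Function.support fun a => p (x, a)) := by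
        conv_lhs => rw [← Set.union_compl_self (Function.support fun a => p (x, a))]
        refine (measure_union_le _ _).trans ?_
        rw [hc, add_zero]
  have hswap : ∀ᵐ a ∂ν, ∀ᵐ x ∂μ, 0 < p (x, a) := by
    have hmeas : MeasurableSet {w : M × X | 0 < p (w.2, w.1)} :=
      measurableSet_lt measurable_const (hp.comp (measurable_snd.prodMk measurable_fst))
    have h2 : ∀ᵐ w ∂(ν.prod μ), 0 < p (w.2, w.1) := by
      rw [← Measure.prod_swap, ae_map_iff measurable_swap.aemeasurable hmeas]
      filter_upwards [hppos] with z hz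
      simpa using hz
    have := Measure.ae_ae_of_ae_prod h2
    filter_upwards [this] with a ha
    filter_upwards [ha] with x hx
    exact hx
  have hMpos : ∀ᵐ a ∂ν, 0 < pM a := by
    filter_upwards [hswap, hpMfin] with a ha hai
    rw [hpM]
    rw [integral_pos_iff_support_of_nonneg_ae (Eventually.of_forall fun x => hp0 (x, a)) hai]
    have hc : μ ((Function.support fun x => p (x, a))ᶜ) = 0 := by
      refine measure_mono_null ?_ (ae_iff.1 ha)
      intro x hx
      simp only [Set.mem_compl_iff, Function.mem_support, not_not] at hx
      simp [hx]
    calc (0:ℝ≥0∞) < μ Set.univ := Measure.measure_univ_pos.mpr hμ0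
    _ ≤ μ (Function.support fun x => p (x, a)) := by
        conv_lhs => rw [← Set.union_compl_self (Function.support fun x => p (x, a))]
        refine (measure_union_le _ _).trans ?_
        rw [hc, add_zero]
  -- a.e. positivity lifted to the big product space
  have E1 : ∀ᵐ z ∂(μ.prod π), 0 < p (z.1, z.2 0) := by
    have hs : MeasurableSet {z : X × (Fin (L + 1) → M) | 0 < p (z.1, z.2 0)} :=
      measurableSet_lt measurable_const
        (hp.comp (measurable_fst.prodMk ((measurable_pi_apply 0).comp measurable_snd)))
    refine (Measure.ae_prod_mem_iff_ae_ae_mem hs).2 ?_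
    filter_upwards [hppos'] with x hx
    rw [ae_iff]
    show π (Function.eval (0 : Fin (L + 1)) ⁻¹' {a : M | ¬ 0 < p (x, a)}) = 0
    exact Measure.pi_eval_preimage_null _ (ae_iff.1 hx)
  have E2 : ∀ᵐ z ∂(μ.prod π), 0 < pX z.1 := by
    have hs : MeasurableSet {z : X × (Fin (L + 1) → M) | 0 < pX z.1} :=
      measurableSet_lt measurable_const (mpX.comp measurable_fst)
    refine (Measure.ae_prod_mem_iff_ae_ae_mem hs).2 ?_
    filter_upwards [hXpos] with x hx
    exact Eventually.of_forall fun ms => hx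
  have E3 : ∀ᵐ z ∂(μ.prod π), ∀ ℓ : Fin (L + 1), 0 < pM (z.2 ℓ) := by
    rw [ae_all_iff]
    intro ℓ
    have hs : MeasurableSet {z : X × (Fin (L + 1) → M) | 0 < pM (z.2 ℓ)} :=
      measurableSet_lt measurable_const (mpM.comp ((measurable_pi_apply ℓ).comp measurable_snd))
    refine (Measure.ae_prod_mem_iff_ae_ae_mem hs).2 ?_
    refine Eventually.of_forall fun x => ?_
    rw [ae_iff]
    show π (Function.eval ℓ ⁻¹' {a : M | ¬ 0 < pM a}) = 0
    exact Measure.pi_eval_preimage_null _ (ae_iff.1 hMpos)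
  -- product integrability facts on pi spaces
  have hfullInt : Integrable (fun ms : Fin (L + 1) → M => ∏ ℓ, pM (ms ℓ)) π :=
    Integrable.fin_nat_prod (f := fun _ : Fin (L + 1) => pM) fun _ => hpMint
  have hfullVal : ∫ ms, (∏ ℓ, pM (ms ℓ)) ∂π = 1 := by
    have h : ∫ ms, (∏ ℓ, pM (ms ℓ)) ∂π = ∏ _ℓ : Fin (L + 1), ∫ a, pM a ∂ν :=
      integral_fin_nat_prod_eq_prod (E := fun _ : Fin (L + 1) => M) (fun _ => pM)
    rw [h]
    simp [hIpM]
  have hHInt : Integrable (fun v : Fin L → M => ∏ j, pM (v j)) (Measure.pi fun _ : Fin L => ν) :=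
    Integrable.fin_nat_prod (f := fun _ : Fin L => pM) fun _ => hpMint
  have hHVal : ∫ v : Fin L → M, (∏ j, pM (v j)) ∂(Measure.pi fun _ : Fin L => ν) = 1 := by
    have h : ∫ v : Fin L → M, (∏ j, pM (v j)) ∂(Measure.pi fun _ : Fin L => ν)
        = ∏ _j : Fin L, ∫ a, pM a ∂ν :=
      integral_fin_nat_prod_eq_prod (E := fun _ : Fin L => M) (fun _ => pM)
    rw [h]
    simp [hIpM]
  -- the measure preserving map to the factorized space
  set Φfun : X × (Fin (L + 1) → M) → (X × M) × (Fin L → M) :=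
    fun z => ((z.1, z.2 0), fun j => z.2 j.succ) with hΦdef
  have hmp1 : MeasurePreserving (⇑(MeasurableEquiv.piFinSuccAbove (fun _ : Fin (L + 1) => M) 0))
      π (ν.prod (Measure.pi fun _ : Fin L => ν)) :=
    measurePreserving_piFinSuccAbove (fun _ : Fin (L + 1) => ν) 0
  have heπ : ∀ ms : Fin (L + 1) → M,
      (MeasurableEquiv.piFinSuccAbove (fun _ : Fin (L + 1) => M) 0) ms
        = (ms 0, fun j => ms j.succ) := by
    intro ms
    rw [MeasurableEquiv.piFinSuccAbove_apply]
    simp [Fin.insertNthEquiv, Fin.removeNth, Fin.succAbove_zero]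
    rfl
  have hpm2 : MeasurePreserving
      (fun z : X × (Fin (L + 1) → M) =>
        (z.1, (MeasurableEquiv.piFinSuccAbove (fun _ : Fin (L + 1) => M) 0) z.2))
      (μ.prod π) (μ.prod (ν.prod (Measure.pi fun _ : Fin L => ν))) := by
    have h := (MeasurePreserving.id μ).prod hmp1
    have heq : Prod.map (id : X → X) (⇑(MeasurableEquiv.piFinSuccAbove (fun _ : Fin (L + 1) => M) 0))
        = fun z : X × (Fin (L + 1) → M) =>
            (z.1, (MeasurableEquiv.piFinSuccAbove (fun _ : Fin (L + 1) => M) 0) z.2) := by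
      funext z; simp [Prod.map]
    rwa [heq] at h
  have hpm3 : MeasurePreserving (⇑(MeasurableEquiv.prodAssoc (α := X) (β := M) (γ := Fin L → M)).symm)
      (μ.prod (ν.prod (Measure.pi fun _ : Fin L => ν)))
      ((μ.prod ν).prod (Measure.pi fun _ : Fin L => ν)) :=
    (measurePreserving_prodAssoc μ ν (Measure.pi fun _ : Fin L => ν)).symm MeasurableEquiv.prodAssoc
  have hΦeq : (⇑(MeasurableEquiv.prodAssoc (α := X) (β := M) (γ := Fin L → M)).symm ∘
      fun z : X × (Fin (L + 1) → M) =>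
        (z.1, (MeasurableEquiv.piFinSuccAbove (fun _ : Fin (L + 1) => M) 0) z.2)) = Φfun := by
    funext z
    show (MeasurableEquiv.prodAssoc (α := X) (β := M) (γ := Fin L → M)).symm
      (z.1, (MeasurableEquiv.piFinSuccAbove (fun _ : Fin (L + 1) => M) 0) z.2) = Φfun z
    rw [heπ]
    rfl
  have hΦmp : MeasurePreserving Φfun (μ.prod π)
      ((μ.prod ν).prod (Measure.pi fun _ : Fin L => ν)) := by
    have h := hpm3.comp hpm2
    rwa [hΦeq] at h
  have hΦemb : MeasurableEmbedding Φfun := by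
    rw [← hΦeq]
    exact (MeasurableEquiv.prodAssoc.symm.measurableEmbedding).comp
      ((MeasurableEquiv.refl X).prodCongr
        (MeasurableEquiv.piFinSuccAbove (fun _ : Fin (L + 1) => M) 0)).measurableEmbedding
  -- transfer principle
  have hTransfer : ∀ F : X × M → ℝ, Integrable F (μ.prod ν) →
      Integrable (fun z : X × (Fin (L + 1) → M) => F (z.1, z.2 0) * ∏ j : Fin L, pM (z.2 j.succ))
        (μ.prod π) ∧
      (∫ z : X × (Fin (L + 1) → M), F (z.1, z.2 0) * ∏ j : Fin L, pM (z.2 j.succ) ∂(μ.prod π))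
        = ∫ y, F y ∂(μ.prod ν) := by
    intro F hF
    have hT : Integrable (fun y : (X × M) × (Fin L → M) => F y.1 * ∏ j, pM (y.2 j))
        ((μ.prod ν).prod (Measure.pi fun _ : Fin L => ν)) := hF.mul_prod hHInt
    have hcomp : (fun z : X × (Fin (L + 1) → M) => F (z.1, z.2 0) * ∏ j : Fin L, pM (z.2 j.succ))
        = (fun y : (X × M) × (Fin L → M) => F y.1 * ∏ j, pM (y.2 j)) ∘ Φfun := rfl
    constructor
    · rw [hcomp]; exact (hΦmp.integrable_comp_emb hΦemb).2 hT
    · rw [hcomp]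
      calc ∫ z, ((fun y : (X × M) × (Fin L → M) => F y.1 * ∏ j, pM (y.2 j)) ∘ Φfun) z ∂(μ.prod π)
          = ∫ y, F y.1 * ∏ j, pM (y.2 j)
              ∂((μ.prod ν).prod (Measure.pi fun _ : Fin L => ν)) :=
            hΦmp.integral_comp hΦemb (fun y : (X × M) × (Fin L → M) => F y.1 * ∏ j, pM (y.2 j))
        _ = (∫ y, F y ∂(μ.prod ν)) * ∫ v : Fin L → M, (∏ j, pM (v j))
              ∂(Measure.pi fun _ : Fin L => ν) :=
            integral_prod_mul (f := F) (g := fun v : Fin L → M => ∏ j, pM (v j))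
        _ = ∫ y, F y ∂(μ.prod ν) := by rw [hHVal, mul_one]
  -- rewrite the erase-product as a Fin L product
  have herase : ∀ ms : Fin (L + 1) → M,
      (∏ ℓ ∈ Finset.univ.erase (0 : Fin (L + 1)), pM (ms ℓ)) = ∏ j : Fin L, pM (ms j.succ) := by
    intro ms
    have h : (Finset.univ.erase (0 : Fin (L + 1)))
        = Finset.univ.map ⟨Fin.succ, Fin.succ_injective L⟩ := by
      ext j
      simp [Fin.exists_succ_eq]
    rw [h, Finset.prod_map]
    rfl
  -- C1: the weight function integrates to 1
  obtain ⟨hWint', hWval'⟩ := hTransfer p hpInt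
  have hWint : Integrable (fun z : X × (Fin (L + 1) → M) =>
      p (z.1, z.2 0) * ∏ ℓ ∈ Finset.univ.erase (0 : Fin (L + 1)), pM (z.2 ℓ)) (μ.prod π) := by
    simpa only [herase] using hWint'
  have hWval : ∫ z : X × (Fin (L + 1) → M),
      p (z.1, z.2 0) * ∏ ℓ ∈ Finset.univ.erase (0 : Fin (L + 1)), pM (z.2 ℓ) ∂(μ.prod π) = 1 := by
    simp only [herase]
    rw [hWval', hp1]
  -- C4: the weighted log-ratio integrates to I(p)
  obtain ⟨hWRint', hWRval'⟩ :=
    hTransfer (fun y : X × M => p y * Real.log (p y / (pX y.1 * pM y.2))) hIint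
  have hWReq : (fun z : X × (Fin (L + 1) → M) =>
        p (z.1, z.2 0) * (∏ ℓ ∈ Finset.univ.erase (0 : Fin (L + 1)), pM (z.2 ℓ)) *
          Real.log (p (z.1, z.2 0) / (pX z.1 * pM (z.2 0))))
      = fun z : X × (Fin (L + 1) → M) =>
          (p (z.1, z.2 0) * Real.log (p (z.1, z.2 0) / (pX z.1 * pM (z.2 0)))) *
            ∏ j : Fin L, pM (z.2 j.succ) := by
    funext z
    rw [herase]
    ring
  have hWRint : Integrable (fun z : X × (Fin (L + 1) → M) =>
      p (z.1, z.2 0) * (∏ ℓ ∈ Finset.univ.erase (0 : Fin (L + 1)), pM (z.2 ℓ)) *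
        Real.log (p (z.1, z.2 0) / (pX z.1 * pM (z.2 0)))) (μ.prod π) := by
    rw [hWReq]; exact hWRint'
  have hWRval : ∫ z : X × (Fin (L + 1) → M),
      p (z.1, z.2 0) * (∏ ℓ ∈ Finset.univ.erase (0 : Fin (L + 1)), pM (z.2 ℓ)) *
        Real.log (p (z.1, z.2 0) / (pX z.1 * pM (z.2 0))) ∂(μ.prod π)
      = ∫ y, p y * Real.log (p y / (pX y.1 * pM y.2)) ∂(μ.prod ν) := by
    rw [hWReq]; exact hWRval'
  -- facts about the critic ratio
  have hSpos : ∀ (x : X) (ms : Fin (L + 1) → M), 0 < ∑ ℓ, Real.exp (U (x, ms ℓ)) := fun x ms =>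
    Finset.sum_pos (fun ℓ _ => Real.exp_pos _) Finset.univ_nonempty
  have hfracnn : ∀ (x : X) (ms : Fin (L + 1) → M) (j : Fin (L + 1)),
      0 ≤ Real.exp (U (x, ms j)) / ((1 / ((L : ℝ) + 1)) * ∑ ℓ, Real.exp (U (x, ms ℓ))) :=
    fun x ms j => div_nonneg (Real.exp_pos _).le
      (mul_nonneg (by positivity) (hSpos x ms).le)
  have hfracle : ∀ (x : X) (ms : Fin (L + 1) → M) (j : Fin (L + 1)),
      Real.exp (U (x, ms j)) / ((1 / ((L : ℝ) + 1)) * ∑ ℓ, Real.exp (U (x, ms ℓ)))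
        ≤ (L : ℝ) + 1 := by
    intro x ms j
    rw [div_le_iff₀ (mul_pos (by positivity) (hSpos x ms))]
    calc Real.exp (U (x, ms j)) ≤ ∑ ℓ, Real.exp (U (x, ms ℓ)) :=
          Finset.single_le_sum (fun ℓ _ => (Real.exp_pos (U (x, ms ℓ))).le) (Finset.mem_univ j)
      _ = ((L : ℝ) + 1) * ((1 / ((L : ℝ) + 1)) * ∑ ℓ, Real.exp (U (x, ms ℓ))) := by
          field_simp
  -- integrability of the per-slice contrastive integrand, and its symmetry
  have hDint : ∀ (x : X) (j : Fin (L + 1)), Integrable (fun ms : Fin (L + 1) → M =>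
      (∏ ℓ, pM (ms ℓ)) *
        (Real.exp (U (x, ms j)) / ((1 / ((L : ℝ) + 1)) * ∑ ℓ, Real.exp (U (x, ms ℓ))))) π := by
    intro x j
    refine Integrable.mono (hfullInt.const_mul ((L : ℝ) + 1))
      (Measurable.aestronglyMeasurable ?_) (Eventually.of_forall fun ms => ?_)
    · exact (Finset.measurable_prod _ fun ℓ _ => mpM.comp (measurable_pi_apply ℓ)).mul
        ((Real.measurable_exp.comp (hU.comp (measurable_const.prodMk (measurable_pi_apply j)))).div
          (measurable_const.mul (Finset.measurable_sum _ fun ℓ _ =>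
            Real.measurable_exp.comp (hU.comp (measurable_const.prodMk (measurable_pi_apply ℓ))))))
    · have hnn : 0 ≤ ∏ ℓ, pM (ms ℓ) := Finset.prod_nonneg fun ℓ _ => hpMnn _
      rw [Real.norm_eq_abs, Real.norm_eq_abs,
        abs_of_nonneg (mul_nonneg hnn (hfracnn x ms j)),
        abs_of_nonneg (mul_nonneg hKpos.le hnn)]
      calc (∏ ℓ, pM (ms ℓ)) *
            (Real.exp (U (x, ms j)) / ((1 / ((L : ℝ) + 1)) * ∑ ℓ, Real.exp (U (x, ms ℓ))))
          ≤ (∏ ℓ, pM (ms ℓ)) * ((L : ℝ) + 1) :=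
            mul_le_mul_of_nonneg_left (hfracle x ms j) hnn
        _ = ((L : ℝ) + 1) * ∏ ℓ, pM (ms ℓ) := mul_comm _ _
  have hDswap : ∀ (x : X) (j : Fin (L + 1)),
      (∫ ms, (∏ ℓ, pM (ms ℓ)) *
        (Real.exp (U (x, ms j)) / ((1 / ((L : ℝ) + 1)) * ∑ ℓ, Real.exp (U (x, ms ℓ)))) ∂π)
      = ∫ ms, (∏ ℓ, pM (ms ℓ)) *
        (Real.exp (U (x, ms 0)) / ((1 / ((L : ℝ) + 1)) * ∑ ℓ, Real.exp (U (x, ms ℓ)))) ∂π := by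
    intro x j
    have hmp : MeasurePreserving
        (⇑(MeasurableEquiv.piCongrLeft (fun _ : Fin (L + 1) => M) (Equiv.swap (0 : Fin (L + 1)) j)))
        π π :=
      measurePreserving_piCongrLeft (fun _ : Fin (L + 1) => ν) (Equiv.swap (0 : Fin (L + 1)) j)
    have happ : ∀ (f : Fin (L + 1) → M) (i : Fin (L + 1)),
        (MeasurableEquiv.piCongrLeft (fun _ : Fin (L + 1) => M)
          (Equiv.swap (0 : Fin (L + 1)) j)) f i = f (Equiv.swap (0 : Fin (L + 1)) j i) := by
      intro f i
      have h := MeasurableEquiv.piCongrLeft_apply_apply (β := fun _ : Fin (L + 1) => M)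
        (Equiv.swap (0 : Fin (L + 1)) j) f (Equiv.swap (0 : Fin (L + 1)) j i)
      rwa [Equiv.swap_apply_self] at h
    have hint := hmp.integral_comp' (g := fun ms : Fin (L + 1) → M =>
      (∏ ℓ, pM (ms ℓ)) *
        (Real.exp (U (x, ms 0)) / ((1 / ((L : ℝ) + 1)) * ∑ ℓ, Real.exp (U (x, ms ℓ)))))
    rw [← hint]
    refine integral_congr_ae (Eventually.of_forall fun f => ?_)
    simp only [happ]
    rw [Equiv.prod_comp (Equiv.swap (0 : Fin (L + 1)) j) (fun ℓ => pM (f ℓ)),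
      Equiv.sum_comp (Equiv.swap (0 : Fin (L + 1)) j) (fun ℓ => Real.exp (U (x, f ℓ))),
      Equiv.swap_apply_left]
  have hDzero : ∀ x : X,
      (∫ ms, (∏ ℓ, pM (ms ℓ)) *
        (Real.exp (U (x, ms 0)) / ((1 / ((L : ℝ) + 1)) * ∑ ℓ, Real.exp (U (x, ms ℓ)))) ∂π)
      = 1 := by
    intro x
    have hsum : (∑ j : Fin (L + 1), ∫ ms, (∏ ℓ, pM (ms ℓ)) *
        (Real.exp (U (x, ms j)) / ((1 / ((L : ℝ) + 1)) * ∑ ℓ, Real.exp (U (x, ms ℓ)))) ∂π)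
        = (L : ℝ) + 1 := by
      rw [← integral_finset_sum _ fun j _ => hDint x j]
      have hpt : ∀ ms : Fin (L + 1) → M,
          (∑ j : Fin (L + 1), (∏ ℓ, pM (ms ℓ)) *
            (Real.exp (U (x, ms j)) / ((1 / ((L : ℝ) + 1)) * ∑ ℓ, Real.exp (U (x, ms ℓ)))))
          = ((L : ℝ) + 1) * ∏ ℓ, pM (ms ℓ) := by
        intro ms
        rw [← Finset.mul_sum, ← Finset.sum_div]
        have hS := (hSpos x ms).ne'
        field_simp
      simp_rw [hpt]
      rw [integral_const_mul, hfullVal, mul_one]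
    have heq : (∑ j : Fin (L + 1), ∫ ms, (∏ ℓ, pM (ms ℓ)) *
        (Real.exp (U (x, ms j)) / ((1 / ((L : ℝ) + 1)) * ∑ ℓ, Real.exp (U (x, ms ℓ)))) ∂π)
        = ((L : ℝ) + 1) * ∫ ms, (∏ ℓ, pM (ms ℓ)) *
            (Real.exp (U (x, ms 0)) / ((1 / ((L : ℝ) + 1)) * ∑ ℓ, Real.exp (U (x, ms ℓ)))) ∂π := by
      rw [Finset.sum_congr rfl fun j _ => hDswap x j, Finset.sum_const, Finset.card_univ,
        Fintype.card_fin, nsmul_eq_mul]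
      push_cast
      ring
    rw [heq] at hsum
    have h1 : ((L : ℝ) + 1) * (∫ ms, (∏ ℓ, pM (ms ℓ)) *
        (Real.exp (U (x, ms 0)) / ((1 / ((L : ℝ) + 1)) * ∑ ℓ, Real.exp (U (x, ms ℓ)))) ∂π)
        = ((L : ℝ) + 1) * 1 := by rw [mul_one]; exact hsum
    exact mul_left_cancel₀ hKpos.ne' h1
  -- C2: the full-product critic term integrates to 1
  have mfrac : Measurable (fun z : X × (Fin (L + 1) → M) =>
      Real.exp (U (z.1, z.2 0)) / ((1 / ((L : ℝ) + 1)) * ∑ ℓ, Real.exp (U (z.1, z.2 ℓ)))) :=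
    (Real.measurable_exp.comp (hU.comp
        (measurable_fst.prodMk ((measurable_pi_apply 0).comp measurable_snd)))).div
      (measurable_const.mul (Finset.measurable_sum _ fun ℓ _ =>
        Real.measurable_exp.comp (hU.comp
          (measurable_fst.prodMk ((measurable_pi_apply ℓ).comp measurable_snd)))))
  have hQint : Integrable (fun z : X × (Fin (L + 1) → M) => pX z.1 * ∏ ℓ, pM (z.2 ℓ))
      (μ.prod π) := hpXint.mul_prod hfullInt
  have hQGint : Integrable (fun z : X × (Fin (L + 1) → M) =>
      (pX z.1 * ∏ ℓ, pM (z.2 ℓ)) *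
        (Real.exp (U (z.1, z.2 0)) / ((1 / ((L : ℝ) + 1)) * ∑ ℓ, Real.exp (U (z.1, z.2 ℓ)))))
      (μ.prod π) := by
    refine Integrable.mono (hQint.const_mul ((L : ℝ) + 1))
      (Measurable.aestronglyMeasurable ?_) (Eventually.of_forall fun z => ?_)
    · exact ((mpX.comp measurable_fst).mul (Finset.measurable_prod _ fun ℓ _ =>
        mpM.comp ((measurable_pi_apply ℓ).comp measurable_snd))).mul mfrac
    · have hnn : 0 ≤ pX z.1 * ∏ ℓ, pM (z.2 ℓ) :=
        mul_nonneg (hpXnn _) (Finset.prod_nonneg fun ℓ _ => hpMnn _)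
      rw [Real.norm_eq_abs, Real.norm_eq_abs,
        abs_of_nonneg (mul_nonneg hnn (hfracnn z.1 z.2 0)),
        abs_of_nonneg (mul_nonneg hKpos.le hnn)]
      calc (pX z.1 * ∏ ℓ, pM (z.2 ℓ)) *
            (Real.exp (U (z.1, z.2 0)) / ((1 / ((L : ℝ) + 1)) * ∑ ℓ, Real.exp (U (z.1, z.2 ℓ))))
          ≤ (pX z.1 * ∏ ℓ, pM (z.2 ℓ)) * ((L : ℝ) + 1) :=
            mul_le_mul_of_nonneg_left (hfracle z.1 z.2 0) hnn
        _ = ((L : ℝ) + 1) * (pX z.1 * ∏ ℓ, pM (z.2 ℓ)) := mul_comm _ _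
  have hQGval : ∫ z : X × (Fin (L + 1) → M),
      (pX z.1 * ∏ ℓ, pM (z.2 ℓ)) *
        (Real.exp (U (z.1, z.2 0)) / ((1 / ((L : ℝ) + 1)) * ∑ ℓ, Real.exp (U (z.1, z.2 ℓ))))
      ∂(μ.prod π) = 1 := by
    rw [integral_prod _ hQGint]
    refine Eq.trans (integral_congr_ae (Eventually.of_forall fun x => ?_)) hIpX
    have heq : (fun ms : Fin (L + 1) → M =>
        (pX x * ∏ ℓ, pM (ms ℓ)) *
          (Real.exp (U (x, ms 0)) / ((1 / ((L : ℝ) + 1)) * ∑ ℓ, Real.exp (U (x, ms ℓ)))))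
        = fun ms : Fin (L + 1) → M => pX x * ((∏ ℓ, pM (ms ℓ)) *
            (Real.exp (U (x, ms 0)) / ((1 / ((L : ℝ) + 1)) * ∑ ℓ, Real.exp (U (x, ms ℓ))))) := by
      funext ms
      ring
    show (∫ ms, (pX x * ∏ ℓ, pM (ms ℓ)) *
        (Real.exp (U (x, ms 0)) / ((1 / ((L : ℝ) + 1)) * ∑ ℓ, Real.exp (U (x, ms ℓ)))) ∂π) = pX x
    rw [heq, integral_const_mul, hDzero x, mul_one]
  -- pointwise a.e. inequality
  have key : ∀ᵐ z ∂(μ.prod π),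
      p (z.1, z.2 0) * (∏ ℓ ∈ Finset.univ.erase (0 : Fin (L + 1)), pM (z.2 ℓ)) *
          Real.log (Real.exp (U (z.1, z.2 0)) /
            ((1 / ((L : ℝ) + 1)) * ∑ ℓ, Real.exp (U (z.1, z.2 ℓ))))
        + (p (z.1, z.2 0) * (∏ ℓ ∈ Finset.univ.erase (0 : Fin (L + 1)), pM (z.2 ℓ))
            - (pX z.1 * ∏ ℓ, pM (z.2 ℓ)) *
              (Real.exp (U (z.1, z.2 0)) / ((1 / ((L : ℝ) + 1)) * ∑ ℓ, Real.exp (U (z.1, z.2 ℓ)))))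
      ≤ p (z.1, z.2 0) * (∏ ℓ ∈ Finset.univ.erase (0 : Fin (L + 1)), pM (z.2 ℓ)) *
          Real.log (p (z.1, z.2 0) / (pX z.1 * pM (z.2 0))) := by
    filter_upwards [E1, E2, E3] with z h1 h2 h3
    have hW0 : 0 ≤ p (z.1, z.2 0) * ∏ ℓ ∈ Finset.univ.erase (0 : Fin (L + 1)), pM (z.2 ℓ) :=
      mul_nonneg (hp0 _) (Finset.prod_nonneg fun ℓ _ => hpMnn _)
    have hR : 0 < p (z.1, z.2 0) / (pX z.1 * pM (z.2 0)) :=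
      div_pos h1 (mul_pos h2 (h3 0))
    have hG : 0 < Real.exp (U (z.1, z.2 0)) /
        ((1 / ((L : ℝ) + 1)) * ∑ ℓ, Real.exp (U (z.1, z.2 ℓ))) :=
      div_pos (Real.exp_pos _) (mul_pos (by positivity) (hSpos z.1 z.2))
    -- the G/R identity
    have hQGeq : (pX z.1 * ∏ ℓ, pM (z.2 ℓ)) *
        (Real.exp (U (z.1, z.2 0)) / ((1 / ((L : ℝ) + 1)) * ∑ ℓ, Real.exp (U (z.1, z.2 ℓ))))
        = (p (z.1, z.2 0) * ∏ ℓ ∈ Finset.univ.erase (0 : Fin (L + 1)), pM (z.2 ℓ)) *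
          ((Real.exp (U (z.1, z.2 0)) / ((1 / ((L : ℝ) + 1)) * ∑ ℓ, Real.exp (U (z.1, z.2 ℓ))))
            / (p (z.1, z.2 0) / (pX z.1 * pM (z.2 0)))) := by
      rw [← Finset.mul_prod_erase Finset.univ (fun ℓ => pM (z.2 ℓ)) (Finset.mem_univ 0)]
      have hS := (hSpos z.1 z.2).ne'
      have h1' := h1.ne'
      have h2' := h2.ne'
      have h30 := (h3 0).ne'
      field_simp
    have hlog : 1 - (Real.exp (U (z.1, z.2 0)) /
          ((1 / ((L : ℝ) + 1)) * ∑ ℓ, Real.exp (U (z.1, z.2 ℓ))))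
            / (p (z.1, z.2 0) / (pX z.1 * pM (z.2 0)))
        ≤ Real.log (p (z.1, z.2 0) / (pX z.1 * pM (z.2 0)))
          - Real.log (Real.exp (U (z.1, z.2 0)) /
              ((1 / ((L : ℝ) + 1)) * ∑ ℓ, Real.exp (U (z.1, z.2 ℓ)))) := by
      have h := Real.log_le_sub_one_of_pos (div_pos hG hR)
      rw [Real.log_div hG.ne' hR.ne'] at h
      linarith
    have hmul := mul_le_mul_of_nonneg_left hlog hW0
    rw [hQGeq]
    nlinarith [hmul]
  -- final assembly
  have hBC : Integrable (fun z : X × (Fin (L + 1) → M) =>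
      p (z.1, z.2 0) * (∏ ℓ ∈ Finset.univ.erase (0 : Fin (L + 1)), pM (z.2 ℓ))
        - (pX z.1 * ∏ ℓ, pM (z.2 ℓ)) *
          (Real.exp (U (z.1, z.2 0)) / ((1 / ((L : ℝ) + 1)) * ∑ ℓ, Real.exp (U (z.1, z.2 ℓ)))))
      (μ.prod π) := hWint.sub hQGint
  have hABC : Integrable (fun z : X × (Fin (L + 1) → M) =>
      p (z.1, z.2 0) * (∏ ℓ ∈ Finset.univ.erase (0 : Fin (L + 1)), pM (z.2 ℓ)) *
          Real.log (Real.exp (U (z.1, z.2 0)) /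
            ((1 / ((L : ℝ) + 1)) * ∑ ℓ, Real.exp (U (z.1, z.2 ℓ))))
        + (p (z.1, z.2 0) * (∏ ℓ ∈ Finset.univ.erase (0 : Fin (L + 1)), pM (z.2 ℓ))
            - (pX z.1 * ∏ ℓ, pM (z.2 ℓ)) *
              (Real.exp (U (z.1, z.2 0)) /
                ((1 / ((L : ℝ) + 1)) * ∑ ℓ, Real.exp (U (z.1, z.2 ℓ))))))
      (μ.prod π) := hℒint.add hBC
  have hsum := integral_mono_ae hABC hWRint key
  have h1 : ∫ z : X × (Fin (L + 1) → M),
      (p (z.1, z.2 0) * (∏ ℓ ∈ Finset.univ.erase (0 : Fin (L + 1)), pM (z.2 ℓ)) *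
          Real.log (Real.exp (U (z.1, z.2 0)) /
            ((1 / ((L : ℝ) + 1)) * ∑ ℓ, Real.exp (U (z.1, z.2 ℓ))))
        + (p (z.1, z.2 0) * (∏ ℓ ∈ Finset.univ.erase (0 : Fin (L + 1)), pM (z.2 ℓ))
            - (pX z.1 * ∏ ℓ, pM (z.2 ℓ)) *
              (Real.exp (U (z.1, z.2 0)) /
                ((1 / ((L : ℝ) + 1)) * ∑ ℓ, Real.exp (U (z.1, z.2 ℓ)))))) ∂(μ.prod π)
      = (∫ z : X × (Fin (L + 1) → M),
          p (z.1, z.2 0) * (∏ ℓ ∈ Finset.univ.erase (0 : Fin (L + 1)), pM (z.2 ℓ)) *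
            Real.log (Real.exp (U (z.1, z.2 0)) /
              ((1 / ((L : ℝ) + 1)) * ∑ ℓ, Real.exp (U (z.1, z.2 ℓ)))) ∂(μ.prod π))
        + ∫ z : X × (Fin (L + 1) → M),
            (p (z.1, z.2 0) * (∏ ℓ ∈ Finset.univ.erase (0 : Fin (L + 1)), pM (z.2 ℓ))
              - (pX z.1 * ∏ ℓ, pM (z.2 ℓ)) *
                (Real.exp (U (z.1, z.2 0)) /
                  ((1 / ((L : ℝ) + 1)) * ∑ ℓ, Real.exp (U (z.1, z.2 ℓ))))) ∂(μ.prod π) :=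
    integral_add hℒint hBC
  have h2 : ∫ z : X × (Fin (L + 1) → M),
      (p (z.1, z.2 0) * (∏ ℓ ∈ Finset.univ.erase (0 : Fin (L + 1)), pM (z.2 ℓ))
        - (pX z.1 * ∏ ℓ, pM (z.2 ℓ)) *
          (Real.exp (U (z.1, z.2 0)) /
            ((1 / ((L : ℝ) + 1)) * ∑ ℓ, Real.exp (U (z.1, z.2 ℓ))))) ∂(μ.prod π)
      = (∫ z : X × (Fin (L + 1) → M),
          p (z.1, z.2 0) * (∏ ℓ ∈ Finset.univ.erase (0 : Fin (L + 1)), pM (z.2 ℓ)) ∂(μ.prod π))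
        - ∫ z : X × (Fin (L + 1) → M),
            (pX z.1 * ∏ ℓ, pM (z.2 ℓ)) *
              (Real.exp (U (z.1, z.2 0)) /
                ((1 / ((L : ℝ) + 1)) * ∑ ℓ, Real.exp (U (z.1, z.2 ℓ)))) ∂(μ.prod π) :=
    integral_sub hWint hQGint
  rw [h1, h2, hWval, hQGval, hWRval] at hsum
  linarith
end

section
/- Let (X, 𝒜, μ) and (M, ℬ, ν) be σ-finite measure spaces and let p : X × M → [0, ∞) be measurable with ∫∫ p d(μ ⊗ ν) = 1. Define the marginals p_X(x) = ∫ p(x, m) dν(m) and p_M(m) = ∫ p(x, m) dμ(x), assume p, p_X, p_M are positive and finite a.e., and define the density ratio k(x, m) = p(x, m) / (p_X(x) p_M(m)). Assume there exist constants 0 < c₁ ≤ c₂ < ∞ with c₁ ≤ k(x, m) ≤ c₂ for (μ ⊗ ν)-a.e. (x, m). For each integer L ≥ 1 define ℒ*(L) = ∫_{X × M^{L+1}} p(x, m₀) (∏_{ℓ=1}^{L} p_M(m_ℓ)) · log( k(x, m₀) / ((1/(L+1)) ∑_{ℓ=0}^{L} k(x, m_ℓ)) ) d(μ ⊗ ν^{⊗(L+1)}).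 Then the sequence L ↦ ℒ*(L) is nondecreasing: ℒ*(L) ≤ ℒ*(L+1) for all L ≥ 1. -/
open MeasureTheory

open Finset

namespace Stmt6Aux

variable {X M : Type*} [MeasurableSpace X] [MeasurableSpace M]


lemma ae_comp_of_null_preimage {α β : Type*} [MeasurableSpace α] [MeasurableSpace β]
    {μa : Measure α} {μb : Measure β} {f : α → β}
    (h0 : ∀ s : Set β, MeasurableSet s → μb s = 0 → μa (f ⁻¹' s) = 0)
    {P : β → Prop} (hP : ∀ᵐ y ∂μb, P y) : ∀ᵐ x ∂μa, P (f x) := by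
  rw [ae_iff] at hP ⊢
  obtain ⟨t, hsub, htm, ht0⟩ := exists_measurable_superset_of_null hP
  exact measure_mono_null (fun x hx => hsub hx) (h0 t htm ht0)

lemma ae_fst {μ : Measure X} {ν : Measure M} [SFinite μ] [SFinite ν] {P : X → Prop}
    (hP : ∀ᵐ x ∂μ, P x) : ∀ᵐ z ∂μ.prod ν, P z.1 := by
  refine ae_comp_of_null_preimage (fun s hs h0 => ?_) hP
  have h1 : (Prod.fst ⁻¹' s : Set (X × M)) = s ×ˢ Set.univ := (Set.prod_univ).symm
  rw [h1, Measure.prod_prod, h0, zero_mul]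

lemma ae_snd {μ : Measure X} {ν : Measure M} [SFinite μ] [SFinite ν] {P : M → Prop}
    (hP : ∀ᵐ a ∂ν, P a) : ∀ᵐ z ∂μ.prod ν, P z.2 := by
  refine ae_comp_of_null_preimage (fun s hs h0 => ?_) hP
  have h1 : (Prod.snd ⁻¹' s : Set (X × M)) = Set.univ ×ˢ s := (Set.univ_prod).symm
  rw [h1, Measure.prod_prod, h0, mul_zero]

lemma ae_coord {μ : Measure X} {ν : Measure M} [SigmaFinite μ] [SigmaFinite ν]
    {n : ℕ} (ℓ : Fin n) {P : X × M → Prop} (hP : ∀ᵐ z ∂μ.prod ν, P z) :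
    ∀ᵐ z ∂μ.prod (Measure.pi fun _ : Fin n => ν), P (z.1, z.2 ℓ) := by
  refine ae_comp_of_null_preimage
    (f := fun z : X × (Fin n → M) => (z.1, z.2 ℓ)) (fun s hs h0 => ?_) hP
  have hmeas : Measurable fun z : X × (Fin n → M) => (z.1, z.2 ℓ) :=
    measurable_fst.prodMk ((measurable_pi_apply ℓ).comp measurable_snd)
  rw [Measure.prod_apply (hmeas hs)]
  have h0' := (Measure.measure_prod_null hs).1 h0
  have hz : ∀ᵐ x ∂μ,
      (Measure.pi fun _ : Fin n => ν)
        (Prod.mk x ⁻¹' ((fun z : X × (Fin n → M) => (z.1, z.2 ℓ)) ⁻¹' s)) = 0 := by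
    filter_upwards [h0'] with x hx
    show (Measure.pi fun _ : Fin n => ν) (Function.eval ℓ ⁻¹' (Prod.mk x ⁻¹' s)) = 0
    exact Measure.pi_eval_preimage_null (fun _ => ν) hx
  rw [lintegral_congr_ae hz, lintegral_zero]

/-- split off the last coordinate -/
def lastEquiv (X M : Type*) [MeasurableSpace X] [MeasurableSpace M] (n : ℕ) :
    (X × (Fin (n+1) → M)) ≃ᵐ ((X × (Fin n → M)) × M) :=
  ((MeasurableEquiv.refl X).prodCongr
      (MeasurableEquiv.piFinSuccAbove (fun _ : Fin (n+1) => M) (Fin.last n))).trans <|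
    ((MeasurableEquiv.refl X).prodCongr (MeasurableEquiv.prodComm (α := M) (β := Fin n → M))).trans
      (MeasurableEquiv.prodAssoc).symm

lemma lastEquiv_apply (n : ℕ) (z : X × (Fin (n+1) → M)) :
    lastEquiv X M n z = ((z.1, fun i => z.2 i.castSucc), z.2 (Fin.last n)) := by
  have h1 : (fun j : Fin n => z.2 ((Fin.last n).succAbove j)) = fun i => z.2 i.castSucc := by
    funext j; rw [Fin.succAbove_last]
  show ((z.1, fun j : Fin n => z.2 ((Fin.last n).succAbove j)), z.2 (Fin.last n)) = _
  rw [h1]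

lemma lastEquiv_mp (μ : Measure X) (ν : Measure M) [SigmaFinite μ] [SigmaFinite ν] (n : ℕ) :
    MeasurePreserving (lastEquiv X M n) (μ.prod (Measure.pi fun _ : Fin (n+1) => ν))
      ((μ.prod (Measure.pi fun _ : Fin n => ν)).prod ν) := by
  have h1 : MeasurePreserving
      ((MeasurableEquiv.refl X).prodCongr
        (MeasurableEquiv.piFinSuccAbove (fun _ : Fin (n+1) => M) (Fin.last n)))
      (μ.prod (Measure.pi fun _ : Fin (n+1) => ν))
      (μ.prod (ν.prod (Measure.pi fun _ : Fin n => ν))) :=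
    (MeasurePreserving.id μ).prod (measurePreserving_piFinSuccAbove (fun _ => ν) (Fin.last n))
  have h2 : MeasurePreserving
      ((MeasurableEquiv.refl X).prodCongr (MeasurableEquiv.prodComm (α := M) (β := Fin n → M)))
      (μ.prod (ν.prod (Measure.pi fun _ : Fin n => ν)))
      (μ.prod ((Measure.pi fun _ : Fin n => ν).prod ν)) :=
    (MeasurePreserving.id μ).prod Measure.measurePreserving_swap
  have h3 : MeasurePreserving (MeasurableEquiv.prodAssoc).symm
      (μ.prod ((Measure.pi fun _ : Fin n => ν).prod ν))
      ((μ.prod (Measure.pi fun _ : Fin n => ν)).prod ν) :=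
    (measurePreserving_prodAssoc μ (Measure.pi fun _ : Fin n => ν) ν).symm
      MeasurableEquiv.prodAssoc
  exact (h3.comp h2).comp h1

lemma marg (μ : Measure X) (ν : Measure M) [SigmaFinite μ] [SigmaFinite ν]
    (pM : M → ℝ) (hpM1 : ∫ a, pM a ∂ν = 1) (n : ℕ) (f : X × (Fin n → M) → ℝ) :
    ∫ z : X × (Fin (n+1) → M), pM (z.2 (Fin.last n)) * f (z.1, fun i => z.2 i.castSucc)
        ∂(μ.prod (Measure.pi fun _ : Fin (n+1) => ν))
      = ∫ ω, f ω ∂(μ.prod (Measure.pi fun _ : Fin n => ν)) := by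
  have h := (lastEquiv_mp μ ν n).integral_comp'
      (fun y : (X × (Fin n → M)) × M => f y.1 * pM y.2)
  have h2 : (fun z : X × (Fin (n+1) → M) =>
        pM (z.2 (Fin.last n)) * f (z.1, fun i => z.2 i.castSucc))
      = fun z => f ((lastEquiv X M n) z).1 * pM ((lastEquiv X M n) z).2 := by
    funext z; rw [lastEquiv_apply]; exact (mul_comm _ _).symm
  rw [h2, h, integral_prod_mul f pM, hpM1, mul_one]

lemma perm_integral (μ : Measure X) (ν : Measure M) [SigmaFinite μ] [SigmaFinite ν]
    (n : ℕ) (e : Equiv.Perm (Fin n)) (f : X × (Fin n → M) → ℝ) :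
    ∫ z, f (z.1, z.2 ∘ e) ∂(μ.prod (Measure.pi fun _ : Fin n => ν))
      = ∫ z, f z ∂(μ.prod (Measure.pi fun _ : Fin n => ν)) := by
  have hpi : MeasurePreserving ((MeasurableEquiv.piCongrLeft (fun _ : Fin n => M) e).symm)
      (Measure.pi fun _ : Fin n => ν) (Measure.pi fun _ : Fin n => ν) :=
    (measurePreserving_piCongrLeft (fun _ : Fin n => ν) e).symm _
  have hmp : MeasurePreserving
      ((MeasurableEquiv.refl X).prodCongr
        (MeasurableEquiv.piCongrLeft (fun _ : Fin n => M) e).symm)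
      (μ.prod (Measure.pi fun _ : Fin n => ν)) (μ.prod (Measure.pi fun _ : Fin n => ν)) :=
    (MeasurePreserving.id μ).prod hpi
  have h := hmp.integral_comp' f
  rw [← h]
  rfl


lemma abs_log_le {c₁ c₂ t : ℝ} (hc₁ : 0 < c₁) (h1 : c₁ ≤ t) (h2 : t ≤ c₂) :
    |Real.log t| ≤ max |Real.log c₁| |Real.log c₂| := by
  have ht : 0 < t := lt_of_lt_of_le hc₁ h1
  rcases le_or_gt 0 (Real.log t) with h | h
  · rw [abs_of_nonneg h]
    exact le_max_of_le_right
      (le_trans ((Real.log_le_log_iff ht (ht.trans_le h2)).2 h2) (le_abs_self _))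
  · rw [abs_of_neg h]
    refine le_max_of_le_left ?_
    have hlog : Real.log c₁ ≤ Real.log t := (Real.log_le_log_iff hc₁ ht).2 h1
    calc -Real.log t ≤ -Real.log c₁ := neg_le_neg hlog
    _ ≤ |Real.log c₁| := neg_le_abs _

lemma mul_bdd_integrable {α : Type*} [MeasurableSpace α] {P : Measure α} {w b : α → ℝ}
    (hw : Integrable w P) (hw0 : ∀ z, 0 ≤ w z) (hbm : AEStronglyMeasurable b P)
    {C : ℝ} (hC : ∀ᵐ z ∂P, |b z| ≤ C) : Integrable (fun z => w z * b z) P := by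
  refine Integrable.mono' (hw.const_mul C) (hw.aestronglyMeasurable.mul hbm) ?_
  filter_upwards [hC] with z hz
  rw [Real.norm_eq_abs, abs_mul, abs_of_nonneg (hw0 z)]
  calc w z * |b z| ≤ w z * C := mul_le_mul_of_nonneg_left hz (hw0 z)
  _ = C * w z := mul_comm _ _

lemma avg_mem {ι : Type*} [DecidableEq ι] {s : Finset ι} {t : ι → ℝ} {c₁ c₂ : ℝ}
    (hs : 0 < ((s.card : ℕ) : ℝ))
    (h : ∀ i ∈ s, c₁ ≤ t i ∧ t i ≤ c₂) :
    c₁ ≤ ((s.card : ℕ) : ℝ)⁻¹ * ∑ i ∈ s, t i ∧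
      ((s.card : ℕ) : ℝ)⁻¹ * ∑ i ∈ s, t i ≤ c₂ := by
  have h1 : ((s.card : ℕ) : ℝ) * c₁ ≤ ∑ i ∈ s, t i := by
    have := Finset.card_nsmul_le_sum s t c₁ (fun i hi => (h i hi).1)
    simpa [nsmul_eq_mul] using this
  have h2 : ∑ i ∈ s, t i ≤ ((s.card : ℕ) : ℝ) * c₂ := by
    have := Finset.sum_le_card_nsmul s t c₂ (fun i hi => (h i hi).2)
    simpa [nsmul_eq_mul] using this
  constructor
  · have := mul_le_mul_of_nonneg_left h1 (inv_nonneg.mpr hs.le)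
    rwa [← mul_assoc, inv_mul_cancel₀ hs.ne', one_mul] at this
  · have := mul_le_mul_of_nonneg_left h2 (inv_nonneg.mpr hs.le)
    rwa [← mul_assoc, inv_mul_cancel₀ hs.ne', one_mul] at this

def oneEquiv (X M : Type*) [MeasurableSpace X] [MeasurableSpace M] :
    (X × (Fin 1 → M)) ≃ᵐ X × M :=
  (MeasurableEquiv.refl X).prodCongr (MeasurableEquiv.funUnique (Fin 1) M)

lemma oneEquiv_mp (μ : Measure X) (ν : Measure M) [SigmaFinite μ] [SigmaFinite ν] :
    MeasurePreserving (oneEquiv X M) (μ.prod (Measure.pi fun _ : Fin 1 => ν)) (μ.prod ν) :=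
  (MeasurePreserving.id μ).prod (measurePreserving_funUnique ν (Fin 1))

lemma weight_int (μ : Measure X) (ν : Measure M) [SigmaFinite μ] [SigmaFinite ν]
    (pX : X → ℝ) (pM : M → ℝ) (hpXi : Integrable pX μ) (hpMi : Integrable pM ν)
    (hpX1 : ∫ x, pX x ∂μ = 1) (hpM1 : ∫ a, pM a ∂ν = 1) :
    ∀ n : ℕ, Integrable (fun z : X × (Fin (n+1) → M) => pX z.1 * ∏ ℓ, pM (z.2 ℓ))
        (μ.prod (Measure.pi fun _ : Fin (n+1) => ν))
      ∧ ∫ z : X × (Fin (n+1) → M), pX z.1 * ∏ ℓ, pM (z.2 ℓ)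
          ∂(μ.prod (Measure.pi fun _ : Fin (n+1) => ν)) = 1 := by
  intro n
  induction n with
  | zero =>
    have hmp := oneEquiv_mp μ ν
    have hfun : (fun z : X × (Fin 1 → M) => pX z.1 * ∏ ℓ, pM (z.2 ℓ))
        = fun z => (fun y : X × M => pX y.1 * pM y.2) ((oneEquiv X M) z) := by
      funext z
      show pX z.1 * ∏ ℓ, pM (z.2 ℓ) = pX z.1 * pM (z.2 default)
      rw [Fin.prod_univ_one]
      exact congrArg _ (congrArg _ (congrArg _ (Subsingleton.elim _ _)))
    constructor
    · rw [hfun]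
      exact (hmp.integrable_comp_emb (oneEquiv X M).measurableEmbedding).2
        (hpXi.mul_prod hpMi)
    · rw [hfun, hmp.integral_comp' (fun y : X × M => pX y.1 * pM y.2)]
      rw [integral_prod_mul pX pM, hpX1, hpM1, mul_one]
  | succ n ih =>
    have hmp := lastEquiv_mp μ ν (n+1)
    have hfun : (fun z : X × (Fin (n+1+1) → M) => pX z.1 * ∏ ℓ, pM (z.2 ℓ))
        = fun z => (fun y : (X × (Fin (n+1) → M)) × M =>
            (pX y.1.1 * ∏ ℓ, pM (y.1.2 ℓ)) * pM y.2) ((lastEquiv X M (n+1)) z) := by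
      funext z
      rw [lastEquiv_apply]
      show pX z.1 * ∏ ℓ, pM (z.2 ℓ)
        = (pX z.1 * ∏ i : Fin (n+1), pM (z.2 i.castSucc)) * pM (z.2 (Fin.last (n+1)))
      rw [Fin.prod_univ_castSucc (f := fun ℓ : Fin (n+1+1) => pM (z.2 ℓ))]
      ring
    constructor
    · rw [hfun]
      exact (hmp.integrable_comp_emb (lastEquiv X M (n+1)).measurableEmbedding).2
        (ih.1.mul_prod hpMi)
    · rw [hfun, hmp.integral_comp' (fun y : (X × (Fin (n+1) → M)) × M =>
          (pX y.1.1 * ∏ ℓ, pM (y.1.2 ℓ)) * pM y.2)]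
      have h2 := integral_prod_mul (μ := μ.prod (Measure.pi fun _ : Fin (n+1) => ν)) (ν := ν)
        (fun ω : X × (Fin (n+1) → M) => pX ω.1 * ∏ ℓ, pM (ω.2 ℓ)) pM
      rw [ih.2, hpM1, mul_one] at h2
      exact h2

lemma step_split (μ : Measure X) (ν : Measure M) [SigmaFinite μ] [SigmaFinite ν]
    (pX : X → ℝ) (pM : M → ℝ) (k : X × M → ℝ)
    (hpMm : Measurable pM) (hkm : Measurable k)
    (hpX0 : ∀ x, 0 ≤ pX x) (hpM0 : ∀ a, 0 ≤ pM a)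
    (hpXi : Integrable pX μ) (hpMi : Integrable pM ν)
    (hpX1 : ∫ x, pX x ∂μ = 1) (hpM1 : ∫ a, pM a ∂ν = 1)
    {c₁ c₂ : ℝ} (hc₁ : 0 < c₁)
    (hkbd : ∀ᵐ z ∂(μ.prod ν), c₁ ≤ k z ∧ k z ≤ c₂) (n : ℕ) :
    ∫ z : X × (Fin (n+1) → M), (pX z.1 * ∏ ℓ, pM (z.2 ℓ)) *
        (k (z.1, z.2 0) * Real.log (k (z.1, z.2 0) / (((n:ℝ)+1)⁻¹ * ∑ ℓ, k (z.1, z.2 ℓ))))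
        ∂(μ.prod (Measure.pi fun _ : Fin (n+1) => ν))
    = (∫ z : X × (Fin (n+1) → M), (pX z.1 * ∏ ℓ, pM (z.2 ℓ)) *
        (k (z.1, z.2 0) * Real.log (k (z.1, z.2 0)))
        ∂(μ.prod (Measure.pi fun _ : Fin (n+1) => ν)))
    - ∫ z : X × (Fin (n+1) → M), (pX z.1 * ∏ ℓ, pM (z.2 ℓ)) *
        ((((n:ℝ)+1)⁻¹ * ∑ ℓ, k (z.1, z.2 ℓ)) *
          Real.log (((n:ℝ)+1)⁻¹ * ∑ ℓ, k (z.1, z.2 ℓ)))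
        ∂(μ.prod (Measure.pi fun _ : Fin (n+1) => ν)) := by
  have hwint := (weight_int μ ν pX pM hpXi hpMi hpX1 hpM1 n).1
  have hw0 : ∀ z : X × (Fin (n+1) → M), 0 ≤ pX z.1 * ∏ ℓ, pM (z.2 ℓ) :=
    fun z => mul_nonneg (hpX0 _) (Finset.prod_nonneg fun _ _ => hpM0 _)
  have hkℓ : ∀ ℓ : Fin (n+1), Measurable (fun z : X × (Fin (n+1) → M) => k (z.1, z.2 ℓ)) :=
    fun ℓ => hkm.comp (measurable_fst.prodMk ((measurable_pi_apply ℓ).comp measurable_snd))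
  have hSm : Measurable (fun z : X × (Fin (n+1) → M) => ∑ ℓ, k (z.1, z.2 ℓ)) :=
    Finset.measurable_sum _ (fun ℓ _ => hkℓ ℓ)
  have hAm : Measurable (fun z : X × (Fin (n+1) → M) =>
      ((n:ℝ)+1)⁻¹ * ∑ ℓ, k (z.1, z.2 ℓ)) := measurable_const.mul hSm
  have hae : ∀ᵐ z ∂(μ.prod (Measure.pi fun _ : Fin (n+1) => ν)),
      ∀ ℓ, c₁ ≤ k (z.1, z.2 ℓ) ∧ k (z.1, z.2 ℓ) ≤ c₂ :=
    ae_all_iff.2 fun ℓ => ae_coord ℓ hkbd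
  have hcard : (((Finset.univ : Finset (Fin (n+1))).card : ℕ) : ℝ) = (n:ℝ)+1 := by
    rw [Finset.card_univ, Fintype.card_fin]; push_cast; ring
  have hAbd : ∀ᵐ z ∂(μ.prod (Measure.pi fun _ : Fin (n+1) => ν)),
      c₁ ≤ ((n:ℝ)+1)⁻¹ * ∑ ℓ, k (z.1, z.2 ℓ) ∧
        ((n:ℝ)+1)⁻¹ * ∑ ℓ, k (z.1, z.2 ℓ) ≤ c₂ := by
    filter_upwards [hae] with z hz
    have h := avg_mem (s := (Finset.univ : Finset (Fin (n+1))))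
      (t := fun ℓ => k (z.1, z.2 ℓ)) (by rw [hcard]; positivity) (fun i _ => hz i)
    rwa [hcard] at h
  have hbk : ∀ᵐ z ∂(μ.prod (Measure.pi fun _ : Fin (n+1) => ν)),
      |k (z.1, z.2 0) * Real.log (k (z.1, z.2 0))|
        ≤ c₂ * max |Real.log c₁| |Real.log c₂| := by
    filter_upwards [hae] with z hz
    have hj := hz 0
    rw [abs_mul]
    refine mul_le_mul ?_ (abs_log_le hc₁ hj.1 hj.2) (abs_nonneg _)
      (le_trans hc₁.le (hj.1.trans hj.2))
    rw [abs_of_nonneg (le_trans hc₁.le hj.1)]; exact hj.2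
  have hI1 : Integrable (fun z : X × (Fin (n+1) → M) =>
      (pX z.1 * ∏ ℓ, pM (z.2 ℓ)) * (k (z.1, z.2 0) * Real.log (k (z.1, z.2 0))))
      (μ.prod (Measure.pi fun _ : Fin (n+1) => ν)) :=
    mul_bdd_integrable hwint hw0
      ((hkℓ 0).mul (Real.measurable_log.comp (hkℓ 0))).aestronglyMeasurable hbk
  have hbkA : ∀ j : Fin (n+1), ∀ᵐ z ∂(μ.prod (Measure.pi fun _ : Fin (n+1) => ν)),
      |k (z.1, z.2 j) * Real.log (((n:ℝ)+1)⁻¹ * ∑ ℓ, k (z.1, z.2 ℓ))|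
        ≤ c₂ * max |Real.log c₁| |Real.log c₂| := by
    intro j
    filter_upwards [hae, hAbd] with z hz hA
    have hj := hz j
    rw [abs_mul]
    refine mul_le_mul ?_ (abs_log_le hc₁ hA.1 hA.2) (abs_nonneg _)
      (le_trans hc₁.le (hj.1.trans hj.2))
    rw [abs_of_nonneg (le_trans hc₁.le hj.1)]; exact hj.2
  have hI2 : ∀ j : Fin (n+1), Integrable (fun z : X × (Fin (n+1) → M) =>
      (pX z.1 * ∏ ℓ, pM (z.2 ℓ)) *
        (k (z.1, z.2 j) * Real.log (((n:ℝ)+1)⁻¹ * ∑ ℓ, k (z.1, z.2 ℓ))))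
      (μ.prod (Measure.pi fun _ : Fin (n+1) => ν)) :=
    fun j => mul_bdd_integrable hwint hw0
      ((hkℓ j).mul (Real.measurable_log.comp hAm)).aestronglyMeasurable (hbkA j)
  have hsplit : ∫ z : X × (Fin (n+1) → M), (pX z.1 * ∏ ℓ, pM (z.2 ℓ)) *
        (k (z.1, z.2 0) * Real.log (k (z.1, z.2 0) / (((n:ℝ)+1)⁻¹ * ∑ ℓ, k (z.1, z.2 ℓ))))
        ∂(μ.prod (Measure.pi fun _ : Fin (n+1) => ν))
      = ∫ z : X × (Fin (n+1) → M),
          ((pX z.1 * ∏ ℓ, pM (z.2 ℓ)) * (k (z.1, z.2 0) * Real.log (k (z.1, z.2 0)))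
          - (pX z.1 * ∏ ℓ, pM (z.2 ℓ)) *
              (k (z.1, z.2 0) * Real.log (((n:ℝ)+1)⁻¹ * ∑ ℓ, k (z.1, z.2 ℓ))))
          ∂(μ.prod (Measure.pi fun _ : Fin (n+1) => ν)) := by
    apply integral_congr_ae
    filter_upwards [hae, hAbd] with z hz hA
    have hk0 : (0:ℝ) < k (z.1, z.2 0) := lt_of_lt_of_le hc₁ (hz 0).1
    have hA0 : (0:ℝ) < ((n:ℝ)+1)⁻¹ * ∑ ℓ, k (z.1, z.2 ℓ) := lt_of_lt_of_le hc₁ hA.1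
    rw [Real.log_div hk0.ne' hA0.ne']
    ring
  rw [hsplit, integral_sub hI1 (hI2 0)]
  congr 1
  have hperm : ∀ j : Fin (n+1),
      ∫ z : X × (Fin (n+1) → M), (pX z.1 * ∏ ℓ, pM (z.2 ℓ)) *
          (k (z.1, z.2 j) * Real.log (((n:ℝ)+1)⁻¹ * ∑ ℓ, k (z.1, z.2 ℓ)))
          ∂(μ.prod (Measure.pi fun _ : Fin (n+1) => ν))
      = ∫ z : X × (Fin (n+1) → M), (pX z.1 * ∏ ℓ, pM (z.2 ℓ)) *
          (k (z.1, z.2 0) * Real.log (((n:ℝ)+1)⁻¹ * ∑ ℓ, k (z.1, z.2 ℓ)))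
          ∂(μ.prod (Measure.pi fun _ : Fin (n+1) => ν)) := by
    intro j
    have hpi := perm_integral μ ν (n+1) (Equiv.swap (0 : Fin (n+1)) j)
      (fun z : X × (Fin (n+1) → M) => (pX z.1 * ∏ ℓ, pM (z.2 ℓ)) *
        (k (z.1, z.2 0) * Real.log (((n:ℝ)+1)⁻¹ * ∑ ℓ, k (z.1, z.2 ℓ))))
    rw [← hpi]
    refine integral_congr_ae (ae_of_all _ fun z => ?_)
    show (pX z.1 * ∏ ℓ, pM (z.2 ℓ)) *
        (k (z.1, z.2 j) * Real.log (((n:ℝ)+1)⁻¹ * ∑ ℓ, k (z.1, z.2 ℓ)))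
      = (pX z.1 * ∏ ℓ, pM (z.2 ((Equiv.swap (0 : Fin (n+1)) j) ℓ))) *
        (k (z.1, z.2 ((Equiv.swap (0 : Fin (n+1)) j) 0)) *
          Real.log (((n:ℝ)+1)⁻¹ * ∑ ℓ, k (z.1, z.2 ((Equiv.swap (0 : Fin (n+1)) j) ℓ))))
    rw [Equiv.prod_comp (Equiv.swap (0 : Fin (n+1)) j) (fun ℓ => pM (z.2 ℓ)),
      Equiv.sum_comp (Equiv.swap (0 : Fin (n+1)) j) (fun ℓ => k (z.1, z.2 ℓ)),
      Equiv.swap_apply_left]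
  have hfact : (fun z : X × (Fin (n+1) → M) => (pX z.1 * ∏ ℓ, pM (z.2 ℓ)) *
        ((((n:ℝ)+1)⁻¹ * ∑ ℓ, k (z.1, z.2 ℓ)) *
          Real.log (((n:ℝ)+1)⁻¹ * ∑ ℓ, k (z.1, z.2 ℓ))))
      = fun z => ((n:ℝ)+1)⁻¹ * ∑ j : Fin (n+1), ((pX z.1 * ∏ ℓ, pM (z.2 ℓ)) *
          (k (z.1, z.2 j) * Real.log (((n:ℝ)+1)⁻¹ * ∑ ℓ, k (z.1, z.2 ℓ)))) := by
    funext z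
    rw [← Finset.mul_sum, ← Finset.sum_mul]
    ring
  rw [hfact, integral_const_mul, integral_finset_sum Finset.univ (fun j _ => hI2 j)]
  have hsum : ∑ j : Fin (n+1), ∫ z : X × (Fin (n+1) → M),
        (pX z.1 * ∏ ℓ, pM (z.2 ℓ)) *
          (k (z.1, z.2 j) * Real.log (((n:ℝ)+1)⁻¹ * ∑ ℓ, k (z.1, z.2 ℓ)))
        ∂(μ.prod (Measure.pi fun _ : Fin (n+1) => ν))
      = ((n:ℝ)+1) * ∫ z : X × (Fin (n+1) → M), (pX z.1 * ∏ ℓ, pM (z.2 ℓ)) *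
          (k (z.1, z.2 0) * Real.log (((n:ℝ)+1)⁻¹ * ∑ ℓ, k (z.1, z.2 ℓ)))
          ∂(μ.prod (Measure.pi fun _ : Fin (n+1) => ν)) := by
    rw [Finset.sum_congr rfl (fun j _ => hperm j), Finset.sum_const, Finset.card_univ,
      Fintype.card_fin, nsmul_eq_mul]
    push_cast; ring
  rw [hsum, ← mul_assoc, inv_mul_cancel₀ (by positivity : ((n:ℝ)+1) ≠ 0), one_mul]

lemma step_T (μ : Measure X) (ν : Measure M) [SigmaFinite μ] [SigmaFinite ν]
    (pX : X → ℝ) (pM : M → ℝ) (k : X × M → ℝ)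
    (hpM1 : ∫ a, pM a ∂ν = 1) (n : ℕ) :
    ∫ z : X × (Fin (n+1+1) → M), (pX z.1 * ∏ ℓ, pM (z.2 ℓ)) *
        (k (z.1, z.2 0) * Real.log (k (z.1, z.2 0)))
        ∂(μ.prod (Measure.pi fun _ : Fin (n+1+1) => ν))
    = ∫ z : X × (Fin (n+1) → M), (pX z.1 * ∏ ℓ, pM (z.2 ℓ)) *
        (k (z.1, z.2 0) * Real.log (k (z.1, z.2 0)))
        ∂(μ.prod (Measure.pi fun _ : Fin (n+1) => ν)) := by
  rw [← marg μ ν pM hpM1 (n+1) (fun ω : X × (Fin (n+1) → M) =>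
      (pX ω.1 * ∏ ℓ, pM (ω.2 ℓ)) * (k (ω.1, ω.2 0) * Real.log (k (ω.1, ω.2 0))))]
  refine integral_congr_ae (ae_of_all _ fun z => ?_)
  show (pX z.1 * ∏ ℓ, pM (z.2 ℓ)) * (k (z.1, z.2 0) * Real.log (k (z.1, z.2 0)))
    = pM (z.2 (Fin.last (n+1))) * ((pX z.1 * ∏ i : Fin (n+1), pM (z.2 i.castSucc)) *
        (k (z.1, z.2 ((0 : Fin (n+1)).castSucc)) *
          Real.log (k (z.1, z.2 ((0 : Fin (n+1)).castSucc)))))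
  rw [Fin.castSucc_zero', Fin.prod_univ_castSucc (f := fun ℓ : Fin (n+1+1) => pM (z.2 ℓ))]
  ring

lemma step_H (μ : Measure X) (ν : Measure M) [SigmaFinite μ] [SigmaFinite ν]
    (pX : X → ℝ) (pM : M → ℝ) (k : X × M → ℝ)
    (hkm : Measurable k)
    (hpX0 : ∀ x, 0 ≤ pX x) (hpM0 : ∀ a, 0 ≤ pM a)
    (hpXi : Integrable pX μ) (hpMi : Integrable pM ν)
    (hpX1 : ∫ x, pX x ∂μ = 1) (hpM1 : ∫ a, pM a ∂ν = 1)
    {c₁ c₂ : ℝ} (hc₁ : 0 < c₁)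
    (hkbd : ∀ᵐ z ∂(μ.prod ν), c₁ ≤ k z ∧ k z ≤ c₂) (n : ℕ) :
    ∫ z : X × (Fin (n+1+1) → M), (pX z.1 * ∏ ℓ, pM (z.2 ℓ)) *
        (((((n+1:ℕ):ℝ)+1)⁻¹ * ∑ ℓ, k (z.1, z.2 ℓ)) *
          Real.log ((((n+1:ℕ):ℝ)+1)⁻¹ * ∑ ℓ, k (z.1, z.2 ℓ)))
        ∂(μ.prod (Measure.pi fun _ : Fin (n+1+1) => ν))
    ≤ ∫ z : X × (Fin (n+1) → M), (pX z.1 * ∏ ℓ, pM (z.2 ℓ)) *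
        ((((n:ℝ)+1)⁻¹ * ∑ ℓ, k (z.1, z.2 ℓ)) *
          Real.log (((n:ℝ)+1)⁻¹ * ∑ ℓ, k (z.1, z.2 ℓ)))
        ∂(μ.prod (Measure.pi fun _ : Fin (n+1) => ν)) := by
  simp only [Nat.cast_add, Nat.cast_one]
  have hwint := (weight_int μ ν pX pM hpXi hpMi hpX1 hpM1 (n+1)).1
  have hw0 : ∀ z : X × (Fin (n+1+1) → M), 0 ≤ pX z.1 * ∏ ℓ, pM (z.2 ℓ) :=
    fun z => mul_nonneg (hpX0 _) (Finset.prod_nonneg fun _ _ => hpM0 _)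
  have hkℓ : ∀ ℓ : Fin (n+1+1), Measurable (fun z : X × (Fin (n+1+1) → M) => k (z.1, z.2 ℓ)) :=
    fun ℓ => hkm.comp (measurable_fst.prodMk ((measurable_pi_apply ℓ).comp measurable_snd))
  have hae : ∀ᵐ z ∂(μ.prod (Measure.pi fun _ : Fin (n+1+1) => ν)),
      ∀ ℓ, c₁ ≤ k (z.1, z.2 ℓ) ∧ k (z.1, z.2 ℓ) ≤ c₂ :=
    ae_all_iff.2 fun ℓ => ae_coord ℓ hkbd
  have hcard : (((Finset.univ : Finset (Fin (n+1+1))).card : ℕ) : ℝ) = (n:ℝ)+1+1 := by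
    rw [Finset.card_univ, Fintype.card_fin]; push_cast; ring
  have hcarde : ∀ j : Fin (n+1+1),
      ((((Finset.univ : Finset (Fin (n+1+1))).erase j).card : ℕ) : ℝ) = (n:ℝ)+1 := by
    intro j
    rw [Finset.card_erase_of_mem (Finset.mem_univ j), Finset.card_univ, Fintype.card_fin]
    push_cast [Nat.add_sub_cancel]; ring
  -- pointwise bounds for leave-one-out averages
  have hAerbd : ∀ (z : X × (Fin (n+1+1) → M)),
      (∀ ℓ, c₁ ≤ k (z.1, z.2 ℓ) ∧ k (z.1, z.2 ℓ) ≤ c₂) → ∀ j : Fin (n+1+1),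
      c₁ ≤ ((n:ℝ)+1)⁻¹ * ∑ ℓ ∈ Finset.univ.erase j, k (z.1, z.2 ℓ) ∧
        ((n:ℝ)+1)⁻¹ * ∑ ℓ ∈ Finset.univ.erase j, k (z.1, z.2 ℓ) ≤ c₂ := by
    intro z hz j
    have h := avg_mem (s := (Finset.univ : Finset (Fin (n+1+1))).erase j)
      (t := fun ℓ => k (z.1, z.2 ℓ)) (by rw [hcarde j]; positivity) (fun i _ => hz i)
    rwa [hcarde j] at h
  have hAbd : ∀ (z : X × (Fin (n+1+1) → M)),
      (∀ ℓ, c₁ ≤ k (z.1, z.2 ℓ) ∧ k (z.1, z.2 ℓ) ≤ c₂) →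
      c₁ ≤ ((n:ℝ)+1+1)⁻¹ * ∑ ℓ, k (z.1, z.2 ℓ) ∧
        ((n:ℝ)+1+1)⁻¹ * ∑ ℓ, k (z.1, z.2 ℓ) ≤ c₂ := by
    intro z hz
    have h := avg_mem (s := (Finset.univ : Finset (Fin (n+1+1))))
      (t := fun ℓ => k (z.1, z.2 ℓ)) (by rw [hcard]; positivity) (fun i _ => hz i)
    rwa [hcard] at h
  -- integrability of the (n+2)-sample integrand
  have hHint : Integrable (fun z : X × (Fin (n+1+1) → M) =>
      (pX z.1 * ∏ ℓ, pM (z.2 ℓ)) *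
        ((((n:ℝ)+1+1)⁻¹ * ∑ ℓ, k (z.1, z.2 ℓ)) *
          Real.log (((n:ℝ)+1+1)⁻¹ * ∑ ℓ, k (z.1, z.2 ℓ))))
      (μ.prod (Measure.pi fun _ : Fin (n+1+1) => ν)) := by
    refine mul_bdd_integrable hwint hw0 ?_
      (C := c₂ * max |Real.log c₁| |Real.log c₂|) ?_
    · exact ((measurable_const.mul (Finset.measurable_sum _ fun ℓ _ => hkℓ ℓ)).mul
        (Real.measurable_log.comp
          (measurable_const.mul (Finset.measurable_sum _ fun ℓ _ => hkℓ ℓ)))).aestronglyMeasurable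
    · filter_upwards [hae] with z hz
      have hA := hAbd z hz
      rw [abs_mul]
      refine mul_le_mul ?_ (abs_log_le hc₁ hA.1 hA.2) (abs_nonneg _)
        (le_trans hc₁.le (hA.1.trans hA.2))
      rw [abs_of_nonneg (le_trans hc₁.le hA.1)]; exact hA.2
  -- integrability of each leave-one-out integrand
  have hgint : ∀ j : Fin (n+1+1), Integrable (fun z : X × (Fin (n+1+1) → M) =>
      (pX z.1 * ∏ ℓ, pM (z.2 ℓ)) *
        ((((n:ℝ)+1)⁻¹ * ∑ ℓ ∈ Finset.univ.erase j, k (z.1, z.2 ℓ)) *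
          Real.log (((n:ℝ)+1)⁻¹ * ∑ ℓ ∈ Finset.univ.erase j, k (z.1, z.2 ℓ))))
      (μ.prod (Measure.pi fun _ : Fin (n+1+1) => ν)) := by
    intro j
    refine mul_bdd_integrable hwint hw0 ?_
      (C := c₂ * max |Real.log c₁| |Real.log c₂|) ?_
    · exact ((measurable_const.mul (Finset.measurable_sum _ fun ℓ _ => hkℓ ℓ)).mul
        (Real.measurable_log.comp
          (measurable_const.mul (Finset.measurable_sum _ fun ℓ _ => hkℓ ℓ)))).aestronglyMeasurable
    · filter_upwards [hae] with z hz
      have hA := hAerbd z hz j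
      rw [abs_mul]
      refine mul_le_mul ?_ (abs_log_le hc₁ hA.1 hA.2) (abs_nonneg _)
        (le_trans hc₁.le (hA.1.trans hA.2))
      rw [abs_of_nonneg (le_trans hc₁.le hA.1)]; exact hA.2
  -- Jensen, pointwise a.e.
  have hJen : ∀ᵐ z ∂(μ.prod (Measure.pi fun _ : Fin (n+1+1) => ν)),
      (pX z.1 * ∏ ℓ, pM (z.2 ℓ)) *
        ((((n:ℝ)+1+1)⁻¹ * ∑ ℓ, k (z.1, z.2 ℓ)) *
          Real.log (((n:ℝ)+1+1)⁻¹ * ∑ ℓ, k (z.1, z.2 ℓ)))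
      ≤ ((n:ℝ)+1+1)⁻¹ * ∑ j : Fin (n+1+1), ((pX z.1 * ∏ ℓ, pM (z.2 ℓ)) *
          ((((n:ℝ)+1)⁻¹ * ∑ ℓ ∈ Finset.univ.erase j, k (z.1, z.2 ℓ)) *
            Real.log (((n:ℝ)+1)⁻¹ * ∑ ℓ ∈ Finset.univ.erase j, k (z.1, z.2 ℓ)))) := by
    filter_upwards [hae] with z hz
    have hwsum : ∑ _j : Fin (n+1+1), ((n:ℝ)+1+1)⁻¹ = 1 := by
      rw [Finset.sum_const, Finset.card_univ, Fintype.card_fin, nsmul_eq_mul]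
      push_cast
      rw [mul_inv_cancel₀ (by positivity : ((n:ℝ)+1+1) ≠ 0)]
    have hsum : ∑ j : Fin (n+1+1), ∑ ℓ ∈ Finset.univ.erase j, k (z.1, z.2 ℓ)
        = ((n:ℝ)+1) * ∑ ℓ, k (z.1, z.2 ℓ) := by
      rw [Finset.sum_congr rfl
        (fun j _ => Finset.sum_erase_eq_sub (f := fun ℓ => k (z.1, z.2 ℓ)) (Finset.mem_univ j)),
        Finset.sum_sub_distrib, Finset.sum_const, Finset.card_univ, Fintype.card_fin,
        nsmul_eq_mul]
      push_cast; ring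
    have hids : ((n:ℝ)+1)⁻¹ * (((n:ℝ)+1) * ∑ ℓ, k (z.1, z.2 ℓ)) = ∑ ℓ, k (z.1, z.2 ℓ) := by
      rw [← mul_assoc, inv_mul_cancel₀ (by positivity : ((n:ℝ)+1) ≠ 0), one_mul]
    have hAeq : ((n:ℝ)+1+1)⁻¹ * ∑ ℓ, k (z.1, z.2 ℓ)
        = ∑ j : Fin (n+1+1), ((n:ℝ)+1+1)⁻¹ •
            (((n:ℝ)+1)⁻¹ * ∑ ℓ ∈ Finset.univ.erase j, k (z.1, z.2 ℓ)) := by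
      simp only [smul_eq_mul]
      rw [← Finset.mul_sum, ← Finset.mul_sum, hsum, hids]
    have hjen := (Real.convexOn_mul_log).map_sum_le
      (t := Finset.univ) (w := fun _ : Fin (n+1+1) => ((n:ℝ)+1+1)⁻¹)
      (p := fun j => ((n:ℝ)+1)⁻¹ * ∑ ℓ ∈ Finset.univ.erase j, k (z.1, z.2 ℓ))
      (fun i _ => by positivity) hwsum
      (fun j _ => Set.mem_Ici.2 (le_trans hc₁.le (hAerbd z hz j).1))
    rw [hAeq]
    calc (pX z.1 * ∏ ℓ, pM (z.2 ℓ)) *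
        ((∑ j : Fin (n+1+1), ((n:ℝ)+1+1)⁻¹ •
            (((n:ℝ)+1)⁻¹ * ∑ ℓ ∈ Finset.univ.erase j, k (z.1, z.2 ℓ))) *
          Real.log (∑ j : Fin (n+1+1), ((n:ℝ)+1+1)⁻¹ •
            (((n:ℝ)+1)⁻¹ * ∑ ℓ ∈ Finset.univ.erase j, k (z.1, z.2 ℓ))))
        ≤ (pX z.1 * ∏ ℓ, pM (z.2 ℓ)) *
          ∑ j : Fin (n+1+1), ((n:ℝ)+1+1)⁻¹ •
            ((((n:ℝ)+1)⁻¹ * ∑ ℓ ∈ Finset.univ.erase j, k (z.1, z.2 ℓ)) *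
              Real.log (((n:ℝ)+1)⁻¹ * ∑ ℓ ∈ Finset.univ.erase j, k (z.1, z.2 ℓ)))
          := mul_le_mul_of_nonneg_left hjen (hw0 z)
    _ = ((n:ℝ)+1+1)⁻¹ * ∑ j : Fin (n+1+1), ((pX z.1 * ∏ ℓ, pM (z.2 ℓ)) *
          ((((n:ℝ)+1)⁻¹ * ∑ ℓ ∈ Finset.univ.erase j, k (z.1, z.2 ℓ)) *
            Real.log (((n:ℝ)+1)⁻¹ * ∑ ℓ ∈ Finset.univ.erase j, k (z.1, z.2 ℓ)))) := by
        simp only [smul_eq_mul]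
        rw [Finset.mul_sum, Finset.mul_sum]
        exact Finset.sum_congr rfl fun j _ => by ring
  have hRHSint : Integrable (fun z : X × (Fin (n+1+1) → M) =>
      ((n:ℝ)+1+1)⁻¹ * ∑ j : Fin (n+1+1), ((pX z.1 * ∏ ℓ, pM (z.2 ℓ)) *
          ((((n:ℝ)+1)⁻¹ * ∑ ℓ ∈ Finset.univ.erase j, k (z.1, z.2 ℓ)) *
            Real.log (((n:ℝ)+1)⁻¹ * ∑ ℓ ∈ Finset.univ.erase j, k (z.1, z.2 ℓ)))))
      (μ.prod (Measure.pi fun _ : Fin (n+1+1) => ν)) :=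
    (integrable_finset_sum Finset.univ (fun j _ => hgint j)).const_mul _
  refine le_trans (integral_mono_ae hHint hRHSint hJen) ?_
  rw [integral_const_mul, integral_finset_sum Finset.univ (fun j _ => hgint j)]
  -- each leave-one-out integral equals the (n+1)-sample integral
  have hlast : ∫ z : X × (Fin (n+1+1) → M), (pX z.1 * ∏ ℓ, pM (z.2 ℓ)) *
        ((((n:ℝ)+1)⁻¹ * ∑ ℓ ∈ Finset.univ.erase (Fin.last (n+1)), k (z.1, z.2 ℓ)) *
          Real.log (((n:ℝ)+1)⁻¹ * ∑ ℓ ∈ Finset.univ.erase (Fin.last (n+1)), k (z.1, z.2 ℓ)))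
        ∂(μ.prod (Measure.pi fun _ : Fin (n+1+1) => ν))
      = ∫ z : X × (Fin (n+1) → M), (pX z.1 * ∏ ℓ, pM (z.2 ℓ)) *
          ((((n:ℝ)+1)⁻¹ * ∑ ℓ, k (z.1, z.2 ℓ)) *
            Real.log (((n:ℝ)+1)⁻¹ * ∑ ℓ, k (z.1, z.2 ℓ)))
          ∂(μ.prod (Measure.pi fun _ : Fin (n+1) => ν)) := by
    rw [← marg μ ν pM hpM1 (n+1) (fun ω : X × (Fin (n+1) → M) =>
        (pX ω.1 * ∏ ℓ, pM (ω.2 ℓ)) *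
          ((((n:ℝ)+1)⁻¹ * ∑ ℓ, k (ω.1, ω.2 ℓ)) *
            Real.log (((n:ℝ)+1)⁻¹ * ∑ ℓ, k (ω.1, ω.2 ℓ))))]
    refine integral_congr_ae (ae_of_all _ fun z => ?_)
    show (pX z.1 * ∏ ℓ, pM (z.2 ℓ)) *
        ((((n:ℝ)+1)⁻¹ * ∑ ℓ ∈ Finset.univ.erase (Fin.last (n+1)), k (z.1, z.2 ℓ)) *
          Real.log (((n:ℝ)+1)⁻¹ * ∑ ℓ ∈ Finset.univ.erase (Fin.last (n+1)), k (z.1, z.2 ℓ)))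
      = pM (z.2 (Fin.last (n+1))) * ((pX z.1 * ∏ i : Fin (n+1), pM (z.2 i.castSucc)) *
          ((((n:ℝ)+1)⁻¹ * ∑ i : Fin (n+1), k (z.1, z.2 i.castSucc)) *
            Real.log (((n:ℝ)+1)⁻¹ * ∑ i : Fin (n+1), k (z.1, z.2 i.castSucc))))
    have hs3 : ∑ ℓ ∈ Finset.univ.erase (Fin.last (n+1)), k (z.1, z.2 ℓ)
        = ∑ i : Fin (n+1), k (z.1, z.2 i.castSucc) := by
      rw [Finset.sum_erase_eq_sub (f := fun ℓ => k (z.1, z.2 ℓ)) (Finset.mem_univ _),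
        Fin.sum_univ_castSucc (f := fun ℓ : Fin (n+1+1) => k (z.1, z.2 ℓ))]
      ring
    rw [hs3, Fin.prod_univ_castSucc (f := fun ℓ : Fin (n+1+1) => pM (z.2 ℓ))]
    ring
  have hswap : ∀ j : Fin (n+1+1),
      ∫ z : X × (Fin (n+1+1) → M), (pX z.1 * ∏ ℓ, pM (z.2 ℓ)) *
          ((((n:ℝ)+1)⁻¹ * ∑ ℓ ∈ Finset.univ.erase j, k (z.1, z.2 ℓ)) *
            Real.log (((n:ℝ)+1)⁻¹ * ∑ ℓ ∈ Finset.univ.erase j, k (z.1, z.2 ℓ)))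
          ∂(μ.prod (Measure.pi fun _ : Fin (n+1+1) => ν))
      = ∫ z : X × (Fin (n+1) → M), (pX z.1 * ∏ ℓ, pM (z.2 ℓ)) *
          ((((n:ℝ)+1)⁻¹ * ∑ ℓ, k (z.1, z.2 ℓ)) *
            Real.log (((n:ℝ)+1)⁻¹ * ∑ ℓ, k (z.1, z.2 ℓ)))
          ∂(μ.prod (Measure.pi fun _ : Fin (n+1) => ν)) := by
    intro j
    rw [← hlast]
    have hpi := perm_integral μ ν (n+1+1) (Equiv.swap j (Fin.last (n+1)))
      (fun z : X × (Fin (n+1+1) → M) => (pX z.1 * ∏ ℓ, pM (z.2 ℓ)) *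
        ((((n:ℝ)+1)⁻¹ * ∑ ℓ ∈ Finset.univ.erase (Fin.last (n+1)), k (z.1, z.2 ℓ)) *
          Real.log (((n:ℝ)+1)⁻¹ * ∑ ℓ ∈ Finset.univ.erase (Fin.last (n+1)), k (z.1, z.2 ℓ))))
    rw [← hpi]
    refine integral_congr_ae (ae_of_all _ fun z => ?_)
    show (pX z.1 * ∏ ℓ, pM (z.2 ℓ)) *
        ((((n:ℝ)+1)⁻¹ * ∑ ℓ ∈ Finset.univ.erase j, k (z.1, z.2 ℓ)) *
          Real.log (((n:ℝ)+1)⁻¹ * ∑ ℓ ∈ Finset.univ.erase j, k (z.1, z.2 ℓ)))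
      = (pX z.1 * ∏ ℓ, pM (z.2 ((Equiv.swap j (Fin.last (n+1))) ℓ))) *
        ((((n:ℝ)+1)⁻¹ * ∑ ℓ ∈ Finset.univ.erase (Fin.last (n+1)),
            k (z.1, z.2 ((Equiv.swap j (Fin.last (n+1))) ℓ))) *
          Real.log (((n:ℝ)+1)⁻¹ * ∑ ℓ ∈ Finset.univ.erase (Fin.last (n+1)),
            k (z.1, z.2 ((Equiv.swap j (Fin.last (n+1))) ℓ))))
    have hsum2 : ∑ ℓ ∈ Finset.univ.erase (Fin.last (n+1)),
          k (z.1, z.2 ((Equiv.swap j (Fin.last (n+1))) ℓ))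
        = ∑ ℓ ∈ Finset.univ.erase j, k (z.1, z.2 ℓ) := by
      rw [Finset.sum_erase_eq_sub
          (f := fun ℓ => k (z.1, z.2 ((Equiv.swap j (Fin.last (n+1))) ℓ)))
          (Finset.mem_univ _),
        Finset.sum_erase_eq_sub (f := fun ℓ => k (z.1, z.2 ℓ)) (Finset.mem_univ j),
        Equiv.sum_comp (Equiv.swap j (Fin.last (n+1))) (fun ℓ => k (z.1, z.2 ℓ)),
        Equiv.swap_apply_right]
    rw [hsum2, Equiv.prod_comp (Equiv.swap j (Fin.last (n+1))) (fun ℓ => pM (z.2 ℓ))]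
  rw [Finset.sum_congr rfl (fun j _ => hswap j), Finset.sum_const, Finset.card_univ,
    Fintype.card_fin, nsmul_eq_mul]
  push_cast
  rw [← mul_assoc, inv_mul_cancel₀ (by positivity : ((n:ℝ)+1+1) ≠ 0), one_mul]

theorem core (μ : Measure X) (ν : Measure M) [SigmaFinite μ] [SigmaFinite ν]
    (pX : X → ℝ) (pM : M → ℝ) (k : X × M → ℝ)
    (hpMm : Measurable pM) (hkm : Measurable k)
    (hpX0 : ∀ x, 0 ≤ pX x) (hpM0 : ∀ a, 0 ≤ pM a)
    (hpXi : Integrable pX μ) (hpMi : Integrable pM ν)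
    (hpX1 : ∫ x, pX x ∂μ = 1) (hpM1 : ∫ a, pM a ∂ν = 1)
    {c₁ c₂ : ℝ} (hc₁ : 0 < c₁)
    (hkbd : ∀ᵐ z ∂(μ.prod ν), c₁ ≤ k z ∧ k z ≤ c₂) (m : ℕ) :
    ∫ z : X × (Fin (m+1) → M), (pX z.1 * ∏ ℓ, pM (z.2 ℓ)) *
        (k (z.1, z.2 0) * Real.log (k (z.1, z.2 0) / (((m:ℝ)+1)⁻¹ * ∑ ℓ, k (z.1, z.2 ℓ))))
        ∂(μ.prod (Measure.pi fun _ : Fin (m+1) => ν))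
    ≤ ∫ z : X × (Fin (m+1+1) → M), (pX z.1 * ∏ ℓ, pM (z.2 ℓ)) *
        (k (z.1, z.2 0) *
          Real.log (k (z.1, z.2 0) / ((((m+1:ℕ):ℝ)+1)⁻¹ * ∑ ℓ, k (z.1, z.2 ℓ))))
        ∂(μ.prod (Measure.pi fun _ : Fin (m+1+1) => ν)) := by
  rw [step_split μ ν pX pM k hpMm hkm hpX0 hpM0 hpXi hpMi hpX1 hpM1 hc₁ hkbd m,
    step_split μ ν pX pM k hpMm hkm hpX0 hpM0 hpXi hpMi hpX1 hpM1 hc₁ hkbd (m+1),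
    step_T μ ν pX pM k hpM1 m]
  exact sub_le_sub_left
    (step_H μ ν pX pM k hkm hpX0 hpM0 hpXi hpMi hpX1 hpM1 hc₁ hkbd m) _

end Stmt6Aux

/-- The InfoNCE objective at the optimal critic is nondecreasing in the number `L` of
contrastive samples, assuming the density ratio `k` is bounded away from `0` and `∞`. -/
theorem stmt6 {X M : Type*} [MeasurableSpace X] [MeasurableSpace M]
    (μ : Measure X) (ν : Measure M) [SigmaFinite μ] [SigmaFinite ν]
    (p : X × M → ℝ) (hp : Measurable p) (hp0 : ∀ z, 0 ≤ p z)
    (hp1 : ∫ z, p z ∂(μ.prod ν) = 1)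
    (pX : X → ℝ) (hpX : ∀ x, pX x = ∫ a, p (x, a) ∂ν)
    (pM : M → ℝ) (hpM : ∀ a, pM a = ∫ x, p (x, a) ∂μ)
    (hppos : ∀ᵐ z ∂(μ.prod ν), 0 < p z)
    (hpXpos : ∀ᵐ x ∂μ, 0 < pX x) (hpMpos : ∀ᵐ a ∂ν, 0 < pM a)
    (hpXfin : ∀ᵐ x ∂μ, Integrable (fun a => p (x, a)) ν)
    (hpMfin : ∀ᵐ a ∂ν, Integrable (fun x => p (x, a)) μ)
    (k : X × M → ℝ) (hk : ∀ z, k z = p z / (pX z.1 * pM z.2))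
    (c₁ c₂ : ℝ) (hc₁ : 0 < c₁) (hc₁₂ : c₁ ≤ c₂)
    (hkbd : ∀ᵐ z ∂(μ.prod ν), c₁ ≤ k z ∧ k z ≤ c₂)
    (ℒstar : ℕ → ℝ)
    (hℒstar : ∀ L : ℕ, ℒstar L = ∫ z : X × (Fin (L + 1) → M),
      p (z.1, z.2 0) * (∏ ℓ ∈ Finset.univ.erase (0 : Fin (L + 1)), pM (z.2 ℓ)) *
        Real.log (k (z.1, z.2 0) / ((1 / ((L : ℝ) + 1)) * ∑ ℓ, k (z.1, z.2 ℓ)))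
      ∂(μ.prod (Measure.pi fun _ : Fin (L + 1) => ν))) :
    ∀ L : ℕ, 1 ≤ L → ℒstar L ≤ ℒstar (L + 1) := by
  intro L _
  have hpInt : Integrable p (μ.prod ν) := by
    by_contra h
    rw [integral_undef h] at hp1
    exact one_ne_zero hp1.symm
  have hpXfun : pX = fun x => ∫ a, p (x, a) ∂ν := funext hpX
  have hpMfun : pM = fun a => ∫ x, p (x, a) ∂μ := funext hpM
  have hpXm : Measurable pX := by
    rw [hpXfun]; exact hp.stronglyMeasurable.integral_prod_right'.measurable
  have hpMm : Measurable pM := by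
    rw [hpMfun]; exact hp.stronglyMeasurable.integral_prod_left'.measurable
  have hkm : Measurable k := by
    have hkfun : k = fun z => p z / (pX z.1 * pM z.2) := funext hk
    rw [hkfun]
    exact hp.div ((hpXm.comp measurable_fst).mul (hpMm.comp measurable_snd))
  have hpX0 : ∀ x, 0 ≤ pX x := fun x => by
    rw [hpX x]; exact integral_nonneg fun a => hp0 _
  have hpM0 : ∀ a, 0 ≤ pM a := fun a => by
    rw [hpM a]; exact integral_nonneg fun x => hp0 _
  have hpXi : Integrable pX μ := by
    refine (hpInt.integral_norm_prod_left).congr (ae_of_all _ fun x => ?_)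
    rw [hpX x]
    exact integral_congr_ae (ae_of_all _ fun a => Real.norm_of_nonneg (hp0 _))
  have hpMi : Integrable pM ν := by
    refine (hpInt.integral_norm_prod_right).congr (ae_of_all _ fun a => ?_)
    rw [hpM a]
    exact integral_congr_ae (ae_of_all _ fun x => Real.norm_of_nonneg (hp0 _))
  have hpX1 : ∫ x, pX x ∂μ = 1 := by
    have h1 : ∫ x, pX x ∂μ = ∫ x, ∫ a, p (x, a) ∂ν ∂μ := by simp only [hpX]
    rw [h1, integral_integral (f := fun x a => p (x, a)) hpInt]
    exact hp1
  have hpM1 : ∫ a, pM a ∂ν = 1 := by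
    have h1 : ∫ a, pM a ∂ν = ∫ a, ∫ x, p (x, a) ∂μ ∂ν := by simp only [hpM]
    rw [h1, ← integral_integral_swap (f := fun x a => p (x, a)) hpInt,
      integral_integral (f := fun x a => p (x, a)) hpInt]
    exact hp1
  have key : ∀ n : ℕ,
      (∫ z : X × (Fin (n+1) → M),
          p (z.1, z.2 0) * (∏ ℓ ∈ Finset.univ.erase (0 : Fin (n+1)), pM (z.2 ℓ)) *
            Real.log (k (z.1, z.2 0) / ((1 / ((n : ℝ) + 1)) * ∑ ℓ, k (z.1, z.2 ℓ)))
          ∂(μ.prod (Measure.pi fun _ : Fin (n+1) => ν)))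
      = ∫ z : X × (Fin (n+1) → M), (pX z.1 * ∏ ℓ, pM (z.2 ℓ)) *
          (k (z.1, z.2 0) *
            Real.log (k (z.1, z.2 0) / (((n:ℝ)+1)⁻¹ * ∑ ℓ, k (z.1, z.2 ℓ))))
          ∂(μ.prod (Measure.pi fun _ : Fin (n+1) => ν)) := by
    intro n
    apply integral_congr_ae
    have h1 : ∀ᵐ z ∂(μ.prod ν), p z = k z * (pX z.1 * pM z.2) := by
      filter_upwards [Stmt6Aux.ae_fst hpXpos, Stmt6Aux.ae_snd hpMpos] with z h1 h2
      rw [hk, div_mul_cancel₀ _ (mul_pos h1 h2).ne']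
    filter_upwards [Stmt6Aux.ae_coord (0 : Fin (n+1)) h1] with z hz
    have hz' : p (z.1, z.2 0) = k (z.1, z.2 0) * (pX z.1 * pM (z.2 0)) := hz
    rw [one_div, hz',
      ← Finset.mul_prod_erase Finset.univ (fun ℓ => pM (z.2 ℓ))
        (Finset.mem_univ (0 : Fin (n+1)))]
    ring
  rw [hℒstar L, hℒstar (L+1), key L, key (L+1)]
  exact Stmt6Aux.core μ ν pX pM k hpMm hkm hpX0 hpM0 hpXi hpMi hpX1 hpM1 hc₁ hkbd L
end

section
/- Let (X, 𝒜, μ) and (M, ℬ, ν) be σ-finite measure spaces and let p : X × M → [0, ∞) be measurable with ∫∫ p d(μ ⊗ ν) = 1. Define the marginals p_X(x) = ∫ p(x, m) dν(m) and p_M(m) = ∫ p(x, m) dμ(x), assume p, p_X, p_M are positive and finite a.e., define the density ratio k(x, m) = p(x, m) / (p_X(x) p_M(m)) and the mutual information I(p) = ∫∫ p(x, m) log k(x, m) d(μ ⊗ ν). Assume there exist constants 0 < c₁ ≤ c₂ < ∞ with c₁ ≤ k(x, m) ≤ c₂ for (μ ⊗ ν)-a.e. (x, m). For each integer L ≥ 1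 define ℒ*(L) = ∫_{X × M^{L+1}} p(x, m₀) (∏_{ℓ=1}^{L} p_M(m_ℓ)) · log( k(x, m₀) / ((1/(L+1)) ∑_{ℓ=0}^{L} k(x, m_ℓ)) ) d(μ ⊗ ν^{⊗(L+1)}). Then ℒ*(L) → I(p) as L → ∞. -/
open MeasureTheory

section helpers

lemma piInt {Mt : Type*} [MeasurableSpace Mt] {n : ℕ} (ν : Measure Mt) [SigmaFinite ν]
    (g : Fin n → Mt → ℝ) (hg : ∀ i, Integrable (g i) ν) :
    Integrable (fun f : Fin n → Mt => ∏ i, g i (f i)) (Measure.pi fun _ => ν) ∧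
      ∫ f : Fin n → Mt, ∏ i, g i (f i) ∂(Measure.pi fun _ => ν) = ∏ i, ∫ m, g i m ∂ν := by
  letI : MeasureSpace Mt := ⟨ν⟩
  exact ⟨Integrable.fintype_prod hg, integral_fintype_prod_eq_prod g⟩

lemma prodsplit {Mt : Type*} {n : ℕ} (p0 pm φ ψ : Mt → ℝ) (i j : Fin (n+1)) (f : Fin (n+1) → Mt) :
    ∏ i', ((if i' = 0 then p0 (f i') else pm (f i')) * (if i' = i then φ (f i') else 1) *
        (if i' = j then ψ (f i') else 1))
      = (p0 (f 0) * ∏ ℓ ∈ Finset.univ.erase 0, pm (f ℓ)) * φ (f i) * ψ (f j) := by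
  rw [Finset.prod_mul_distrib, Finset.prod_mul_distrib, Finset.prod_ite_eq', Finset.prod_ite_eq']
  simp only [Finset.mem_univ, if_true]
  congr 2
  rw [← Finset.mul_prod_erase Finset.univ _ (Finset.mem_univ (0 : Fin (n+1)))]
  simp only [eq_self_iff_true, if_true]
  exact congrArg _ (Finset.prod_congr rfl fun i' hi' => by
    rw [if_neg (Finset.ne_of_mem_erase hi')])

lemma master {Mt : Type*} [MeasurableSpace Mt] {n : ℕ}
    (ν : Measure Mt) [SigmaFinite ν] (p0 pm φ ψ : Mt → ℝ) (i j : Fin (n+1))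
    (hint : ∀ i' : Fin (n+1), Integrable (fun m =>
      (if i' = 0 then p0 m else pm m) * (if i' = i then φ m else 1) *
        (if i' = j then ψ m else 1)) ν) :
    Integrable (fun f : Fin (n+1) → Mt =>
        (p0 (f 0) * ∏ ℓ ∈ Finset.univ.erase 0, pm (f ℓ)) * φ (f i) * ψ (f j))
      (Measure.pi fun _ => ν) ∧
    ∫ f : Fin (n+1) → Mt, (p0 (f 0) * ∏ ℓ ∈ Finset.univ.erase 0, pm (f ℓ)) * φ (f i) * ψ (f j)
        ∂(Measure.pi fun _ => ν)
      = ∏ i', ∫ m, (if i' = 0 then p0 m else pm m) * (if i' = i then φ m else 1) *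
          (if i' = j then ψ m else 1) ∂ν := by
  have h := piInt ν (fun i' m => (if i' = 0 then p0 m else pm m) * (if i' = i then φ m else 1) *
    (if i' = j then ψ m else 1)) hint
  refine ⟨h.1.congr (Filter.Eventually.of_forall fun f => prodsplit p0 pm φ ψ i j f), ?_⟩
  rw [← h.2]
  exact integral_congr_ae (Filter.Eventually.of_forall fun f => (prodsplit p0 pm φ ψ i j f).symm)

lemma prodone {n : ℕ} (v : Fin (n+1) → ℝ) (hother : ∀ i, i ≠ 0 → v i = 1) :
    ∏ i, v i = v 0 := by
  rw [← Finset.mul_prod_erase Finset.univ v (Finset.mem_univ 0),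
    Finset.prod_eq_one fun i hi => hother i (Finset.ne_of_mem_erase hi), mul_one]

lemma prodtwo {n : ℕ} (v : Fin (n+1) → ℝ) (ℓ : Fin (n+1)) (hℓ : ℓ ≠ 0)
    (hother : ∀ i, i ≠ 0 → i ≠ ℓ → v i = 1) : ∏ i, v i = v 0 * v ℓ := by
  rw [← Finset.mul_prod_erase Finset.univ v (Finset.mem_univ 0),
      ← Finset.mul_prod_erase _ v (Finset.mem_erase.mpr ⟨hℓ, Finset.mem_univ ℓ⟩),
      Finset.prod_eq_one fun i hi => hother i
        (Finset.ne_of_mem_erase (Finset.mem_of_mem_erase hi)) (Finset.ne_of_mem_erase hi),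
      mul_one]

lemma logLB {t c : ℝ} (hc : 0 < c) (hct : c ≤ t) :
    t - 1 - (t - 1) ^ 2 / c ≤ Real.log t ∧ Real.log t ≤ t - 1 := by
  have ht : 0 < t := lt_of_lt_of_le hc hct
  refine ⟨?_, Real.log_le_sub_one_of_pos ht⟩
  have h1 : 1 - t⁻¹ ≤ Real.log t := Real.one_sub_inv_le_log_of_pos ht
  have h2 : (t - 1) ^ 2 / t ≤ (t - 1) ^ 2 / c :=
    div_le_div_of_nonneg_left (sq_nonneg _) hc hct
  have h3 : t - 1 - (t - 1) ^ 2 / t = 1 - t⁻¹ := by field_simp; ring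
  linarith

lemma logabs {t c₁ c₂ : ℝ} (hc₁ : 0 < c₁) (h1 : c₁ ≤ t) (h2 : t ≤ c₂) :
    |Real.log t| ≤ max |Real.log c₁| |Real.log c₂| := by
  have l1 : Real.log c₁ ≤ Real.log t := Real.log_le_log hc₁ h1
  have l2 : Real.log t ≤ Real.log c₂ := Real.log_le_log (hc₁.trans_le h1) h2
  rw [abs_le]
  constructor
  · calc -(max |Real.log c₁| |Real.log c₂|) ≤ -|Real.log c₁| := by
          simp [neg_le_neg_iff, le_max_left]
      _ ≤ Real.log c₁ := neg_abs_le _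
      _ ≤ Real.log t := l1
  · calc Real.log t ≤ Real.log c₂ := l2
      _ ≤ |Real.log c₂| := le_abs_self _
      _ ≤ max |Real.log c₁| |Real.log c₂| := le_max_right _ _

lemma logratio {a s c₁ c₂ : ℝ} (hc₁ : 0 < c₁) (h1 : c₁ ≤ a) (h2 : a ≤ c₂) (h3 : c₁ ≤ s)
    (h4 : s ≤ c₂) : |Real.log (a / s)| ≤ Real.log c₂ - Real.log c₁ := by
  have ha : 0 < a := hc₁.trans_le h1
  have hs : 0 < s := hc₁.trans_le h3
  rw [Real.log_div ha.ne' hs.ne', abs_le]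
  have l1 : Real.log c₁ ≤ Real.log a := Real.log_le_log hc₁ h1
  have l2 : Real.log a ≤ Real.log c₂ := Real.log_le_log ha h2
  have l3 : Real.log c₁ ≤ Real.log s := Real.log_le_log hc₁ h3
  have l4 : Real.log s ≤ Real.log c₂ := Real.log_le_log hs h4
  constructor <;> linarith

lemma avgbd {n : ℕ} {c₁ c₂ : ℝ} (g : Fin (n+1) → ℝ) (h : ∀ ℓ, c₁ ≤ g ℓ ∧ g ℓ ≤ c₂) :
    c₁ ≤ (1/((n:ℝ)+1)) * ∑ ℓ, g ℓ ∧ (1/((n:ℝ)+1)) * ∑ ℓ, g ℓ ≤ c₂ := by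
  have hn : (0:ℝ) < (n:ℝ) + 1 := by positivity
  have hlb : ((n:ℝ)+1) * c₁ ≤ ∑ ℓ, g ℓ := by
    calc ((n:ℝ)+1) * c₁ = ∑ _ℓ : Fin (n+1), c₁ := by
          simp [Finset.sum_const, Finset.card_univ, mul_comm]
      _ ≤ ∑ ℓ, g ℓ := Finset.sum_le_sum fun ℓ _ => (h ℓ).1
  have hub : ∑ ℓ, g ℓ ≤ ((n:ℝ)+1) * c₂ := by
    calc ∑ ℓ, g ℓ ≤ ∑ _ℓ : Fin (n+1), c₂ := Finset.sum_le_sum fun ℓ _ => (h ℓ).2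
      _ = ((n:ℝ)+1) * c₂ := by
          simp [Finset.sum_const, Finset.card_univ, mul_comm]
  constructor
  · rw [one_div, inv_mul_eq_div, le_div_iff₀ hn]; linarith
  · rw [one_div, inv_mul_eq_div, div_le_iff₀ hn]; linarith


lemma master1 {Mt : Type*} [MeasurableSpace Mt] {n : ℕ}
    (ν : Measure Mt) [SigmaFinite ν] (p0 pm φ : Mt → ℝ) (i : Fin (n+1))
    (hint : ∀ i' : Fin (n+1), Integrable (fun m =>
      (if i' = 0 then p0 m else pm m) * (if i' = i then φ m else 1)) ν) :
    Integrable (fun f : Fin (n+1) → Mt =>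
        (p0 (f 0) * ∏ ℓ ∈ Finset.univ.erase 0, pm (f ℓ)) * φ (f i))
      (Measure.pi fun _ => ν) ∧
    ∫ f : Fin (n+1) → Mt, (p0 (f 0) * ∏ ℓ ∈ Finset.univ.erase 0, pm (f ℓ)) * φ (f i)
        ∂(Measure.pi fun _ => ν)
      = ∏ i', ∫ m, (if i' = 0 then p0 m else pm m) * (if i' = i then φ m else 1) ∂ν := by
  have h := master ν p0 pm φ (fun _ => 1) i i (fun i' => by
    have := hint i'
    refine this.congr (Filter.Eventually.of_forall fun m => ?_)
    by_cases hi : i' = i <;> simp [hi])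
  constructor
  · exact h.1.congr (Filter.Eventually.of_forall fun f => by simp)
  · calc ∫ f : Fin (n+1) → Mt, (p0 (f 0) * ∏ ℓ ∈ Finset.univ.erase 0, pm (f ℓ)) * φ (f i)
          ∂(Measure.pi fun _ => ν)
        = ∫ f : Fin (n+1) → Mt, (p0 (f 0) * ∏ ℓ ∈ Finset.univ.erase 0, pm (f ℓ)) * φ (f i) *
            (fun _ : Mt => (1:ℝ)) (f i) ∂(Measure.pi fun _ => ν) := by
          exact integral_congr_ae (Filter.Eventually.of_forall fun f => by simp)
      _ = ∏ i', ∫ m, (if i' = 0 then p0 m else pm m) * (if i' = i then φ m else 1) *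
            (if i' = i then (fun _ : Mt => (1:ℝ)) m else 1) ∂ν := h.2
      _ = ∏ i', ∫ m, (if i' = 0 then p0 m else pm m) * (if i' = i then φ m else 1) ∂ν := by
          refine Finset.prod_congr rfl fun i' _ => integral_congr_ae
            (Filter.Eventually.of_forall fun m => ?_)
          by_cases hi : i' = i <;> simp [hi]

end helpers

lemma perx {M : Type*} [MeasurableSpace M] (ν : Measure M) [SigmaFinite ν] (n : ℕ)
    (q pM kx : M → ℝ) (c₁ c₂ pXx : ℝ)
    (hq0 : ∀ m, 0 ≤ q m) (hpM0 : ∀ m, 0 ≤ pM m)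
    (hqm : Measurable q) (hpMm : Measurable pM) (hkxm : Measurable kx)
    (hqint : Integrable q ν) (hpMint : Integrable pM ν)
    (hpXx : ∫ m, q m ∂ν = pXx) (hpXpos : 0 < pXx) (hpM1 : ∫ m, pM m ∂ν = 1)
    (hc₁ : 0 < c₁) (hc₁₂ : c₁ ≤ c₂)
    (hbd : ∀ᵐ m ∂ν, c₁ ≤ kx m ∧ kx m ≤ c₂)
    (hratio : (fun m => pM m * kx m) =ᵐ[ν] fun m => q m / pXx) :
    Integrable (fun f : Fin (n+1) → M => (q (f 0) * ∏ ℓ ∈ Finset.univ.erase 0, pM (f ℓ)) *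
        Real.log (kx (f 0) / ((1/((n:ℝ)+1)) * ∑ ℓ, kx (f ℓ)))) (Measure.pi fun _ => ν) ∧
      (∫ f : Fin (n+1) → M, ‖(q (f 0) * ∏ ℓ ∈ Finset.univ.erase 0, pM (f ℓ)) *
        Real.log (kx (f 0) / ((1/((n:ℝ)+1)) * ∑ ℓ, kx (f ℓ)))‖ ∂(Measure.pi fun _ => ν))
        ≤ (Real.log c₂ - Real.log c₁) * pXx ∧
      |(∫ f : Fin (n+1) → M, (q (f 0) * ∏ ℓ ∈ Finset.univ.erase 0, pM (f ℓ)) *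
          Real.log (kx (f 0) / ((1/((n:ℝ)+1)) * ∑ ℓ, kx (f ℓ))) ∂(Measure.pi fun _ => ν))
        - ∫ m, q m * Real.log (kx m) ∂ν|
        ≤ ((c₂+1) + (c₂+1)^2/c₁) / ((n:ℝ)+1) * pXx := by
  classical
  have hc₂ : (0:ℝ) < c₂ := hc₁.trans_le hc₁₂
  set σ : Measure (Fin (n+1) → M) := (Measure.pi fun _ => ν) with hσdef
  set W : (Fin (n+1) → M) → ℝ := fun f => q (f 0) * ∏ ℓ ∈ Finset.univ.erase 0, pM (f ℓ)
    with hWdef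
  set S : (Fin (n+1) → M) → ℝ := fun f => (1/((n:ℝ)+1)) * ∑ ℓ, kx (f ℓ) with hSdef
  set D' : ℝ := max |Real.log c₁| |Real.log c₂| with hD'def
  -- pointwise ae bounds on ν
  have hblog : ∀ᵐ m ∂ν, |Real.log (kx m)| ≤ D' := by
    filter_upwards [hbd] with m hm; exact logabs hc₁ hm.1 hm.2
  have hb1 : ∀ᵐ m ∂ν, |kx m - 1| ≤ c₂ + 1 := by
    filter_upwards [hbd] with m hm
    rw [abs_le]; constructor <;> nlinarith [hm.1, hm.2]
  have hb2 : ∀ᵐ m ∂ν, |(kx m - 1) * (kx m - 1)| ≤ (c₂ + 1)^2 := by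
    filter_upwards [hb1] with m hm
    rw [abs_mul]
    calc |kx m - 1| * |kx m - 1| ≤ (c₂+1) * (c₂+1) := by
          have := abs_nonneg (kx m - 1); nlinarith
      _ = (c₂+1)^2 := by ring
  have hbk : ∀ᵐ m ∂ν, |kx m| ≤ c₂ := by
    filter_upwards [hbd] with m hm
    rw [abs_le]; constructor <;> nlinarith [hm.1, hm.2]
  -- domination helper
  have hdom : ∀ (w φ : M → ℝ) (Cφ : ℝ), Integrable w ν → Measurable w → Measurable φ →
      (∀ m, 0 ≤ w m) → (∀ᵐ m ∂ν, |φ m| ≤ Cφ) → Integrable (fun m => w m * φ m) ν := by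
    intro w φ Cφ hw hwm hφm hw0 hφb
    refine Integrable.mono' (hw.const_mul Cφ) (hwm.mul hφm).aestronglyMeasurable ?_
    filter_upwards [hφb] with m hm
    rw [Real.norm_eq_abs, abs_mul, abs_of_nonneg (hw0 m)]
    calc w m * |φ m| ≤ w m * Cφ := mul_le_mul_of_nonneg_left hm (hw0 m)
      _ = Cφ * w m := mul_comm _ _
  have hk1m : Measurable (fun m => kx m - 1) := hkxm.sub measurable_const
  have hk1sqm : Measurable (fun m => (kx m - 1) * (kx m - 1)) := hk1m.mul hk1m
  have hlogm : Measurable (fun m => Real.log (kx m)) := Real.measurable_log.comp hkxm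
  -- integrable atoms
  have iqlog : Integrable (fun m => q m * Real.log (kx m)) ν :=
    hdom q _ D' hqint hqm hlogm hq0 hblog
  have iqk1 : Integrable (fun m => q m * (kx m - 1)) ν :=
    hdom q _ (c₂+1) hqint hqm hk1m hq0 hb1
  have iqk1sq' : Integrable (fun m => q m * ((kx m - 1) * (kx m - 1))) ν :=
    hdom q _ ((c₂+1)^2) hqint hqm hk1sqm hq0 hb2
  have iqk1sq : Integrable (fun m => q m * (kx m - 1) * (kx m - 1)) ν :=
    iqk1sq'.congr (Filter.Eventually.of_forall fun m => by ring)
  have ipMlog : Integrable (fun m => pM m * Real.log (kx m)) ν :=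
    hdom pM _ D' hpMint hpMm hlogm hpM0 hblog
  have ipMk1 : Integrable (fun m => pM m * (kx m - 1)) ν :=
    hdom pM _ (c₂+1) hpMint hpMm hk1m hpM0 hb1
  have ipMk1sq' : Integrable (fun m => pM m * ((kx m - 1) * (kx m - 1))) ν :=
    hdom pM _ ((c₂+1)^2) hpMint hpMm hk1sqm hpM0 hb2
  have ipMk1sq : Integrable (fun m => pM m * (kx m - 1) * (kx m - 1)) ν :=
    ipMk1sq'.congr (Filter.Eventually.of_forall fun m => by ring)
  have ipMk : Integrable (fun m => pM m * kx m) ν :=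
    hdom pM _ c₂ hpMint hpMm hkxm hpM0 hbk
  -- values of atoms
  have vpMk : ∫ m, pM m * kx m ∂ν = 1 := by
    rw [integral_congr_ae hratio, integral_div, hpXx, div_self hpXpos.ne']
  have vpMk1 : ∫ m, pM m * (kx m - 1) ∂ν = 0 := by
    have h : (fun m => pM m * (kx m - 1)) = fun m => pM m * kx m - pM m :=
      funext fun m => by ring
    rw [h, integral_sub ipMk hpMint, vpMk, hpM1, sub_self]
  have hmono : ∀ (w φ : M → ℝ) (Cφ : ℝ), Integrable w ν → (∀ m, 0 ≤ w m) →
      Integrable (fun m => w m * φ m) ν → (∀ᵐ m ∂ν, |φ m| ≤ Cφ) →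
      |∫ m, w m * φ m ∂ν| ≤ Cφ * ∫ m, w m ∂ν := by
    intro w φ Cφ hw hw0 hwφ hφb
    rw [abs_le]
    constructor
    · have h1 : ∫ m, -(Cφ * w m) ∂ν ≤ ∫ m, w m * φ m ∂ν := by
        refine integral_mono_ae ((hw.const_mul Cφ).neg) hwφ ?_
        filter_upwards [hφb] with m hm
        have := mul_le_mul_of_nonneg_left (neg_le_of_abs_le hm) (hw0 m)
        nlinarith
      rw [integral_neg, integral_const_mul] at h1
      linarith
    · have h1 : ∫ m, w m * φ m ∂ν ≤ ∫ m, Cφ * w m ∂ν := by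
        refine integral_mono_ae hwφ (hw.const_mul Cφ) ?_
        filter_upwards [hφb] with m hm
        have := mul_le_mul_of_nonneg_left (le_of_abs_le hm) (hw0 m)
        nlinarith
      rw [integral_const_mul] at h1
      linarith
  set A2 : ℝ := ∫ m, q m * (kx m - 1) ∂ν with hA2def
  have hA2 : |A2| ≤ (c₂+1) * pXx := by
    rw [hA2def, ← hpXx]
    exact hmono q _ (c₂+1) hqint hq0 iqk1 hb1
  set A4 : ℝ := ∫ m, q m * ((kx m - 1) * (kx m - 1)) ∂ν with hA4def
  have hA4l : 0 ≤ A4 := integral_nonneg fun m => mul_nonneg (hq0 m) (mul_self_nonneg _)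
  have hA4u : A4 ≤ (c₂+1)^2 * pXx := by
    have h := hmono q _ ((c₂+1)^2) hqint hq0 iqk1sq' hb2
    rw [← hA4def, hpXx] at h
    exact (abs_le.mp h).2
  set A5 : ℝ := ∫ m, pM m * ((kx m - 1) * (kx m - 1)) ∂ν with hA5def
  have hA5l : 0 ≤ A5 := integral_nonneg fun m => mul_nonneg (hpM0 m) (mul_self_nonneg _)
  have hA5u : A5 ≤ (c₂+1)^2 := by
    have h := hmono pM _ ((c₂+1)^2) hpMint hpM0 ipMk1sq' hb2
    rw [← hA5def, hpM1, mul_one] at h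
    exact (abs_le.mp h).2
  -- σ-side facts
  have hn0 : ((n:ℝ)+1) ≠ 0 := by positivity
  have hgx : ∀ᵐ f ∂σ, ∀ ℓ, c₁ ≤ kx (f ℓ) ∧ kx (f ℓ) ≤ c₂ :=
    ae_all_iff.mpr fun ℓ =>
      (Measure.tendsto_eval_ae_ae (μ := fun _ : Fin (n+1) => ν) (i := ℓ)).eventually hbd
  have havg : ∀ᵐ f ∂σ, c₁ ≤ S f ∧ S f ≤ c₂ := hgx.mono fun f hf => avgbd _ hf
  have hW0 : ∀ f, 0 ≤ W f := fun f => mul_nonneg (hq0 _) (Finset.prod_nonneg fun ℓ _ => hpM0 _)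
  have hWm : Measurable W := (hqm.comp (measurable_pi_apply 0)).mul
    (Finset.measurable_prod _ fun ℓ _ => hpMm.comp (measurable_pi_apply ℓ))
  have hSm : Measurable S := measurable_const.mul
    (Finset.measurable_sum _ fun ℓ _ => hkxm.comp (measurable_pi_apply ℓ))
  -- integrability side conditions for master
  have hintb : ∀ (φ : M → ℝ), Integrable (fun m => q m * φ m) ν →
      Integrable (fun m => pM m * φ m) ν → ∀ (i : Fin (n+1)) (i' : Fin (n+1)),
      Integrable (fun m => (if i' = 0 then q m else pM m) * (if i' = i then φ m else 1)) ν := by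
    intro φ hqφ hpMφ i i'
    rcases em (i' = 0) with h0 | h0 <;> rcases em (i' = i) with hi | hi
    · simp only [if_pos h0, if_pos hi]; exact hqφ
    · simp only [if_pos h0, if_neg hi, mul_one]; exact hqint
    · simp only [if_neg h0, if_pos hi]; exact hpMφ
    · simp only [if_neg h0, if_neg hi, mul_one]; exact hpMint
  have hintb2 : ∀ (ℓ ℓ' i' : Fin (n+1)), Integrable (fun m =>
      (if i' = 0 then q m else pM m) * (if i' = ℓ then kx m - 1 else 1) *
        (if i' = ℓ' then kx m - 1 else 1)) ν := by
    intro ℓ ℓ' i'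
    rcases em (i' = 0) with h0 | h0 <;> rcases em (i' = ℓ) with h1 | h1 <;>
      rcases em (i' = ℓ') with h2 | h2
    · simp only [if_pos h0, if_pos h1, if_pos h2]; exact iqk1sq
    · simp only [if_pos h0, if_pos h1, if_neg h2, mul_one]; exact iqk1
    · simp only [if_pos h0, if_neg h1, if_pos h2, mul_one]; exact iqk1
    · simp only [if_pos h0, if_neg h1, if_neg h2, mul_one]; exact hqint
    · simp only [if_neg h0, if_pos h1, if_pos h2]; exact ipMk1sq
    · simp only [if_neg h0, if_pos h1, if_neg h2, mul_one]; exact ipMk1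
    · simp only [if_neg h0, if_neg h1, if_pos h2, mul_one]; exact ipMk1
    · simp only [if_neg h0, if_neg h1, if_neg h2, mul_one]; exact hpMint
  -- master instances
  have mW := master1 ν q pM (fun _ => (1:ℝ)) 0
    (hintb (fun _ => (1:ℝ)) (by simpa using hqint) (by simpa using hpMint) 0)
  have IntW : Integrable W σ :=
    mW.1.congr (Filter.Eventually.of_forall fun f => by simp [hWdef])
  have vW : ∫ f, W f ∂σ = pXx := by
    have h2 : ∫ f, W f ∂σ = ∫ f : Fin (n+1) → M,
        (q (f 0) * ∏ ℓ ∈ Finset.univ.erase 0, pM (f ℓ)) * (fun _ : M => (1:ℝ)) (f 0) ∂σ :=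
      integral_congr_ae (Filter.Eventually.of_forall fun f => by simp [hWdef])
    rw [h2]
    calc _ = ∏ i', ∫ m, (if i' = 0 then q m else pM m) *
          (if i' = (0 : Fin (n+1)) then (fun _ : M => (1:ℝ)) m else 1) ∂ν := mW.2
      _ = pXx := by
          rw [prodone _ (fun i hi => by simp only [if_neg hi, mul_one]; exact hpM1)]
          simpa using hpXx
  have mlog := master1 ν q pM (fun m => Real.log (kx m)) 0
    (hintb _ iqlog ipMlog 0)
  have vlog : ∫ f, W f * Real.log (kx (f 0)) ∂σ = ∫ m, q m * Real.log (kx m) ∂ν := by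
    calc ∫ f, W f * Real.log (kx (f 0)) ∂σ
        = ∏ i', ∫ m, (if i' = 0 then q m else pM m) *
          (if i' = (0 : Fin (n+1)) then Real.log (kx m) else 1) ∂ν := mlog.2
      _ = _ := by
          rw [prodone _ (fun i hi => by simp only [if_neg hi, mul_one]; exact hpM1)]
          simp
  have mL : ∀ ℓ : Fin (n+1), Integrable (fun f => W f * (kx (f ℓ) - 1)) σ ∧
      ∫ f, W f * (kx (f ℓ) - 1) ∂σ = (if ℓ = 0 then A2 else 0) := by
    intro ℓ
    have h := master1 ν q pM (fun m => kx m - 1) ℓ (hintb _ iqk1 ipMk1 ℓ)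
    refine ⟨h.1, ?_⟩
    rcases em (ℓ = 0) with hl | hl
    · subst hl
      rw [if_pos rfl]
      calc ∫ f, W f * (kx (f 0) - 1) ∂σ
          = ∏ i', ∫ m, (if i' = 0 then q m else pM m) *
            (if i' = (0 : Fin (n+1)) then kx m - 1 else 1) ∂ν := h.2
        _ = A2 := by
            rw [prodone _ (fun i hi => by simp only [if_neg hi, mul_one]; exact hpM1)]
            simpa using hA2def.symm
    · rw [if_neg hl]
      calc ∫ f, W f * (kx (f ℓ) - 1) ∂σ
          = ∏ i', ∫ m, (if i' = 0 then q m else pM m) *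
            (if i' = ℓ then kx m - 1 else 1) ∂ν := h.2
        _ = 0 := by
            refine Finset.prod_eq_zero (Finset.mem_univ ℓ) ?_
            simp only [if_neg hl, eq_self_iff_true, if_true]
            exact vpMk1
  have mQ : ∀ ℓ ℓ' : Fin (n+1), Integrable (fun f => W f * (kx (f ℓ) - 1) * (kx (f ℓ') - 1)) σ ∧
      ∫ f, W f * (kx (f ℓ) - 1) * (kx (f ℓ') - 1) ∂σ =
        (if ℓ = ℓ' then (if ℓ' = 0 then A4 else pXx * A5) else 0) := by
    intro ℓ ℓ'
    have h := master ν q pM (fun m => kx m - 1) (fun m => kx m - 1) ℓ ℓ' (hintb2 ℓ ℓ')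
    refine ⟨h.1, ?_⟩
    rcases em (ℓ = ℓ') with hll | hll
    · subst hll
      rw [if_pos rfl]
      rcases em (ℓ = 0) with hl0 | hl0
      · subst hl0
        rw [if_pos rfl]
        calc ∫ f, W f * (kx (f 0) - 1) * (kx (f 0) - 1) ∂σ
            = ∏ i', ∫ m, (if i' = 0 then q m else pM m) *
              (if i' = (0:Fin (n+1)) then kx m - 1 else 1) *
              (if i' = (0:Fin (n+1)) then kx m - 1 else 1) ∂ν := h.2
          _ = A4 := by
              rw [prodone _ (fun i hi => by simp only [if_neg hi, mul_one]; exact hpM1)]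
              simp only [eq_self_iff_true, if_true]
              rw [hA4def]
              exact integral_congr_ae (Filter.Eventually.of_forall fun m => by ring)
      · rw [if_neg hl0]
        calc ∫ f, W f * (kx (f ℓ) - 1) * (kx (f ℓ) - 1) ∂σ
            = ∏ i', ∫ m, (if i' = 0 then q m else pM m) *
              (if i' = ℓ then kx m - 1 else 1) *
              (if i' = ℓ then kx m - 1 else 1) ∂ν := h.2
          _ = pXx * A5 := by
              rw [prodtwo _ ℓ hl0 (fun i hi0 hiℓ => by
                simp only [if_neg hi0, if_neg hiℓ, mul_one]; exact hpM1)]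
              have h0 : ∫ m, (if (0:Fin (n+1)) = 0 then q m else pM m) *
                  (if (0:Fin (n+1)) = ℓ then kx m - 1 else 1) *
                  (if (0:Fin (n+1)) = ℓ then kx m - 1 else 1) ∂ν = pXx := by
                simp only [eq_self_iff_true, if_true,
                  if_neg (show ¬(0:Fin (n+1)) = ℓ from fun h => hl0 h.symm), mul_one]
                exact hpXx
              have hℓv : ∫ m, (if ℓ = 0 then q m else pM m) *
                  (if ℓ = ℓ then kx m - 1 else 1) *
                  (if ℓ = ℓ then kx m - 1 else 1) ∂ν = A5 := by
                simp only [if_neg hl0, eq_self_iff_true, if_true]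
                rw [hA5def]
                exact integral_congr_ae (Filter.Eventually.of_forall fun m => by ring)
              rw [h0, hℓv]
    · rw [if_neg hll]
      rcases em (ℓ' = 0) with h2 | h2
      · -- then ℓ ≠ 0
        have hl0 : ℓ ≠ 0 := fun h => hll (h.trans h2.symm)
        calc ∫ f, W f * (kx (f ℓ) - 1) * (kx (f ℓ') - 1) ∂σ
            = ∏ i', ∫ m, (if i' = 0 then q m else pM m) *
              (if i' = ℓ then kx m - 1 else 1) *
              (if i' = ℓ' then kx m - 1 else 1) ∂ν := h.2
          _ = 0 := by
              refine Finset.prod_eq_zero (Finset.mem_univ ℓ) ?_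
              simp only [if_neg hl0, eq_self_iff_true, if_true, if_neg hll, mul_one]
              exact vpMk1
      · calc ∫ f, W f * (kx (f ℓ) - 1) * (kx (f ℓ') - 1) ∂σ
            = ∏ i', ∫ m, (if i' = 0 then q m else pM m) *
              (if i' = ℓ then kx m - 1 else 1) *
              (if i' = ℓ' then kx m - 1 else 1) ∂ν := h.2
          _ = 0 := by
              refine Finset.prod_eq_zero (Finset.mem_univ ℓ') ?_
              have : ∫ m, pM m * 1 * (kx m - 1) ∂ν = 0 := by
                rw [show (fun m => pM m * 1 * (kx m - 1)) = fun m => pM m * (kx m - 1) from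
                  funext fun m => by ring]
                exact vpMk1
              simpa [if_neg h2, if_neg (fun h : ℓ' = ℓ => hll h.symm), eq_self_iff_true, if_true] using this
  -- linear and quadratic expansions
  have hS1 : ∀ f : Fin (n+1) → M, S f - 1 = (1/((n:ℝ)+1)) * ∑ ℓ, (kx (f ℓ) - 1) := by
    intro f
    have hs : ∑ ℓ, (kx (f ℓ) - 1) = (∑ ℓ, kx (f ℓ)) - ((n:ℝ)+1) := by
      rw [Finset.sum_sub_distrib]
      simp [Finset.card_univ]
    rw [hs, hSdef]
    field_simp
  have hLinterm : ∀ f, W f * (S f - 1) = (1/((n:ℝ)+1)) * ∑ ℓ, W f * (kx (f ℓ) - 1) := by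
    intro f
    rw [hS1 f, Finset.mul_sum, Finset.mul_sum]
    rw [Finset.mul_sum]
    exact Finset.sum_congr rfl fun ℓ _ => by ring
  have IntLin : Integrable (fun f => W f * (S f - 1)) σ :=
    (((integrable_finset_sum _ fun ℓ _ => (mL ℓ).1).const_mul _).congr
      (Filter.Eventually.of_forall fun f => (hLinterm f).symm))
  have vLin : ∫ f, W f * (S f - 1) ∂σ = (1/((n:ℝ)+1)) * A2 := by
    calc ∫ f, W f * (S f - 1) ∂σ
        = ∫ f, (1/((n:ℝ)+1)) * ∑ ℓ, W f * (kx (f ℓ) - 1) ∂σ :=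
          integral_congr_ae (Filter.Eventually.of_forall hLinterm)
      _ = (1/((n:ℝ)+1)) * ∑ ℓ, ∫ f, W f * (kx (f ℓ) - 1) ∂σ := by
          rw [integral_const_mul, integral_finset_sum _ fun ℓ _ => (mL ℓ).1]
      _ = (1/((n:ℝ)+1)) * A2 := by
          congr 1
          rw [Finset.sum_eq_single 0 (fun ℓ _ hℓ => by rw [(mL ℓ).2, if_neg hℓ])
            (fun h => absurd (Finset.mem_univ _) h), (mL 0).2, if_pos rfl]
  have hQterm : ∀ f, W f * ((S f - 1) * (S f - 1)) =
      (1/((n:ℝ)+1))^2 * ∑ ℓ, ∑ ℓ', W f * (kx (f ℓ) - 1) * (kx (f ℓ') - 1) := by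
    intro f
    calc W f * ((S f - 1) * (S f - 1))
        = (1/((n:ℝ)+1))^2 * (W f * ((∑ ℓ, (kx (f ℓ) - 1)) * (∑ ℓ', (kx (f ℓ') - 1)))) := by
          rw [hS1 f]; ring
      _ = (1/((n:ℝ)+1))^2 * ∑ ℓ, ∑ ℓ', W f * (kx (f ℓ) - 1) * (kx (f ℓ') - 1) := by
          rw [Finset.sum_mul_sum, Finset.mul_sum]
          exact congrArg _ (Finset.sum_congr rfl fun ℓ _ => by
            rw [Finset.mul_sum]
            exact Finset.sum_congr rfl fun ℓ' _ => by ring)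
  have IntQd : Integrable (fun f => W f * ((S f - 1) * (S f - 1))) σ :=
    ((integrable_finset_sum _ fun ℓ _ =>
        integrable_finset_sum _ fun ℓ' _ => (mQ ℓ ℓ').1).const_mul _).congr
      (Filter.Eventually.of_forall fun f => (hQterm f).symm)
  have hQ0 : 0 ≤ ∫ f, W f * ((S f - 1) * (S f - 1)) ∂σ :=
    integral_nonneg fun f => mul_nonneg (hW0 f) (mul_self_nonneg _)
  have hQu : ∫ f, W f * ((S f - 1) * (S f - 1)) ∂σ ≤ (1/((n:ℝ)+1)) * ((c₂+1)^2 * pXx) := by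
    have hv : ∫ f, W f * ((S f - 1) * (S f - 1)) ∂σ =
        (1/((n:ℝ)+1))^2 * ∑ ℓ : Fin (n+1), ∑ ℓ' : Fin (n+1),
          (if ℓ = ℓ' then (if ℓ' = 0 then A4 else pXx * A5) else 0) := by
      calc ∫ f, W f * ((S f - 1) * (S f - 1)) ∂σ
          = ∫ f, (1/((n:ℝ)+1))^2 * ∑ ℓ, ∑ ℓ', W f * (kx (f ℓ) - 1) * (kx (f ℓ') - 1) ∂σ :=
            integral_congr_ae (Filter.Eventually.of_forall hQterm)
        _ = (1/((n:ℝ)+1))^2 * ∑ ℓ, ∑ ℓ', ∫ f, W f * (kx (f ℓ) - 1) * (kx (f ℓ') - 1) ∂σ := by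
            rw [integral_const_mul,
              integral_finset_sum _ fun ℓ _ => integrable_finset_sum _ fun ℓ' _ => (mQ ℓ ℓ').1]
            congr 1
            exact Finset.sum_congr rfl fun ℓ _ =>
              integral_finset_sum _ fun ℓ' _ => (mQ ℓ ℓ').1
        _ = _ := by
            congr 1
            exact Finset.sum_congr rfl fun ℓ _ => Finset.sum_congr rfl fun ℓ' _ => (mQ ℓ ℓ').2
    rw [hv]
    have hsum : ∑ ℓ : Fin (n+1), ∑ ℓ' : Fin (n+1),
        (if ℓ = ℓ' then (if ℓ' = 0 then A4 else pXx * A5) else 0)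
        ≤ ((n:ℝ)+1) * ((c₂+1)^2 * pXx) := by
      calc ∑ ℓ : Fin (n+1), ∑ ℓ' : Fin (n+1),
            (if ℓ = ℓ' then (if ℓ' = 0 then A4 else pXx * A5) else 0)
          = ∑ ℓ : Fin (n+1), (if ℓ = 0 then A4 else pXx * A5) := by
            refine Finset.sum_congr rfl fun ℓ _ => ?_
            rw [Finset.sum_ite_eq]
            simp
        _ ≤ ∑ _ℓ : Fin (n+1), (c₂+1)^2 * pXx := by
            refine Finset.sum_le_sum fun ℓ _ => ?_
            rcases em (ℓ = 0) with h | h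
            · rw [if_pos h]; exact hA4u
            · rw [if_neg h]
              calc pXx * A5 ≤ pXx * (c₂+1)^2 :=
                    mul_le_mul_of_nonneg_left hA5u hpXpos.le
                _ = (c₂+1)^2 * pXx := mul_comm _ _
        _ = ((n:ℝ)+1) * ((c₂+1)^2 * pXx) := by
            simp [Finset.card_univ]
    calc (1/((n:ℝ)+1))^2 * ∑ ℓ : Fin (n+1), ∑ ℓ' : Fin (n+1),
          (if ℓ = ℓ' then (if ℓ' = 0 then A4 else pXx * A5) else 0)
        ≤ (1/((n:ℝ)+1))^2 * (((n:ℝ)+1) * ((c₂+1)^2 * pXx)) :=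
          mul_le_mul_of_nonneg_left hsum (by positivity)
      _ = (1/((n:ℝ)+1)) * ((c₂+1)^2 * pXx) := by field_simp
  -- J2 and its bounds
  have IntWlogS : Integrable (fun f => W f * Real.log (S f)) σ := by
    refine Integrable.mono' (IntW.const_mul D') (hWm.mul
      (Real.measurable_log.comp hSm)).aestronglyMeasurable ?_
    filter_upwards [havg] with f hf
    rw [Real.norm_eq_abs, abs_mul, abs_of_nonneg (hW0 f)]
    calc W f * |Real.log (S f)| ≤ W f * D' := by
          exact mul_le_mul_of_nonneg_left (logabs hc₁ hf.1 hf.2) (hW0 f)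
      _ = D' * W f := mul_comm _ _
  have hJ2ub : ∫ f, W f * Real.log (S f) ∂σ ≤ ∫ f, W f * (S f - 1) ∂σ := by
    refine integral_mono_ae IntWlogS IntLin ?_
    filter_upwards [havg] with f hf
    exact mul_le_mul_of_nonneg_left (logLB hc₁ hf.1).2 (hW0 f)
  have hJ2lb : (∫ f, W f * (S f - 1) ∂σ) - (1/c₁) * ∫ f, W f * ((S f - 1) * (S f - 1)) ∂σ
      ≤ ∫ f, W f * Real.log (S f) ∂σ := by
    have hdiff : Integrable (fun f => W f * (S f - 1) -
        (1/c₁) * (W f * ((S f - 1) * (S f - 1)))) σ := IntLin.sub (IntQd.const_mul (1/c₁))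
    have hae : ∀ᵐ f ∂σ, W f * (S f - 1) - (1/c₁) * (W f * ((S f - 1) * (S f - 1)))
        ≤ W f * Real.log (S f) := by
      filter_upwards [havg] with f hf
      have hl := (logLB hc₁ hf.1).1
      have hww := mul_le_mul_of_nonneg_left hl (hW0 f)
      have heq : W f * (S f - 1 - (S f - 1)^2/c₁) =
          W f * (S f - 1) - (1/c₁) * (W f * ((S f - 1) * (S f - 1))) := by ring
      linarith
    have h := integral_mono_ae hdiff IntWlogS hae
    rwa [integral_sub IntLin (IntQd.const_mul (1/c₁)), integral_const_mul] at h
  -- logarithm of quotient splitting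
  have hBIGptw : ∀ᵐ f ∂σ, (q (f 0) * ∏ ℓ ∈ Finset.univ.erase 0, pM (f ℓ)) *
      Real.log (kx (f 0) / ((1/((n:ℝ)+1)) * ∑ ℓ, kx (f ℓ)))
      = W f * Real.log (kx (f 0)) - W f * Real.log (S f) := by
    filter_upwards [hgx, havg] with f h1 h2
    have hk0 : kx (f 0) ≠ 0 := (hc₁.trans_le (h1 0).1).ne'
    have hS0 : S f ≠ 0 := (hc₁.trans_le h2.1).ne'
    rw [show (1/((n:ℝ)+1)) * ∑ ℓ, kx (f ℓ) = S f from rfl, Real.log_div hk0 hS0]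
    rw [hWdef]
    ring
  have IntBIG : Integrable (fun f : Fin (n+1) → M =>
      (q (f 0) * ∏ ℓ ∈ Finset.univ.erase 0, pM (f ℓ)) *
        Real.log (kx (f 0) / ((1/((n:ℝ)+1)) * ∑ ℓ, kx (f ℓ)))) σ := by
    refine Integrable.mono' (IntW.const_mul (Real.log c₂ - Real.log c₁))
      (hWm.mul (Real.measurable_log.comp ((hkxm.comp (measurable_pi_apply 0)).div
        hSm))).aestronglyMeasurable ?_
    filter_upwards [hgx, havg] with f h1 h2
    rw [Real.norm_eq_abs, abs_mul, abs_of_nonneg (hW0 f)]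
    calc W f * |Real.log (kx (f 0) / ((1/((n:ℝ)+1)) * ∑ ℓ, kx (f ℓ)))|
        ≤ W f * (Real.log c₂ - Real.log c₁) := by
          refine mul_le_mul_of_nonneg_left ?_ (hW0 f)
          exact logratio hc₁ (h1 0).1 (h1 0).2 h2.1 h2.2
      _ = (Real.log c₂ - Real.log c₁) * W f := mul_comm _ _
  refine ⟨IntBIG, ?_, ?_⟩
  · calc ∫ f : Fin (n+1) → M, ‖(q (f 0) * ∏ ℓ ∈ Finset.univ.erase 0, pM (f ℓ)) *
          Real.log (kx (f 0) / ((1/((n:ℝ)+1)) * ∑ ℓ, kx (f ℓ)))‖ ∂σ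
        ≤ ∫ f, (Real.log c₂ - Real.log c₁) * W f ∂σ := by
          refine integral_mono_ae IntBIG.norm (IntW.const_mul _) ?_
          filter_upwards [hgx, havg] with f h1 h2
          rw [Real.norm_eq_abs, abs_mul, abs_of_nonneg (hW0 f)]
          calc W f * |Real.log (kx (f 0) / ((1/((n:ℝ)+1)) * ∑ ℓ, kx (f ℓ)))|
              ≤ W f * (Real.log c₂ - Real.log c₁) :=
                mul_le_mul_of_nonneg_left (logratio hc₁ (h1 0).1 (h1 0).2 h2.1 h2.2) (hW0 f)
            _ = (Real.log c₂ - Real.log c₁) * W f := mul_comm _ _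
      _ = (Real.log c₂ - Real.log c₁) * pXx := by rw [integral_const_mul, vW]
  · -- the main estimate
    have hsplit : ∫ f : Fin (n+1) → M, (q (f 0) * ∏ ℓ ∈ Finset.univ.erase 0, pM (f ℓ)) *
        Real.log (kx (f 0) / ((1/((n:ℝ)+1)) * ∑ ℓ, kx (f ℓ))) ∂σ
        = (∫ m, q m * Real.log (kx m) ∂ν) - ∫ f, W f * Real.log (S f) ∂σ := by
      rw [integral_congr_ae hBIGptw, integral_sub mlog.1 IntWlogS, vlog]
    rw [hsplit]
    rw [sub_sub_cancel_left, abs_neg]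
    set J2 : ℝ := ∫ f, W f * Real.log (S f) ∂σ with hJ2def
    set Lin : ℝ := ∫ f, W f * (S f - 1) ∂σ with hLindef
    set Qd : ℝ := ∫ f, W f * ((S f - 1) * (S f - 1)) ∂σ with hQddef
    have h1 : |J2 - Lin| ≤ (1/c₁) * Qd := by
      rw [abs_le]
      constructor
      · linarith
      · have : (0:ℝ) ≤ (1/c₁) * Qd := mul_nonneg (by positivity) hQ0
        linarith
    have h2 : |Lin| ≤ (1/((n:ℝ)+1)) * ((c₂+1) * pXx) := by
      rw [vLin, abs_mul, abs_of_nonneg (show (0:ℝ) ≤ 1/((n:ℝ)+1) by positivity)]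
      exact mul_le_mul_of_nonneg_left hA2 (by positivity)
    have h3 : (1/c₁) * Qd ≤ (1/c₁) * ((1/((n:ℝ)+1)) * ((c₂+1)^2 * pXx)) :=
      mul_le_mul_of_nonneg_left hQu (by positivity)
    have harith : (1/((n:ℝ)+1)) * ((c₂+1) * pXx) + (1/c₁) * ((1/((n:ℝ)+1)) * ((c₂+1)^2 * pXx))
        = ((c₂+1) + (c₂+1)^2/c₁) / ((n:ℝ)+1) * pXx := by
      field_simp
    calc |J2| = |Lin + (J2 - Lin)| := by congr 1; ring
      _ ≤ |Lin| + |J2 - Lin| := abs_add_le _ _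
      _ ≤ (1/((n:ℝ)+1)) * ((c₂+1) * pXx) + (1/c₁) * ((1/((n:ℝ)+1)) * ((c₂+1)^2 * pXx)) := by
          linarith
      _ = ((c₂+1) + (c₂+1)^2/c₁) / ((n:ℝ)+1) * pXx := harith

/-- Tightness of the InfoNCE bound at the optimal critic: as the number of contrastive
samples `L → ∞`, the objective `ℒ*(L)` converges to the mutual information
`I(p) = ∫ p log k`, assuming the density ratio `k` is bounded away from `0` and `∞`. -/
theorem stmt7 {X M : Type*} [MeasurableSpace X] [MeasurableSpace M]
    (μ : Measure X) (ν : Measure M) [SigmaFinite μ] [SigmaFinite ν]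
    (p : X × M → ℝ) (hp : Measurable p) (hp0 : ∀ z, 0 ≤ p z)
    (hp1 : ∫ z, p z ∂(μ.prod ν) = 1)
    (pX : X → ℝ) (hpX : ∀ x, pX x = ∫ a, p (x, a) ∂ν)
    (pM : M → ℝ) (hpM : ∀ a, pM a = ∫ x, p (x, a) ∂μ)
    (hppos : ∀ᵐ z ∂(μ.prod ν), 0 < p z)
    (hpXpos : ∀ᵐ x ∂μ, 0 < pX x) (hpMpos : ∀ᵐ a ∂ν, 0 < pM a)
    (hpXfin : ∀ᵐ x ∂μ, Integrable (fun a => p (x, a)) ν)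
    (hpMfin : ∀ᵐ a ∂ν, Integrable (fun x => p (x, a)) μ)
    (k : X × M → ℝ) (hk : ∀ z, k z = p z / (pX z.1 * pM z.2))
    (c₁ c₂ : ℝ) (hc₁ : 0 < c₁) (hc₁₂ : c₁ ≤ c₂)
    (hkbd : ∀ᵐ z ∂(μ.prod ν), c₁ ≤ k z ∧ k z ≤ c₂)
    (ℒstar : ℕ → ℝ)
    (hℒstar : ∀ L : ℕ, ℒstar L = ∫ z : X × (Fin (L + 1) → M),
      p (z.1, z.2 0) * (∏ ℓ ∈ Finset.univ.erase (0 : Fin (L + 1)), pM (z.2 ℓ)) *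
        Real.log (k (z.1, z.2 0) / ((1 / ((L : ℝ) + 1)) * ∑ ℓ, k (z.1, z.2 ℓ)))
      ∂(μ.prod (Measure.pi fun _ : Fin (L + 1) => ν))) :
    Filter.Tendsto ℒstar Filter.atTop
      (nhds (∫ z, p z * Real.log (k z) ∂(μ.prod ν))) := by
  classical
  set I : ℝ := ∫ z, p z * Real.log (k z) ∂(μ.prod ν) with hIdef
  set Cq : ℝ := (c₂ + 1) + (c₂ + 1)^2 / c₁ with hCqdef
  have hc₂ : (0:ℝ) < c₂ := hc₁.trans_le hc₁₂
  -- global facts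
  have hpint : Integrable p (μ.prod ν) := by
    by_contra h
    rw [integral_undef h] at hp1
    norm_num at hp1
  have hqm : ∀ x, Measurable (fun m => p (x, m)) := fun x => hp.comp measurable_prodMk_left
  have hpXm : Measurable pX := by
    have h : pX = fun x => ∫ a, p (x, a) ∂ν := funext hpX
    rw [h]
    exact (hp.stronglyMeasurable.integral_prod_right').measurable
  have hpMm : Measurable pM := by
    have h : pM = fun a => ∫ x, p (x, a) ∂μ := funext hpM
    rw [h]
    exact (hp.stronglyMeasurable.integral_prod_left').measurable
  have hkm : Measurable k := by
    have h : k = fun z => p z / (pX z.1 * pM z.2) := funext hk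
    rw [h]
    exact hp.div ((hpXm.comp measurable_fst).mul (hpMm.comp measurable_snd))
  have hpM0 : ∀ a, 0 ≤ pM a := fun a => by rw [hpM]; exact integral_nonneg fun x => hp0 _
  have hpXint : Integrable pX μ :=
    (hpint.integral_prod_left).congr (Filter.Eventually.of_forall fun x => (hpX x).symm)
  have hpMint : Integrable pM ν :=
    (hpint.integral_prod_right).congr (Filter.Eventually.of_forall fun a => (hpM a).symm)
  have hpX1 : ∫ x, pX x ∂μ = 1 := by
    calc ∫ x, pX x ∂μ = ∫ x, ∫ a, p (x, a) ∂ν ∂μ :=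
          integral_congr_ae (Filter.Eventually.of_forall hpX)
      _ = 1 := by rw [← integral_prod p hpint]; exact hp1
  have hpM1 : ∫ a, pM a ∂ν = 1 := by
    calc ∫ a, pM a ∂ν = ∫ a, ∫ x, p (x, a) ∂μ ∂ν :=
          integral_congr_ae (Filter.Eventually.of_forall hpM)
      _ = 1 := by rw [← integral_prod_symm p hpint]; exact hp1
  have hIint : Integrable (fun z => p z * Real.log (k z)) (μ.prod ν) := by
    refine Integrable.mono' (hpint.const_mul (max |Real.log c₁| |Real.log c₂|))
      (hp.mul (Real.measurable_log.comp hkm)).aestronglyMeasurable ?_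
    filter_upwards [hkbd] with z hz
    rw [Real.norm_eq_abs, abs_mul, abs_of_nonneg (hp0 z)]
    calc p z * |Real.log (k z)| ≤ p z * max |Real.log c₁| |Real.log c₂| :=
          mul_le_mul_of_nonneg_left (logabs hc₁ hz.1 hz.2) (hp0 z)
      _ = max |Real.log c₁| |Real.log c₂| * p z := mul_comm _ _
  have hratioae : ∀ᵐ x ∂μ, (fun m => pM m * k (x, m)) =ᵐ[ν] fun m => p (x, m) / pX x := by
    filter_upwards [hpXpos] with x hx3
    filter_upwards [hpMpos] with m hm
    rw [hk (x, m)]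
    field_simp
  -- the key quantitative estimate
  have key : ∀ L : ℕ, |ℒstar L - I| ≤ Cq / ((L:ℝ) + 1) := by
    intro L
    set σ : Measure (Fin (L+1) → M) := Measure.pi fun _ => ν with hσdef
    set Φ : X × (Fin (L+1) → M) → ℝ := fun z =>
      p (z.1, z.2 0) * (∏ ℓ ∈ Finset.univ.erase (0 : Fin (L+1)), pM (z.2 ℓ)) *
        Real.log (k (z.1, z.2 0) / ((1 / ((L : ℝ) + 1)) * ∑ ℓ, k (z.1, z.2 ℓ))) with hΦdef
    have hΦm : Measurable Φ := by
      rw [hΦdef]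
      refine Measurable.mul (Measurable.mul ?_ ?_) ?_
      · exact hp.comp (measurable_fst.prodMk ((measurable_pi_apply 0).comp measurable_snd))
      · exact Finset.measurable_prod _ fun ℓ _ =>
          hpMm.comp ((measurable_pi_apply ℓ).comp measurable_snd)
      · refine Real.measurable_log.comp (Measurable.div ?_ ?_)
        · exact hkm.comp (measurable_fst.prodMk ((measurable_pi_apply 0).comp measurable_snd))
        · exact measurable_const.mul (Finset.measurable_sum _ fun ℓ _ =>
            hkm.comp (measurable_fst.prodMk ((measurable_pi_apply ℓ).comp measurable_snd)))
    -- per-x facts via perx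
    have hPX : ∀ᵐ x ∂μ,
        Integrable (fun f => Φ (x, f)) σ ∧
        (∫ f, ‖Φ (x, f)‖ ∂σ) ≤ (Real.log c₂ - Real.log c₁) * pX x ∧
        |(∫ f, Φ (x, f) ∂σ) - ∫ m, p (x, m) * Real.log (k (x, m)) ∂ν|
          ≤ Cq / ((L:ℝ) + 1) * pX x := by
      filter_upwards [hpXfin, hpXpos, Measure.ae_ae_of_ae_prod hkbd, hratioae]
        with x hx2 hx3 hx1 hx4
      have H := perx ν L (fun m => p (x, m)) pM (fun m => k (x, m)) c₁ c₂ (pX x)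
        (fun m => hp0 _) hpM0 (hqm x) hpMm (hkm.comp measurable_prodMk_left)
        hx2 hpMint (hpX x).symm hx3 hpM1 hc₁ hc₁₂ hx1 hx4
      exact ⟨H.1, H.2.1, H.2.2⟩
    have IntΦ : Integrable Φ (μ.prod σ) := by
      rw [integrable_prod_iff hΦm.aestronglyMeasurable]
      constructor
      · filter_upwards [hPX] with x hx using hx.1
      · refine Integrable.mono' (hpXint.const_mul (Real.log c₂ - Real.log c₁))
          (hΦm.aestronglyMeasurable.norm.integral_prod_right') ?_
        filter_upwards [hPX] with x hx
        rw [Real.norm_eq_abs, abs_of_nonneg (integral_nonneg fun f => norm_nonneg _)]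
        exact hx.2.1
    have hLs : ℒstar L = ∫ x, ∫ f, Φ (x, f) ∂σ ∂μ := by
      rw [hℒstar L]
      exact integral_prod Φ IntΦ
    have hIeq : I = ∫ x, ∫ m, p (x, m) * Real.log (k (x, m)) ∂ν ∂μ := by
      rw [hIdef]
      exact integral_prod _ hIint
    have IntJ : Integrable (fun x => ∫ f, Φ (x, f) ∂σ) μ := IntΦ.integral_prod_left
    have IntP : Integrable (fun x => ∫ m, p (x, m) * Real.log (k (x, m)) ∂ν) μ :=
      hIint.integral_prod_left
    rw [hLs, hIeq, ← integral_sub IntJ IntP]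
    calc |∫ x, ((∫ f, Φ (x, f) ∂σ) - ∫ m, p (x, m) * Real.log (k (x, m)) ∂ν) ∂μ|
        ≤ ∫ x, |(∫ f, Φ (x, f) ∂σ) - ∫ m, p (x, m) * Real.log (k (x, m)) ∂ν| ∂μ :=
          by
          have hn := norm_integral_le_integral_norm
            (fun x => (∫ f, Φ (x, f) ∂σ) - ∫ m, p (x, m) * Real.log (k (x, m)) ∂ν) (μ := μ)
          simpa [Real.norm_eq_abs] using hn
      _ ≤ ∫ x, Cq / ((L:ℝ) + 1) * pX x ∂μ := by
          refine integral_mono_ae (IntJ.sub IntP).abs (hpXint.const_mul _) ?_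
          filter_upwards [hPX] with x hx using hx.2.2
      _ = Cq / ((L:ℝ) + 1) := by rw [integral_const_mul, hpX1, mul_one]
  -- conclude by squeezing
  have hC : Filter.Tendsto (fun L : ℕ => Cq / ((L:ℝ) + 1)) Filter.atTop (nhds 0) := by
    have h3 : (fun L : ℕ => Cq / ((L:ℝ) + 1)) = fun L : ℕ => Cq * (1 / ((L:ℝ) + 1)) :=
      funext fun L => by ring
    rw [h3]
    simpa using tendsto_one_div_add_atTop_nhds_zero_nat.const_mul Cq
  have hsub : Filter.Tendsto (fun L => ℒstar L - I) Filter.atTop (nhds 0) :=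
    squeeze_zero_norm (fun L => by simpa [Real.norm_eq_abs] using key L) hC
  have hfin := hsub.add_const I
  simpa using hfin
end

section
/- Let (Ω, ℱ, P) be a probability space, let (M, ℬ, ν) be a measurable space with ν a probability measure, let (X, 𝒜) be a measurable space, let L ≥ 1 be an integer, let m₀, m₁, …, m_L : Ω → M be independent random variables each with law ν, and let x : Ω → X be a random variable independent of (m₀, …, m_L). Let U : X × M → ℝ be measurable. Then for every index j ∈ {0, 1, …, L}, E[ exp(U(x, m_j)) / ((1/(L+1)) ∑_{ℓ=0}^{L} exp(U(x, m_ℓ))) ] = 1. -/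
open MeasureTheory ProbabilityTheory

/-- Normalisation of the InfoNCE contrastive weight: if `m 0, …, m L` are i.i.d. with
law `ν` and `x` is independent of `(m 0, …, m L)`, then for every `j` the weight
`exp (U (x, m j)) / ((1/(L+1)) ∑ ℓ, exp (U (x, m ℓ)))` has expectation `1`. -/
theorem stmt9 {Ω : Type*} [MeasurableSpace Ω] (P : Measure Ω) [IsProbabilityMeasure P]
    {M : Type*} [MeasurableSpace M] (ν : Measure M) [IsProbabilityMeasure ν]
    {X : Type*} [MeasurableSpace X]
    (L : ℕ) (hL : 1 ≤ L) (m : Fin (L + 1) → Ω → M)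
    (hmeas : ∀ i, Measurable (m i))
    (hindep : iIndepFun m P)
    (hlaw : ∀ i, Measure.map (m i) P = ν)
    (x : Ω → X) (hx : Measurable x)
    (hxm : IndepFun x (fun ω (i : Fin (L + 1)) => m i ω) P)
    (U : X × M → ℝ) (hU : Measurable U)
    (j : Fin (L + 1)) :
    ∫ ω, Real.exp (U (x ω, m j ω)) /
        ((1 / ((L : ℝ) + 1)) * ∑ ℓ, Real.exp (U (x ω, m ℓ ω))) ∂P = 1 := by
  classical
  set v : Ω → (Fin (L + 1) → M) := fun ω i => m i ω with hv_def
  have hv : Measurable v := measurable_pi_lambda _ hmeas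
  -- law of the vector is the product measure
  have hvlaw : P.map v = Measure.pi (fun _ : Fin (L + 1) => ν) := by
    refine (Measure.pi_eq (μ := fun _ : Fin (L + 1) => ν) fun s hs => ?_).symm
    rw [Measure.map_apply hv (MeasurableSet.univ_pi hs)]
    have h1 : v ⁻¹' Set.pi Set.univ s = ⋂ i ∈ Finset.univ, m i ⁻¹' s i := by
      ext ω; simp [hv_def, Set.mem_pi]
    rw [h1, hindep.measure_inter_preimage_eq_mul Finset.univ (fun i _ => hs i)]
    refine Finset.prod_congr rfl fun i _ => ?_
    rw [← hlaw i, Measure.map_apply (hmeas i) (hs i)]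
  set μM : Measure (Fin (L + 1) → M) := Measure.pi (fun _ : Fin (L + 1) => ν) with hμM
  set μ : Measure (X × (Fin (L + 1) → M)) := (P.map x).prod μM with hμ
  have hxP : IsProbabilityMeasure (P.map x) := Measure.isProbabilityMeasure_map hx.aemeasurable
  have hμP : IsProbabilityMeasure μ := by rw [hμ]; infer_instance
  -- joint law
  have hjoint : P.map (fun ω => (x ω, v ω)) = μ := by
    rw [hμ, ← hvlaw]
    exact (indepFun_iff_map_prod_eq_prod_map_map hx.aemeasurable hv.aemeasurable).mp hxm
  -- the weight as a function on the product space
  set F : Fin (L + 1) → (X × (Fin (L + 1) → M)) → ℝ :=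
    fun i p => Real.exp (U (p.1, p.2 i)) / ∑ ℓ, Real.exp (U (p.1, p.2 ℓ)) with hF
  have hFmeas : ∀ i, Measurable (F i) := by
    intro i
    have h1 : ∀ k : Fin (L + 1),
        Measurable (fun p : X × (Fin (L + 1) → M) => Real.exp (U (p.1, p.2 k))) := fun k =>
      Real.measurable_exp.comp
        (hU.comp (measurable_fst.prodMk ((measurable_pi_apply k).comp measurable_snd)))
    exact (h1 i).div (Finset.measurable_sum _ fun k _ => h1 k)
  have hSpos : ∀ p : X × (Fin (L + 1) → M),
      0 < ∑ ℓ, Real.exp (U (p.1, p.2 ℓ)) := fun p =>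
    Finset.sum_pos (fun k _ => Real.exp_pos _) ⟨j, Finset.mem_univ j⟩
  have hFbd : ∀ i p, F i p ∈ Set.Icc (0 : ℝ) 1 := by
    intro i p
    constructor
    · exact div_nonneg (Real.exp_pos _).le (hSpos p).le
    · rw [div_le_one (hSpos p)]
      exact Finset.single_le_sum (f := fun k => Real.exp (U (p.1, p.2 k)))
          (fun k _ => (Real.exp_pos _).le) (Finset.mem_univ i)
  have hFint : ∀ i, Integrable (F i) μ := by
    intro i
    refine ⟨(hFmeas i).aestronglyMeasurable, HasFiniteIntegral.of_bounded (C := 1) ?_⟩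
    filter_upwards with p
    rw [Real.norm_eq_abs, abs_of_nonneg (hFbd i p).1]
    exact (hFbd i p).2
  have hFsum : ∀ p, ∑ i, F i p = 1 := by
    intro i
    simp only [hF, ← Finset.sum_div]
    exact div_self (hSpos _).ne'
  -- exchangeability: all ∫ F i dμ are equal
  have hFexch : ∀ k : Fin (L + 1), ∫ p, F k p ∂μ = ∫ p, F j p ∂μ := by
    intro k
    set σ : Fin (L + 1) ≃ Fin (L + 1) := Equiv.swap j k with hσ
    set T : (Fin (L + 1) → M) ≃ᵐ (Fin (L + 1) → M) :=
      MeasurableEquiv.piCongrLeft (fun _ => M) σ with hT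
    have hTpres : MeasurePreserving T μM μM :=
      measurePreserving_piCongrLeft (fun _ => ν) σ
    have hTapp : ∀ (w : Fin (L + 1) → M) (i : Fin (L + 1)), T w i = w (σ.symm i) := by
      intro w i
      conv_lhs => rw [show i = σ (σ.symm i) by simp]
      exact MeasurableEquiv.piCongrLeft_apply_apply (β := fun _ => M) σ w (σ.symm i)
    set e : (X × (Fin (L + 1) → M)) ≃ᵐ (X × (Fin (L + 1) → M)) :=
      (MeasurableEquiv.refl X).prodCongr T with he
    have hepres : MeasurePreserving e μ μ := by
      rw [hμ]
      exact (MeasurePreserving.id _).prod hTpres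
    have hcomp : ∀ p, F j (e p) = F k p := by
      intro p
      obtain ⟨a, w⟩ := p
      have hew : e (a, w) = (a, T w) := rfl
      rw [hew]
      simp only [hF]
      have hnum : T w j = w k := by rw [hTapp]; simp [hσ]
      have hden : ∑ ℓ, Real.exp (U (a, T w ℓ)) = ∑ ℓ, Real.exp (U (a, w ℓ)) := by
        simp only [hTapp]
        exact Fintype.sum_equiv σ.symm _ _ fun ℓ => rfl
      rw [hnum, hden]
    calc ∫ p, F k p ∂μ = ∫ p, F j (e p) ∂μ := by simp only [hcomp]
      _ = ∫ p, F j p ∂μ := hepres.integral_comp e.measurableEmbedding (F j)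
  -- hence each integral equals 1/(L+1)
  have hsum_int : ∑ k : Fin (L + 1), ∫ p, F k p ∂μ = 1 := by
    rw [← integral_finset_sum _ fun k _ => hFint k]
    simp only [hFsum]
    simp [hμP.measure_univ]
  have hint_j : ∫ p, F j p ∂μ = 1 / ((L : ℝ) + 1) := by
    have : ∑ k : Fin (L + 1), ∫ p, F j p ∂μ = 1 := by
      rw [← hsum_int]; exact Finset.sum_congr rfl fun k _ => (hFexch k).symm
    rw [Finset.sum_const, Finset.card_univ, Fintype.card_fin, nsmul_eq_mul] at this
    have hne : ((L : ℝ) + 1) ≠ 0 := by positivity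
    field_simp at this ⊢
    push_cast at this
    linarith
  -- transfer back to P and conclude
  have hpt : ∀ ω, Real.exp (U (x ω, m j ω)) /
      ((1 / ((L : ℝ) + 1)) * ∑ ℓ, Real.exp (U (x ω, m ℓ ω)))
      = ((L : ℝ) + 1) * F j (x ω, v ω) := by
    intro ω
    simp only [hF, hv_def, one_div, inv_mul_eq_div, div_div_eq_mul_div]
    ring
  calc ∫ ω, Real.exp (U (x ω, m j ω)) /
        ((1 / ((L : ℝ) + 1)) * ∑ ℓ, Real.exp (U (x ω, m ℓ ω))) ∂P
      = ∫ ω, ((L : ℝ) + 1) * F j (x ω, v ω) ∂P := by simp only [hpt]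
    _ = ((L : ℝ) + 1) * ∫ ω, F j (x ω, v ω) ∂P := integral_const_mul _ _
    _ = ((L : ℝ) + 1) * ∫ p, F j p ∂μ := by
        rw [← hjoint, integral_map (hx.prodMk hv).aemeasurable
          (hFmeas j).aestronglyMeasurable]
    _ = 1 := by
        rw [hint_j]
        field_simp
end
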